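/- arXiv:math/0506289 — 16 statements merged into one kernel-verified Lean document; each statement's English description precedes it below -/
import Mathlib

section
/- Let φ be a polynomial with complex coefficients of exact degree d ≥ 1, and let φ₁(z) = (φ*(0)·φ(z) − φ(0)·φ*(z))/z, where φ* denotes the conjugate polynomial of φ. Then φ is a Schur polynomial of exact degree d if and only if φ₁ is a Schur polynomial of exact degree d − 1 and |φ(0)| < |φ*(0)|. -/
open Polynomial

/-- The conjugate polynomial `φ*`: coefficients reversed and complex-conjugated. -/
noncomputable def conjPoly (p : Polynomial ℂ) : Polynomial ℂ :=
  (p.map (starRingEnd ℂ)).reverse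

/-- `φ₁(z) = (φ*(0)·φ(z) − φ(0)·φ*(z)) / z` (the numerator vanishes at `0`, so
dividing by `X` is exact and is given by `divX`). -/
noncomputable def phiStep (p : Polynomial ℂ) : Polynomial ℂ :=
  (Polynomial.C ((conjPoly p).eval 0) * p - Polynomial.C (p.eval 0) * conjPoly p).divX

/-- A Schur polynomial: all roots lie strictly inside the unit disk. -/
def IsSchur (p : Polynomial ℂ) : Prop :=
  ∀ z : ℂ, p.IsRoot z → ‖z‖ < 1

/-- A simple von Neumann polynomial: all roots lie in the closed unit disk and
every root on the unit circle is simple. -/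
def IsSimpleVonNeumann (p : Polynomial ℂ) : Prop :=
  ∀ z : ℂ, p.IsRoot z → ‖z‖ ≤ 1 ∧
    (‖z‖ = 1 → Polynomial.rootMultiplicity z p = 1)

lemma conjPoly_eval (p : Polynomial ℂ) {z : ℂ} (hz : z ≠ 0) :
    (conjPoly p).eval z
      = z ^ p.natDegree * (starRingEnd ℂ) (p.eval ((starRingEnd ℂ) z)⁻¹) := by
  have hzi : z⁻¹ ≠ 0 := inv_ne_zero hz
  haveI : Invertible (z⁻¹) := invertibleOfNonzero hzi
  have h := Polynomial.eval₂_reverse_mul_pow (RingHom.id ℂ) (z⁻¹) (p.map (starRingEnd ℂ))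
  have hinv : (⅟(z⁻¹) : ℂ) = z := by
    rw [invOf_eq_inv, inv_inv]
  rw [hinv] at h
  have h1 : (conjPoly p).eval z * (z⁻¹) ^ p.natDegree
      = (p.map (starRingEnd ℂ)).eval (z⁻¹) := by
    rw [Polynomial.natDegree_map] at h; exact h
  have h2 : (p.map (starRingEnd ℂ)).eval (z⁻¹)
      = (starRingEnd ℂ) (p.eval ((starRingEnd ℂ) z)⁻¹) := by
    have : z⁻¹ = (starRingEnd ℂ) (((starRingEnd ℂ) z)⁻¹) := by
      simp [map_inv₀]
    rw [Polynomial.eval_map, this, Polynomial.eval₂_hom]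
  rw [h2] at h1
  rw [← h1, mul_left_comm, ← mul_pow, mul_inv_cancel₀ hz, one_pow, mul_one]

lemma conjPoly_eval_zero' (p : Polynomial ℂ) :
    ((p.map (starRingEnd ℂ)).reverse).eval 0 = (starRingEnd ℂ) p.leadingCoeff := by
  have := Polynomial.coeff_zero_reverse (p.map (starRingEnd ℂ))
  rw [← Polynomial.coeff_zero_eq_eval_zero] at *
  rw [this, Polynomial.leadingCoeff_map]

lemma scalar_ineq {z r : ℂ} (hz : 1 ≤ ‖z‖) (hr : ‖r‖ < 1) :
    ‖z‖ * ‖((starRingEnd ℂ) z)⁻¹ - r‖ ≤ ‖z - r‖ := by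
  have hz0 : z ≠ 0 := by
    intro h; rw [h] at hz; simp at hz; linarith
  have hcz : (starRingEnd ℂ) z ≠ 0 := by simpa using hz0
  have e1 : ‖((starRingEnd ℂ) z)⁻¹ - r‖
      = ‖z⁻¹ - (starRingEnd ℂ) r‖ := by
    rw [← Complex.norm_conj (z⁻¹ - (starRingEnd ℂ) r)]
    simp [map_sub, map_inv₀]
  rw [e1, ← norm_mul]
  have e2 : z * (z⁻¹ - (starRingEnd ℂ) r) = 1 - (starRingEnd ℂ) r * z := by
    field_simp
  rw [e2]
  have h1 : Complex.normSq (1 - (starRingEnd ℂ) r * z) ≤ Complex.normSq (z - r) := by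
    have hz2 : 1 ≤ z.re ^ 2 + z.im ^ 2 := by
      have := Complex.normSq_apply z
      nlinarith [Complex.sq_norm z, Complex.normSq_apply z, norm_nonneg z]
    have hr2 : r.re ^ 2 + r.im ^ 2 < 1 := by
      nlinarith [Complex.sq_norm r, Complex.normSq_apply r, norm_nonneg r]
    simp [Complex.normSq_apply, Complex.sub_re, Complex.sub_im, Complex.mul_re,
      Complex.mul_im]
    nlinarith [hz2, hr2, sq_nonneg (z.re - r.re), sq_nonneg (z.im - r.im)]
  calc ‖1 - (starRingEnd ℂ) r * z‖
      = Real.sqrt (Complex.normSq (1 - (starRingEnd ℂ) r * z)) := Complex.norm_def ..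
    _ ≤ Real.sqrt (Complex.normSq (z - r)) := Real.sqrt_le_sqrt h1
    _ = ‖z - r‖ := (Complex.norm_def ..).symm

lemma prod_nonneg_le {s : Multiset ℂ} (f g : ℂ → ℝ)
    (h : ∀ x ∈ s, 0 ≤ f x ∧ f x ≤ g x) :
    0 ≤ (s.map f).prod ∧ (s.map f).prod ≤ (s.map g).prod := by
  induction s using Multiset.induction_on with
  | empty => simp
  | cons a t ih =>
    have ha := h a (Multiset.mem_cons_self a t)
    have ih' := ih (fun x hx => h x (Multiset.mem_cons_of_mem hx))
    simp only [Multiset.map_cons, Multiset.prod_cons]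
    constructor
    · exact mul_nonneg ha.1 ih'.1
    · exact mul_le_mul ha.2 ih'.2 ih'.1 (le_trans ha.1 ha.2)

lemma prod_mem_Icc {s : Multiset ℝ} (h : ∀ x ∈ s, 0 ≤ x ∧ x ≤ 1) :
    0 ≤ s.prod ∧ s.prod ≤ 1 := by
  induction s using Multiset.induction_on with
  | empty => simp
  | cons a t ih =>
    have ha := h a (Multiset.mem_cons_self a t)
    have ih' := ih (fun x hx => h x (Multiset.mem_cons_of_mem hx))
    simp only [Multiset.prod_cons]
    exact ⟨mul_nonneg ha.1 ih'.1,
      le_trans (mul_le_mul ha.2 ih'.2 ih'.1 zero_le_one) (by simp)⟩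

lemma abs_eval_eq (p : Polynomial ℂ) (x : ℂ) :
    ‖p.eval x‖
      = ‖p.leadingCoeff‖
        * (p.roots.map fun r => ‖x - r‖).prod := by
  have hsplit : Splits p := IsAlgClosed.splits p
  conv_lhs => rw [hsplit.eq_prod_roots]
  rw [eval_mul, eval_C, eval_multiset_prod, Multiset.map_map, norm_mul,
    ← normHom_apply (Multiset.map _ _).prod, map_multiset_prod, Multiset.map_map]
  simp

lemma schur_conjPoly_le {p : Polynomial ℂ} (hp : IsSchur p) {z : ℂ}
    (hz : 1 ≤ ‖z‖) :
    ‖(conjPoly p).eval z‖ ≤ ‖p.eval z‖ := by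
  by_cases hp0 : p = 0
  · simp [hp0, conjPoly]
  have hz0 : z ≠ 0 := by
    intro h; rw [h] at hz; simp at hz; linarith
  have hsplit : Splits p := IsAlgClosed.splits p
  have hcard : Multiset.card p.roots = p.natDegree := splits_iff_card_roots.mp hsplit
  have hroot : ∀ r ∈ p.roots, ‖r‖ < 1 := fun r hr =>
    hp r (isRoot_of_mem_roots hr)
  set u : ℂ := ((starRingEnd ℂ) z)⁻¹ with hu
  have h1 : ‖(conjPoly p).eval z‖
      = (‖z‖) ^ p.natDegree * ‖p.eval u‖ := by
    rw [conjPoly_eval p hz0, norm_mul, norm_pow, Complex.norm_conj]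
  rw [h1, abs_eval_eq p u, abs_eval_eq p z, ← hcard]
  have h2 : (‖z‖) ^ (Multiset.card p.roots)
        * (‖p.leadingCoeff‖ * (p.roots.map fun r => ‖u - r‖).prod)
      = ‖p.leadingCoeff‖
        * (p.roots.map fun r => ‖z‖ * ‖u - r‖).prod := by
    rw [Multiset.prod_map_mul]
    simp [Multiset.map_const', Multiset.prod_replicate]
    ring
  rw [h2]
  have h3 := prod_nonneg_le (s := p.roots)
    (fun r => ‖z‖ * ‖u - r‖) (fun r => ‖z - r‖)
    (fun r hr => ⟨mul_nonneg (norm_nonneg z) (norm_nonneg _),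
      scalar_ineq hz (hroot r hr)⟩)
  exact mul_le_mul_of_nonneg_left h3.2 (norm_nonneg _)

lemma abs_eval_zero_lt {p : Polynomial ℂ} (hp : IsSchur p) (hn : 1 ≤ p.natDegree) :
    ‖p.eval 0‖ < ‖p.leadingCoeff‖ := by
  have hp0 : p ≠ 0 := fun h => by simp [h] at hn
  have hsplit : Splits p := IsAlgClosed.splits p
  have hcard : Multiset.card p.roots = p.natDegree := splits_iff_card_roots.mp hsplit
  have hroot : ∀ r ∈ p.roots, ‖r‖ < 1 := fun r hr =>
    hp r (isRoot_of_mem_roots hr)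
  rw [abs_eval_eq p 0]
  have hc : 0 < ‖p.leadingCoeff‖ := by
    simpa using norm_pos_iff.mpr (leadingCoeff_ne_zero.mpr hp0)
  have hmem : ∃ a, a ∈ p.roots := by
    rw [← Multiset.card_pos_iff_exists_mem, hcard]; omega
  obtain ⟨a, ha⟩ := hmem
  obtain ⟨t, hst⟩ := Multiset.exists_cons_of_mem ha
  rw [hst] at hroot ⊢
  have hprod : ((a ::ₘ t).map fun r => ‖0 - r‖).prod < 1 := by
    rw [Multiset.map_cons, Multiset.prod_cons]
    have ht := prod_mem_Icc (s := t.map fun r => ‖0 - r‖)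
      (by
        intro x hx
        obtain ⟨r, hr, rfl⟩ := Multiset.mem_map.mp hx
        refine ⟨norm_nonneg _, ?_⟩
        have := hroot r (Multiset.mem_cons_of_mem hr)
        simpa using this.le)
    have ha1 : ‖0 - a‖ < 1 := by
      simpa using hroot a (Multiset.mem_cons_self a t)
    calc ‖0 - a‖ * (t.map fun r => ‖0 - r‖).prod
        ≤ ‖0 - a‖ * 1 :=
          mul_le_mul_of_nonneg_left ht.2 (norm_nonneg _)
      _ < 1 := by simpa using ha1
  calc ‖p.leadingCoeff‖ * ((a ::ₘ t).map fun r => ‖0 - r‖).prod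
      < ‖p.leadingCoeff‖ * 1 := by
        exact mul_lt_mul_of_pos_left hprod hc
    _ = ‖p.leadingCoeff‖ := mul_one _

/-- Theorem 1 (Schur step): `φ` of exact degree `d ≥ 1` is a Schur polynomial iff
`φ₁` is a Schur polynomial of exact degree `d − 1` and `|φ(0)| < |φ*(0)|`. -/
theorem schur_step (φ : Polynomial ℂ) (d : ℕ) (hd : 1 ≤ d) (hdeg : φ.degree = d) :
    IsSchur φ ↔
      (IsSchur (phiStep φ) ∧ (phiStep φ).degree = (d - 1 : ℕ) ∧
        ‖φ.eval 0‖ < ‖(conjPoly φ).eval 0‖) := by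
  have hn : φ.natDegree = d := natDegree_eq_of_degree_eq_some hdeg
  have hφ0 : φ ≠ 0 := fun h => by simp [h] at hdeg
  have hc0 : φ.leadingCoeff ≠ 0 := leadingCoeff_ne_zero.mpr hφ0
  set a : ℂ := (conjPoly φ).eval 0 with ha'
  set b : ℂ := φ.eval 0 with hb'
  have ha : a = (starRingEnd ℂ) φ.leadingCoeff := conjPoly_eval_zero' φ
  have haabs : ‖a‖ = ‖φ.leadingCoeff‖ := by
    rw [ha, Complex.norm_conj]
  set ψ : Polynomial ℂ := C a * φ - C b * conjPoly φ with hψ'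
  have hps : phiStep φ = ψ.divX := rfl
  have hψ00 : ψ.coeff 0 = 0 := by
    rw [coeff_zero_eq_eval_zero]
    simp only [hψ', eval_sub, eval_mul, eval_C]
    rw [← ha', ← hb']
    ring
  have hXψ : X * phiStep φ = ψ := by
    have := X_mul_divX_add ψ
    rw [hψ00] at this
    simpa [hps] using this
  have hevalrel : ∀ w : ℂ, w * (phiStep φ).eval w
      = a * φ.eval w - b * (conjPoly φ).eval w := by
    intro w
    have := congrArg (Polynomial.eval w) hXψ
    simpa [hψ'] using this
  constructor
  · intro h
    have hb : ‖b‖ < ‖a‖ := by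
      rw [haabs]; exact abs_eval_zero_lt h (by omega)
    have hschur1 : IsSchur (phiStep φ) := by
      intro w hw
      by_contra hge
      push_neg at hge
      have hφw : φ.eval w ≠ 0 := fun h0 => absurd (h w h0) (not_lt.mpr hge)
      have he := hevalrel w
      rw [hw, mul_zero] at he
      have habs : ‖a‖ * ‖φ.eval w‖
          = ‖b‖ * ‖(conjPoly φ).eval w‖ := by
        rw [← norm_mul, ← norm_mul]
        congr 1
        linear_combination -he
      have hkey := schur_conjPoly_le h hge
      have h1 : ‖b‖ * ‖(conjPoly φ).eval w‖
          ≤ ‖b‖ * ‖φ.eval w‖ :=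
        mul_le_mul_of_nonneg_left hkey (norm_nonneg _)
      have h2 : 0 < ‖φ.eval w‖ := norm_pos_iff.mpr hφw
      nlinarith [habs, h1, h2, hb]
    refine ⟨hschur1, ?_, hb⟩
    -- degree
    have hcd : ψ.coeff d ≠ 0 := by
      have h1 : φ.coeff d = φ.leadingCoeff := by rw [← hn]; rfl
      have h2 : (conjPoly φ).coeff d = (starRingEnd ℂ) b := by
        have hmapdeg : (φ.map (starRingEnd ℂ)).natDegree = d := by
          rw [natDegree_map, hn]
        rw [conjPoly, coeff_reverse, hmapdeg, revAt_le (le_refl d), Nat.sub_self,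
          coeff_map, coeff_zero_eq_eval_zero]
      have : ψ.coeff d = a * φ.leadingCoeff - b * (starRingEnd ℂ) b := by
        simp [hψ', coeff_sub, coeff_C_mul, h1, h2]
      rw [this, ha]
      have hlt : Complex.normSq b < Complex.normSq φ.leadingCoeff := by
        rw [← Complex.sq_norm, ← Complex.sq_norm]
        have := norm_nonneg b
        rw [haabs] at hb
        nlinarith
      rw [mul_comm, Complex.mul_conj, Complex.mul_conj]
      intro hcontra
      rw [sub_eq_zero] at hcontra
      exact absurd (Complex.ofReal_inj.mp hcontra) (ne_of_gt hlt)
    have hle : ψ.natDegree ≤ d := by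
      refine le_trans (natDegree_sub_le _ _) (max_le ?_ ?_)
      · exact le_trans (natDegree_C_mul_le _ _) (le_of_eq hn)
      · refine le_trans (natDegree_C_mul_le _ _) ?_
        refine le_trans (reverse_natDegree_le _) ?_
        rw [natDegree_map, hn]
    have hψd : ψ.natDegree = d := le_antisymm hle (le_natDegree_of_ne_zero hcd)
    have hpsn : (phiStep φ).natDegree = d - 1 := by
      rw [hps, natDegree_divX_eq_natDegree_tsub_one, hψd]
    have hps0 : phiStep φ ≠ 0 := by
      rw [hps, Ne, divX_eq_zero_iff]
      intro hcontra
      have : ψ = 0 := by rw [hcontra, hψ00, map_zero]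
      have : ψ.coeff d = 0 := by rw [this]; simp
      exact hcd this
    rw [degree_eq_natDegree hps0, hpsn]
  · rintro ⟨h1, h2, hb⟩
    have hps0 : phiStep φ ≠ 0 := fun h => by simp [h] at h2
    have hpsn : (phiStep φ).natDegree = d - 1 := natDegree_eq_of_degree_eq_some h2
    intro w hw
    by_contra hge
    push_neg at hge
    have hw0 : w ≠ 0 := by
      intro h; rw [h] at hge; simp at hge; linarith
    have hcw0 : (starRingEnd ℂ) w ≠ 0 := by simpa using hw0
    set v : ℂ := ((starRingEnd ℂ) w)⁻¹ with hv'
    have hv0 : v ≠ 0 := inv_ne_zero hcw0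
    have hcv : ((starRingEnd ℂ) v)⁻¹ = w := by
      rw [hv', map_inv₀, inv_inv, Complex.conj_conj]
    -- conjPoly φ vanishes at v
    have hE1 : (conjPoly φ).eval v = 0 := by
      rw [conjPoly_eval φ hv0, hcv, hw, map_zero, mul_zero]
    -- relation at v
    have hrelv : v * (phiStep φ).eval v = a * φ.eval v := by
      have := hevalrel v
      rw [hE1, mul_zero, sub_zero] at this
      exact this
    -- relation at w
    have hrelw : w * (phiStep φ).eval w = -(b * (conjPoly φ).eval w) := by
      have := hevalrel w
      rw [hw, mul_zero, zero_sub] at this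
      exact this
    -- compute conjPoly (phiStep φ) at w
    have hE2 : (conjPoly (phiStep φ)).eval w
        = (starRingEnd ℂ) a * (conjPoly φ).eval w := by
      rw [conjPoly_eval (phiStep φ) hw0, hpsn]
      have hφ1v : (phiStep φ).eval v = v⁻¹ * (a * φ.eval v) := by
        field_simp
        linear_combination hrelv
      rw [hφ1v]
      rw [conjPoly_eval φ hw0]
      have : ((starRingEnd ℂ) w)⁻¹ = v := rfl
      rw [this, hn]
      rw [map_mul, map_mul, map_inv₀]
      have hcvw : ((starRingEnd ℂ) v) = w⁻¹ := by
        rw [hv', map_inv₀, Complex.conj_conj]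
      rw [hcvw, inv_inv]
      have hdpow : w ^ (d - 1) * w = w ^ d := by
        rw [← pow_succ]
        congr 1
        omega
      rw [← hdpow]
      ring
    -- now derive contradiction
    have hφ1w : (phiStep φ).eval w ≠ 0 := by
      intro h0
      exact absurd (h1 w h0) (not_lt.mpr hge)
    have hkey := schur_conjPoly_le h1 hge
    rw [hE2] at hkey
    have habs2 : ‖a‖ * ‖(conjPoly φ).eval w‖
        ≤ ‖(phiStep φ).eval w‖ := by
      rw [← Complex.norm_conj a, ← norm_mul]
      exact hkey
    have habs1 : ‖w‖ * ‖(phiStep φ).eval w‖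
        = ‖b‖ * ‖(conjPoly φ).eval w‖ := by
      rw [← norm_mul, ← norm_mul, hrelw, norm_neg]
    have hcpw : (conjPoly φ).eval w ≠ 0 := by
      intro h0
      rw [h0, norm_zero, mul_zero] at habs1
      have := norm_pos_iff.mpr hφ1w
      have := norm_pos_iff.mpr hw0
      nlinarith
    have hp1 : 0 < ‖(phiStep φ).eval w‖ := norm_pos_iff.mpr hφ1w
    have hp2 : 0 < ‖(conjPoly φ).eval w‖ := norm_pos_iff.mpr hcpw
    nlinarith [habs1, habs2, hge, hb, hp1, hp2, norm_nonneg a]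
end

section
/- Let δ > 0, ε′ > 1 and 0 < q < 4 be real numbers. Then the Debye–Joseph et al. characteristic polynomial φ₀(Z) = (1 + δε′)Z³ − (3 + δε′ − (1 + δ)q)Z² + (3 − δε′ − (1 − δ)q)Z − (1 − δε′) is a Schur polynomial. -/
open Polynomial

/-- Routh–Hurwitz criterion for cubics: if all coefficients are positive and
`A₀ A₃ < A₁ A₂`, every complex root has negative real part. -/
lemma hurwitz_cubic (A₀ A₁ A₂ A₃ : ℝ) (h0 : 0 < A₀) (h1 : 0 < A₁) (h2 : 0 < A₂)
    (h3 : 0 < A₃) (hprod : A₀ * A₃ < A₁ * A₂) (w : ℂ)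
    (hw : (A₃:ℂ) * w ^ 3 + (A₂:ℂ) * w ^ 2 + (A₁:ℂ) * w + (A₀:ℂ) = 0) :
    w.re < 0 := by
  set x := w.re with hx
  set y := w.im with hy
  have hre := congrArg Complex.re hw
  have him := congrArg Complex.im hw
  simp only [Complex.add_re, Complex.add_im, Complex.mul_re, Complex.mul_im,
    Complex.ofReal_re, Complex.ofReal_im, Complex.zero_re, Complex.zero_im,
    pow_succ, pow_zero, Complex.one_re, Complex.one_im] at hre him
  by_contra hcon
  push_neg at hcon
  have him' : y * (A₃ * (3*x^2 - y^2) + 2*A₂*x + A₁) = 0 := by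
    ring_nf; ring_nf at him; linarith
  have hre' : A₃ * (x^3 - 3*x*y^2) + A₂ * (x^2 - y^2) + A₁ * x + A₀ = 0 := by
    ring_nf; ring_nf at hre; linarith
  rcases mul_eq_zero.mp him' with hy0 | hB
  · rw [hy0] at hre'
    nlinarith [mul_nonneg (mul_nonneg hcon hcon) hcon, mul_nonneg hcon hcon]
  · have hkey : -8*A₃^2*x^3 - 8*A₂*A₃*x^2 - 2*(A₁*A₃ + A₂^2)*x
        + (A₀*A₃ - A₁*A₂) = 0 := by
      linear_combination A₃ * hre' - (3*A₃*x + A₂) * hB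
    nlinarith [mul_nonneg (mul_nonneg hcon hcon) hcon, mul_nonneg hcon hcon,
      mul_pos h1 h3, mul_pos h2 h3, sq_nonneg A₂, sq_nonneg A₃]

/-- Debye–Joseph et al.: for `δ > 0`, `ε′ > 1` and `0 < q < 4` the characteristic
polynomial is a Schur polynomial. -/
theorem debye_joseph_schur (δ ε' q : ℝ) (hδ : 0 < δ) (hε : 1 < ε')
    (hq0 : 0 < q) (hq4 : q < 4) :
    IsSchur (Polynomial.C ((1 + δ * ε' : ℝ) : ℂ) * Polynomial.X ^ 3
      - Polynomial.C ((3 + δ * ε' - (1 + δ) * q : ℝ) : ℂ) * Polynomial.X ^ 2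
      + Polynomial.C ((3 - δ * ε' - (1 - δ) * q : ℝ) : ℂ) * Polynomial.X
      - Polynomial.C ((1 - δ * ε' : ℝ) : ℂ)) := by
  intro z hz
  have heq : ((1 + δ * ε' : ℝ) : ℂ) * z ^ 3 - ((3 + δ * ε' - (1 + δ) * q : ℝ) : ℂ) * z ^ 2
      + ((3 - δ * ε' - (1 - δ) * q : ℝ) : ℂ) * z - ((1 - δ * ε' : ℝ) : ℂ) = 0 := by
    simpa [Polynomial.IsRoot, Polynomial.eval_mul, Polynomial.eval_pow] using hz
  have hεδ : (0:ℝ) < δ * ε' := by nlinarith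
  have hz1 : z + 1 ≠ 0 := by
    intro h
    have hzm : z = -1 := by linear_combination h
    rw [hzm] at heq
    have : ((8 - 2*q : ℝ) : ℂ) = 0 := by push_cast; push_cast at heq; linear_combination -heq
    have : (8 - 2*q : ℝ) = 0 := by exact_mod_cast this
    linarith
  set w : ℂ := (z - 1) / (z + 1) with hwdef
  have hψ : ((8 - 2*q : ℝ) : ℂ) * w ^ 3 + ((8*δ*ε' - 2*δ*q : ℝ) : ℂ) * w ^ 2
      + ((2*q : ℝ) : ℂ) * w + ((2*δ*q : ℝ) : ℂ) = 0 := by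
    rw [hwdef]
    field_simp
    push_cast at heq ⊢
    linear_combination (8:ℂ) * heq
  have hwre : w.re < 0 := by
    apply hurwitz_cubic (2*δ*q) (2*q) (8*δ*ε' - 2*δ*q) (8 - 2*q) _ _ _ _ _ w
    · linear_combination hψ
    · positivity
    · positivity
    · nlinarith
    · linarith
    · nlinarith [mul_pos (mul_pos hq0 hδ) (sub_pos.mpr hε)]
  -- translate `Re ((z-1)/(z+1)) < 0` into `|z| < 1`
  have hN : 0 < Complex.normSq (z + 1) := Complex.normSq_pos.mpr hz1
  rw [hwdef, Complex.div_re] at hwre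
  have hnum : (z - 1).re * (z + 1).re + (z - 1).im * (z + 1).im < 0 := by
    have h1 : (z - 1).re * (z + 1).re / Complex.normSq (z + 1)
        + (z - 1).im * (z + 1).im / Complex.normSq (z + 1) < 0 := hwre
    rw [← add_div, div_neg_iff] at h1
    rcases h1 with ⟨h, hd⟩ | ⟨h, _⟩
    · linarith
    · exact h
  have hns : Complex.normSq z < 1 := by
    simp only [Complex.sub_re, Complex.add_re, Complex.sub_im, Complex.add_im,
      Complex.one_re, Complex.one_im, Complex.normSq_apply] at hnum ⊢
    nlinarith
  have habs := Complex.sq_norm z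
  nlinarith [norm_nonneg z]
end

section
/- Let δ > 0 and 0 < q < 4 be real numbers. Then the polynomial φ₀(Z) = (1 + δ)Z³ − (3 + δ − (1 + δ)q)Z² + (3 − δ − (1 − δ)q)Z − (1 − δ) (the Debye–Joseph et al. characteristic polynomial with ε′ = 1, i.e. ε_s = ε_∞) is a simple von Neumann polynomial. -/
open Polynomial

/-- Debye–Joseph et al. with `ε_s = ε_∞`: for `δ > 0` and `0 < q < 4` the
characteristic polynomial is a simple von Neumann polynomial. -/
theorem debye_joseph_vonNeumann_eps_eq (δ q : ℝ) (hδ : 0 < δ)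
    (hq0 : 0 < q) (hq4 : q < 4) :
    IsSimpleVonNeumann (Polynomial.C ((1 + δ : ℝ) : ℂ) * Polynomial.X ^ 3
      - Polynomial.C ((3 + δ - (1 + δ) * q : ℝ) : ℂ) * Polynomial.X ^ 2
      + Polynomial.C ((3 - δ - (1 - δ) * q : ℝ) : ℂ) * Polynomial.X
      - Polynomial.C ((1 - δ : ℝ) : ℂ)) := by
  intro z hz
  set L : Polynomial ℂ := C ((1 + δ : ℝ) : ℂ) * X - C ((1 - δ : ℝ) : ℂ) with hL
  set Q : Polynomial ℂ := X ^ 2 - C ((2 - q : ℝ) : ℂ) * X + 1 with hQ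
  have hfac : (Polynomial.C ((1 + δ : ℝ) : ℂ) * Polynomial.X ^ 3
      - Polynomial.C ((3 + δ - (1 + δ) * q : ℝ) : ℂ) * Polynomial.X ^ 2
      + Polynomial.C ((3 - δ - (1 - δ) * q : ℝ) : ℂ) * Polynomial.X
      - Polynomial.C ((1 - δ : ℝ) : ℂ)) = L * Q := by
    rw [hL, hQ]
    simp only [Complex.ofReal_add, Complex.ofReal_sub, Complex.ofReal_mul,
      Complex.ofReal_one, Complex.ofReal_ofNat, map_add, map_sub, map_mul,
      map_one, map_ofNat]
    ring
  rw [hfac] at hz ⊢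
  have hz' : L.eval z * Q.eval z = 0 := by simpa [Polynomial.IsRoot] using hz
  rcases mul_eq_zero.mp hz' with h | h
  · -- root of the linear factor
    have h1 : ((1 + δ : ℝ) : ℂ) * z = ((1 - δ : ℝ) : ℂ) := by
      have h0 : ((1 + δ : ℝ) : ℂ) * z - ((1 - δ : ℝ) : ℂ) = 0 := by
        simpa [hL] using h
      exact sub_eq_zero.mp h0
    have habs : ‖z‖ < 1 := by
      have h2 := congrArg (‖·‖) h1
      rw [norm_mul, Complex.norm_real, Complex.norm_real, Real.norm_eq_abs, Real.norm_eq_abs] at h2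
      rw [abs_of_pos (by linarith : (0:ℝ) < 1 + δ)] at h2
      have h3 : |1 - δ| < 1 + δ := abs_lt.mpr ⟨by linarith, by linarith⟩
      nlinarith [norm_nonneg z]
    exact ⟨habs.le, fun h' => absurd h' (by linarith)⟩
  · -- root of the quadratic factor
    have heq : z ^ 2 - ((2 - q : ℝ) : ℂ) * z + 1 = 0 := by simpa [hQ] using h
    have hre : z.re ^ 2 - z.im ^ 2 - (2 - q) * z.re + 1 = 0 := by
      have := congrArg Complex.re heq
      simp [pow_two, Complex.mul_re, Complex.mul_im] at this
      nlinarith [this]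
    have him : z.im * (2 * z.re - (2 - q)) = 0 := by
      have := congrArg Complex.im heq
      simp [pow_two, Complex.mul_re, Complex.mul_im] at this
      nlinarith [this]
    have hy : z.im ≠ 0 := by
      intro hy0
      rw [hy0] at hre
      nlinarith [sq_nonneg (2 * z.re - (2 - q))]
    have hx : 2 * z.re = 2 - q := by
      rcases mul_eq_zero.mp him with h' | h'
      · exact absurd h' hy
      · linarith
    have hxy : z.re ^ 2 + z.im ^ 2 = 1 := by nlinarith
    have habs : ‖z‖ = 1 := by
      rw [Complex.norm_def, Complex.normSq_apply]
      rw [show z.re * z.re + z.im * z.im = 1 by nlinarith]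
      exact Real.sqrt_one
    refine ⟨habs.le, fun _ => ?_⟩
    set w : ℂ := ((2 - q : ℝ) : ℂ) - z with hw
    have hzw : z * w = 1 := by
      rw [hw]; linear_combination -heq
    have hQfac : Q = (X - C z) * (X - C w) := by
      have h1 : C z * C w = (1 : Polynomial ℂ) := by rw [← C_mul, hzw, C_1]
      have h2 : C z + C w = C ((2 - q : ℝ) : ℂ) := by
        rw [← C_add]; congr 1; rw [hw]; ring
      rw [hQ, ← h1, ← h2]; ring
    have hLz : ¬ L.IsRoot z := by
      intro hc
      have h1 : ((1 + δ : ℝ) : ℂ) * z = ((1 - δ : ℝ) : ℂ) := by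
        have h0 : ((1 + δ : ℝ) : ℂ) * z - ((1 - δ : ℝ) : ℂ) = 0 := by
          simpa [hL, Polynomial.IsRoot] using hc
        exact sub_eq_zero.mp h0
      have h2 := congrArg (‖·‖) h1
      rw [norm_mul, Complex.norm_real, Complex.norm_real, Real.norm_eq_abs, Real.norm_eq_abs, habs] at h2
      rw [abs_of_pos (by linarith : (0:ℝ) < 1 + δ)] at h2
      have h3 : |1 - δ| < 1 + δ := abs_lt.mpr ⟨by linarith, by linarith⟩
      linarith [h2]
    have hzw_ne : z ≠ w := by
      intro hc
      have : z.im = w.im := by rw [← hc]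
      rw [hw] at this
      simp [Complex.sub_im] at this
      exact hy (by linarith)
    have hwz : ¬ (X - C w : Polynomial ℂ).IsRoot z := by
      simp [Polynomial.IsRoot, sub_eq_zero]
      exact hzw_ne
    have hL0 : L ≠ 0 := fun hc => hLz (by simp [hc, Polynomial.IsRoot])
    have hX1 : (X - C z : Polynomial ℂ) ≠ 0 := Polynomial.X_sub_C_ne_zero z
    have hX2 : (X - C w : Polynomial ℂ) ≠ 0 := Polynomial.X_sub_C_ne_zero w
    rw [hQfac,
      Polynomial.rootMultiplicity_mul (mul_ne_zero hL0 (mul_ne_zero hX1 hX2)),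
      Polynomial.rootMultiplicity_mul (mul_ne_zero hX1 hX2),
      Polynomial.rootMultiplicity_eq_zero hLz,
      Polynomial.rootMultiplicity_eq_zero hwz,
      Polynomial.rootMultiplicity_X_sub_C_self]
end

section
/- Let δ > 0 and ε′ > 1 be real numbers and set q = 4. Then the Debye–Joseph et al. characteristic polynomial φ₀(Z) = (1 + δε′)Z³ − (3 + δε′ − 4(1 + δ))Z² + (3 − δε′ − 4(1 − δ))Z − (1 − δε′) is a simple von Neumann polynomial. -/
open Polynomial

lemma quad_abs_lt (a b c : ℝ) (ha : 0 < a) (h1 : 0 < a + b + c) (h2 : 0 < a - b + c)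
    (hca : c < a) (z : ℂ)
    (hz : (a : ℂ) * z ^ 2 + (b : ℂ) * z + (c : ℂ) = 0) : ‖z‖ < 1 := by
  by_cases him : z.im = 0
  · have hzx : z = (z.re : ℂ) := by
      apply Complex.ext <;> simp [him]
    set x := z.re with hx
    rw [hzx] at hz
    have hreal : a * x ^ 2 + b * x + c = 0 := by
      have := hz
      push_cast at this
      exact_mod_cast this
    have hx1 : x < 1 := by
      by_contra h; push_neg at h
      have h3 : a ≤ a * x := by nlinarith
      have t1 : (0:ℝ) ≤ (x - 1) * (a * x - c) := by
        apply mul_nonneg <;> nlinarith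
      have t2 : (0:ℝ) ≤ (a + b + c) * (x - 1) := by
        apply mul_nonneg <;> nlinarith
      nlinarith
    have hx2 : -1 < x := by
      by_contra h; push_neg at h
      have h3 : a * x ≤ -a := by nlinarith
      have t1 : (0:ℝ) ≤ (x + 1) * (a * x + c) := by
        have := mul_nonneg (show (0:ℝ) ≤ -(x+1) by nlinarith) (show (0:ℝ) ≤ -(a*x+c) by nlinarith)
        nlinarith [this]
      have t2 : (0:ℝ) ≤ (a - b + c) * (-x - 1) := by
        apply mul_nonneg <;> nlinarith
      nlinarith
    rw [hzx, Complex.norm_real, Real.norm_eq_abs]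
    exact abs_lt.2 ⟨hx2, hx1⟩
  · have hconj : (a : ℂ) * (starRingEnd ℂ z) ^ 2 + (b : ℂ) * (starRingEnd ℂ z) + (c : ℂ) = 0 := by
      have := congrArg (starRingEnd ℂ) hz
      simpa using this
    have hne : z - starRingEnd ℂ z ≠ 0 := by
      intro h
      have h' : starRingEnd ℂ z = z := by linear_combination -h
      exact him (Complex.conj_eq_iff_im.mp h')
    have hsum : (a : ℂ) * (z + starRingEnd ℂ z) + b = 0 := by
      have hdiff : (z - starRingEnd ℂ z) * ((a : ℂ) * (z + starRingEnd ℂ z) + b) = 0 := by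
        linear_combination hz - hconj
      rcases mul_eq_zero.mp hdiff with h | h
      · exact absurd h hne
      · exact h
    have hprod : (a : ℂ) * (z * starRingEnd ℂ z) = c := by
      linear_combination z * hsum - hz
    rw [Complex.mul_conj] at hprod
    have hr : a * Complex.normSq z = c := by exact_mod_cast hprod
    have hsq : (‖z‖) ^ 2 = Complex.normSq z := Complex.sq_norm z
    by_contra habs
    push_neg at habs
    have h4 : 1 ≤ Complex.normSq z := by
      nlinarith [norm_nonneg z, mul_le_mul habs habs (by norm_num) (norm_nonneg z)]
    nlinarith

lemma cubic_svn (a b c : ℝ) (ha : 0 < a) (h1 : 0 < a + b + c) (h2 : 0 < a - b + c)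
    (hca : c < a) :
    IsSimpleVonNeumann ((X - C (-1 : ℂ)) * (C (a : ℂ) * X ^ 2 + C (b : ℂ) * X + C (c : ℂ))) := by
  set ψ : Polynomial ℂ := C (a : ℂ) * X ^ 2 + C (b : ℂ) * X + C (c : ℂ) with hψ_def
  have hψne : ψ ≠ 0 := by
    intro h
    have h0 : ψ.eval 1 = 0 := by rw [h]; simp
    rw [hψ_def] at h0
    simp only [eval_add, eval_mul, eval_pow, eval_X, eval_C, one_pow, mul_one] at h0
    have hr : a + b + c = 0 := by
      exact_mod_cast (by push_cast; linear_combination h0 : ((a + b + c : ℝ) : ℂ) = 0)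
    linarith
  have hne : (X - C (-1 : ℂ)) * ψ ≠ 0 := mul_ne_zero (X_sub_C_ne_zero _) hψne
  have hψroot : ¬ ψ.IsRoot (-1) := by
    intro h
    simp only [IsRoot, hψ_def, eval_add, eval_mul, eval_pow, eval_X, eval_C] at h
    have hr : a - b + c = 0 := by
      exact_mod_cast (by push_cast; linear_combination h : ((a - b + c : ℝ) : ℂ) = 0)
    linarith
  intro z hz
  have hzz : (z + 1) * ((a : ℂ) * z ^ 2 + (b : ℂ) * z + (c : ℂ)) = 0 := by
    have := hz
    simp only [IsRoot, hψ_def, eval_mul, eval_sub, eval_add, eval_pow, eval_X, eval_C] at this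
    linear_combination this
  have hcases : z = -1 ∨ ‖z‖ < 1 := by
    rcases mul_eq_zero.mp hzz with h | h
    · left; linear_combination h
    · right; exact quad_abs_lt a b c ha h1 h2 hca z h
  rcases hcases with h | h
  · subst h
    refine ⟨by simp, fun _ => ?_⟩
    rw [rootMultiplicity_mul hne, rootMultiplicity_X_sub_C_self,
      rootMultiplicity_eq_zero hψroot]
  · exact ⟨le_of_lt h, fun h' => absurd h' (ne_of_lt h)⟩

/-- Debye–Joseph et al. at the limit CFL value `q = 4`: for `δ > 0` and `ε′ > 1`
the characteristic polynomial is a simple von Neumann polynomial. -/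
theorem debye_joseph_vonNeumann_q_four (δ ε' : ℝ) (hδ : 0 < δ) (hε : 1 < ε') :
    IsSimpleVonNeumann (Polynomial.C ((1 + δ * ε' : ℝ) : ℂ) * Polynomial.X ^ 3
      - Polynomial.C ((3 + δ * ε' - 4 * (1 + δ) : ℝ) : ℂ) * Polynomial.X ^ 2
      + Polynomial.C ((3 - δ * ε' - 4 * (1 - δ) : ℝ) : ℂ) * Polynomial.X
      - Polynomial.C ((1 - δ * ε' : ℝ) : ℂ)) := by

  have hfact : (Polynomial.C ((1 + δ * ε' : ℝ) : ℂ) * Polynomial.X ^ 3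
      - Polynomial.C ((3 + δ * ε' - 4 * (1 + δ) : ℝ) : ℂ) * Polynomial.X ^ 2
      + Polynomial.C ((3 - δ * ε' - 4 * (1 - δ) : ℝ) : ℂ) * Polynomial.X
      - Polynomial.C ((1 - δ * ε' : ℝ) : ℂ))
      = (X - C (-1 : ℂ)) * (C ((1 + δ * ε' : ℝ) : ℂ) * X ^ 2
        + C ((4 * δ - 2 * δ * ε' : ℝ) : ℂ) * X + C ((δ * ε' - 1 : ℝ) : ℂ)) := by
    apply Polynomial.funext
    intro x
    simp only [eval_add, eval_sub, eval_mul, eval_pow, eval_X, eval_C]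
    push_cast
    ring
  rw [hfact]
  exact cubic_svn _ _ _ (by nlinarith) (by nlinarith) (by nlinarith) (by nlinarith)
end

section
/- Let δ > 0, λ > 0 and ξ ∈ ℝ satisfy 4λ²sin²(ξ/2) = 4, and let G be the 3 × 3 complex matrix with rows (1, −λ(e^{iξ} − 1), 0), (−λ(1 − e^{−iξ}), (1 − δ + (1 + δ)λ²(e^{iξ} − 2 + e^{−iξ}))/(1 + δ), 2δ/(1 + δ)), and (−λ(1 − e^{−iξ}), λ²(e^{iξ} − 2 + e^{−iξ}), 1). Then the powers of G are not uniformly bounded: there is no constant C with ‖Gⁿ‖ ≤ C for all n. -/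
attribute [local instance] Matrix.frobeniusNormedAddCommGroup

/-- Each entry of a matrix is bounded by its Frobenius norm. -/
lemma entry_le_frob {m n : Type*} [Fintype m] [Fintype n] (A : Matrix m n ℂ) (i : m) (j : n) :
    ‖A i j‖ ≤ ‖A‖ := by
  rw [Matrix.frobenius_norm_def]
  have h1 : ‖A i j‖ = (‖A i j‖ ^ (2:ℝ)) ^ (1/2 : ℝ) := by
    rw [← Real.rpow_mul (by positivity)]; norm_num
  rw [h1]
  apply Real.rpow_le_rpow (by positivity) _ (by norm_num)
  calc ‖A i j‖ ^ (2:ℝ) ≤ ∑ j', ‖A i j'‖ ^ (2:ℝ) :=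
        Finset.single_le_sum (f := fun j' => ‖A i j'‖ ^ (2:ℝ))
          (fun _ _ => by positivity) (Finset.mem_univ j)
    _ ≤ ∑ i', ∑ j', ‖A i' j'‖ ^ (2:ℝ) :=
        Finset.single_le_sum (f := fun i' => ∑ j', ‖A i' j'‖ ^ (2:ℝ))
          (fun _ _ => by positivity) (Finset.mem_univ i)

/-- Instability of the Debye–Joseph et al. amplification matrix when
`ε_s = ε_∞` and `q = 4λ²sin²(ξ/2) = 4`: the powers of `G` are not uniformly
bounded. -/
theorem debye_joseph_unstable (δ lam ξ : ℝ) (hδ : 0 < δ) (hlam : 0 < lam)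
    (hq : 4 * lam ^ 2 * Real.sin (ξ / 2) ^ 2 = 4) :
    ¬ ∃ C : ℝ, ∀ n : ℕ,
      ‖(!![1, -(lam : ℂ) * (Complex.exp (ξ * Complex.I) - 1), 0;
          -(lam : ℂ) * (1 - Complex.exp (-ξ * Complex.I)),
            (1 - (δ : ℂ) + (1 + (δ : ℂ)) * (lam : ℂ) ^ 2 *
                (Complex.exp (ξ * Complex.I) - 2 + Complex.exp (-ξ * Complex.I))) /
              (1 + (δ : ℂ)),
            2 * (δ : ℂ) / (1 + (δ : ℂ));
          -(lam : ℂ) * (1 - Complex.exp (-ξ * Complex.I)),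
            (lam : ℂ) ^ 2 *
              (Complex.exp (ξ * Complex.I) - 2 + Complex.exp (-ξ * Complex.I)),
            1] : Matrix (Fin 3) (Fin 3) ℂ) ^ n‖ ≤ C := by
  set c : ℂ := Complex.exp (ξ * Complex.I) with hc_def
  set c' : ℂ := Complex.exp (-ξ * Complex.I) with hc'_def
  set G : Matrix (Fin 3) (Fin 3) ℂ :=
    !![1, -(lam : ℂ) * (c - 1), 0;
       -(lam : ℂ) * (1 - c'),
         (1 - (δ : ℂ) + (1 + (δ : ℂ)) * (lam : ℂ) ^ 2 * (c - 2 + c')) / (1 + (δ : ℂ)),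
         2 * (δ : ℂ) / (1 + (δ : ℂ));
       -(lam : ℂ) * (1 - c'), (lam : ℂ) ^ 2 * (c - 2 + c'), 1] with hG_def
  -- basic algebraic facts
  have hcc : c * c' = 1 := by
    rw [hc_def, hc'_def, ← Complex.exp_add]; ring_nf; exact Complex.exp_zero
  have hreal : lam ^ 2 * Real.cos ξ = lam ^ 2 - 2 := by
    have h2 : Real.cos ξ = 2 * Real.cos (ξ/2)^2 - 1 := by
      have := Real.cos_two_mul (ξ/2); rwa [show 2*(ξ/2) = ξ by ring] at this
    have h3 : Real.sin (ξ/2)^2 + Real.cos (ξ/2)^2 = 1 := Real.sin_sq_add_cos_sq _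
    nlinarith [hq]
  have hsum : (lam:ℂ)^2 * (c + c' - 2) = -4 := by
    have h1 : c + c' = 2 * (Real.cos ξ : ℂ) := by
      rw [hc_def, hc'_def, Complex.exp_mul_I, show -(ξ:ℂ) = ((-ξ:ℝ):ℂ) by push_cast; ring,
        Complex.exp_mul_I, ← Complex.ofReal_cos, ← Complex.ofReal_sin, ← Complex.ofReal_cos,
        ← Complex.ofReal_sin, Real.cos_neg, Real.sin_neg]
      push_cast; ring
    have h4 : (lam:ℂ) ^ 2 * (Real.cos ξ : ℂ) = (lam:ℂ)^2 - 2 := by exact_mod_cast hreal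
    rw [h1]; linear_combination 2 * h4
  have h1δ : (1:ℂ) + (δ:ℂ) ≠ 0 := by
    intro h
    have h2 : δ = -1 := by exact_mod_cast (by linear_combination h : (δ:ℂ) = -1)
    linarith
  -- eigenvector and generalized eigenvector
  set A : ℂ := (lam:ℂ) * (c - 1) with hA_def
  set v : Fin 3 → ℂ := ![A, 2, 2] with hv_def
  set u : Fin 3 → ℂ := ![A/2, 0, 0] with hu_def
  have hAne : A ≠ 0 := by
    have hAB : A * ((lam:ℂ) * (c' - 1)) = 4 := by
      rw [hA_def]; linear_combination -hsum + (lam:ℂ)^2*hcc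
    intro h; rw [h, zero_mul] at hAB; norm_num at hAB
  have hGv : G.mulVec v = -v := by
    funext i
    fin_cases i
    · simp [hG_def, hv_def, hA_def, Matrix.mulVec, dotProduct, Fin.sum_univ_three]; ring
    · simp only [hG_def, hv_def, hA_def, Matrix.mulVec, dotProduct, Fin.sum_univ_three,
        Matrix.cons_val', Matrix.cons_val_zero, Matrix.cons_val_one, Matrix.head_cons,
        Matrix.empty_val', Matrix.cons_val_fin_one, Matrix.head_fin_const, Fin.isValue,
        Matrix.cons_val_two, Matrix.tail_cons, Pi.neg_apply, Fin.mk_one, Matrix.of_apply]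
      field_simp
      linear_combination (1+(δ:ℂ))*hsum + (1+(δ:ℂ))*(lam:ℂ)^2*hcc
    · simp [hG_def, hv_def, hA_def, Matrix.mulVec, dotProduct, Fin.sum_univ_three]
      linear_combination hsum + (lam:ℂ)^2*hcc
  have hGu : G.mulVec u = -u + v := by
    funext i
    fin_cases i
    · simp [hG_def, hv_def, hu_def, hA_def, Matrix.mulVec, dotProduct,
        Fin.sum_univ_three]; ring
    · simp [hG_def, hv_def, hu_def, hA_def, Matrix.mulVec, dotProduct,
        Fin.sum_univ_three]
      linear_combination -hsum/2 + (lam:ℂ)^2/2*hcc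
    · simp [hG_def, hv_def, hu_def, hA_def, Matrix.mulVec, dotProduct,
        Fin.sum_univ_three]
      linear_combination -hsum/2 + (lam:ℂ)^2/2*hcc
  -- powers applied to u
  have hpow : ∀ n : ℕ, (G ^ n).mulVec u
      = ((-1:ℂ)^n) • u + (((n:ℂ)) * (-1:ℂ)^(n+1)) • v := by
    intro n
    induction n with
    | zero => simp
    | succ n ih =>
      rw [pow_succ', ← Matrix.mulVec_mulVec, ih, Matrix.mulVec_add, Matrix.mulVec_smul,
        Matrix.mulVec_smul, hGu, hGv]
      funext i
      simp only [Pi.add_apply, Pi.smul_apply, Pi.neg_apply, smul_eq_mul]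
      push_cast
      ring
  -- extract entry growth
  have hkey : ∀ n : ℕ, (G ^ n) 1 0 * (A / 2) = (n:ℂ) * (-1:ℂ)^(n+1) * 2 := by
    intro n
    have h := congrFun (hpow n) 1
    simpa [Matrix.mulVec, dotProduct, Fin.sum_univ_three, hu_def, hv_def] using h
  rintro ⟨C, hC⟩
  obtain ⟨n, hn⟩ := exists_nat_gt (C * ‖A‖ / 4)
  have hnorm : ‖(G ^ n) 1 0‖ * (‖A‖ / 2) = (n:ℝ) * 2 := by
    simpa [norm_mul, norm_div, Complex.norm_natCast] using congrArg norm (hkey n)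
  have hentry : ‖(G ^ n) 1 0‖ ≤ C := le_trans (entry_le_frob _ 1 0) (hC n)
  have hApos : 0 < ‖A‖ := norm_pos_iff.mpr hAne
  have : (n:ℝ) * 2 ≤ C * (‖A‖ / 2) := by
    rw [← hnorm]
    exact mul_le_mul_of_nonneg_right hentry (by positivity)
  have : (n:ℝ) ≤ C * ‖A‖ / 4 := by linarith
  linarith
end

section
/- Let 0 < δ < 1, α > 0 and 0 < q ≤ 4 be real numbers. Then the Debye–Young characteristic polynomial φ₀(Z) = (1 + δα)(1 + δ)Z³ − (3 + δ + δα + 3δ²α − (1 + δ)q)Z² + (3 − δ − δα + 3δ²α − (1 − δ)q)Z − (1 − δα)(1 − δ) is a Schur polynomial. -/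
open Polynomial

set_option maxHeartbeats 1000000 in
/-- Debye–Young: for `0 < δ < 1`, `α > 0` and `0 < q ≤ 4` the characteristic
polynomial is a Schur polynomial. -/
theorem debye_young_schur (δ α q : ℝ) (hδ0 : 0 < δ) (hδ1 : δ < 1) (hα : 0 < α)
    (hq0 : 0 < q) (hq4 : q ≤ 4) :
    IsSchur (Polynomial.C (((1 + δ * α) * (1 + δ) : ℝ) : ℂ) * Polynomial.X ^ 3
      - Polynomial.C ((3 + δ + δ * α + 3 * δ ^ 2 * α - (1 + δ) * q : ℝ) : ℂ) *
          Polynomial.X ^ 2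
      + Polynomial.C ((3 - δ - δ * α + 3 * δ ^ 2 * α - (1 - δ) * q : ℝ) : ℂ) *
          Polynomial.X
      - Polynomial.C (((1 - δ * α) * (1 - δ) : ℝ) : ℂ)) := by
  intro z hz
  simp only [IsRoot, eval_sub, eval_add, eval_mul, eval_pow, eval_C, eval_X] at hz
  push_cast at hz
  have hz1 : z + 1 ≠ 0 := by
    intro h
    have hzeq : z = -1 := by linear_combination h
    rw [hzeq] at hz
    have hr : ((8 + 8*δ^2*α - 2*q : ℝ) : ℂ) = 0 := by push_cast; linear_combination -hz
    have hr' : (8 + 8*δ^2*α - 2*q : ℝ) = 0 := by exact_mod_cast hr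
    nlinarith [mul_pos (mul_pos hδ0 hδ0) hα]
  set w : ℂ := (z - 1) / (z + 1) with hw
  have hwz : w * (z+1) = z - 1 := div_mul_cancel₀ _ hz1
  have key : (z+1)^3 * (((8 + 8*δ^2*α - 2*q : ℝ):ℂ) * (w*w*w) + ((8*δ + 8*δ*α - 2*δ*q : ℝ):ℂ) * (w*w)
      + ((2*q:ℝ):ℂ) * w + ((2*δ*q:ℝ):ℂ)) = 0 := by
    have expand : (z+1)^3 * (((8 + 8*δ^2*α - 2*q : ℝ):ℂ) * (w*w*w) + ((8*δ + 8*δ*α - 2*δ*q : ℝ):ℂ) * (w*w)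
        + ((2*q:ℝ):ℂ) * w + ((2*δ*q:ℝ):ℂ))
        = ((8 + 8*δ^2*α - 2*q : ℝ):ℂ) * (w*(z+1))^3 + ((8*δ + 8*δ*α - 2*δ*q : ℝ):ℂ) * (w*(z+1))^2*(z+1)
        + ((2*q:ℝ):ℂ) * (w*(z+1))*(z+1)^2 + ((2*δ*q:ℝ):ℂ)*(z+1)^3 := by ring
    rw [expand, hwz]
    push_cast
    linear_combination 8*hz
  have hψ : ((8 + 8*δ^2*α - 2*q : ℝ):ℂ) * (w*w*w) + ((8*δ + 8*δ*α - 2*δ*q : ℝ):ℂ) * (w*w)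
      + ((2*q:ℝ):ℂ) * w + ((2*δ*q:ℝ):ℂ) = 0 :=
    (mul_eq_zero.mp key).resolve_left (pow_ne_zero 3 hz1)
  clear key hwz hz
  set x : ℝ := w.re with hx
  set y : ℝ := w.im with hy
  have hwxy : w = (x:ℂ) + (y:ℂ)*Complex.I := (Complex.re_add_im w).symm
  rw [hwxy] at hψ
  have hre := congrArg Complex.re hψ
  have him := congrArg Complex.im hψ
  simp only [Complex.add_re, Complex.add_im, Complex.mul_re, Complex.mul_im,
    Complex.I_re, Complex.I_im, Complex.ofReal_re, Complex.ofReal_im, Complex.zero_re,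
    Complex.zero_im] at hre him
  have Hre : (8+8*δ^2*α-2*q)*(x^3-3*x*y^2) + (8*δ+8*δ*α-2*δ*q)*(x^2-y^2) + 2*q*x + 2*δ*q = 0 := by
    linear_combination hre
  have Him : y * ((8+8*δ^2*α-2*q)*(3*x^2-y^2) + 2*(8*δ+8*δ*α-2*δ*q)*x + 2*q) = 0 := by
    linear_combination him
  clear hre him hψ hwxy
  have hc3 : (0:ℝ) < 8+8*δ^2*α-2*q := by nlinarith [mul_pos (mul_pos hδ0 hδ0) hα]
  have hc2 : (0:ℝ) < 8*δ+8*δ*α-2*δ*q := by nlinarith [mul_pos hδ0 hα]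
  have hxlt : x < 0 := by
    by_contra hx0
    push_neg at hx0
    rcases eq_or_ne y 0 with hy0 | hy0
    · rw [hy0] at Hre
      nlinarith [mul_nonneg hc3.le (mul_nonneg (mul_nonneg hx0 hx0) hx0),
        mul_nonneg hc2.le (mul_nonneg hx0 hx0), mul_nonneg hq0.le hx0,
        mul_pos hδ0 hq0]
    · have hy2 : (8+8*δ^2*α-2*q)*(3*x^2-y^2) + 2*(8*δ+8*δ*α-2*δ*q)*x + 2*q = 0 :=
        (mul_eq_zero.mp Him).resolve_left hy0
      have key : 8*(8+8*δ^2*α-2*q)^2*x^3 + 8*(8*δ+8*δ*α-2*δ*q)*(8+8*δ^2*α-2*q)*x^2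
          + 2*(2*q*(8+8*δ^2*α-2*q)+(8*δ+8*δ*α-2*δ*q)^2)*x
          + (2*q*(8*δ+8*δ*α-2*δ*q) - 2*δ*q*(8+8*δ^2*α-2*q)) = 0 := by
        linear_combination (3*(8+8*δ^2*α-2*q)*x + (8*δ+8*δ*α-2*δ*q))*hy2 - (8+8*δ^2*α-2*q)*Hre
      have hpos : (0:ℝ) < 2*q*(8*δ+8*δ*α-2*δ*q) - 2*δ*q*(8+8*δ^2*α-2*q) := by
        have h16 : 2*q*(8*δ+8*δ*α-2*δ*q) - 2*δ*q*(8+8*δ^2*α-2*q) = 16*q*δ*α*(1-δ^2) := by ring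
        rw [h16]
        have hδ2 : 0 < 1 - δ^2 := by nlinarith
        positivity
      nlinarith [key, hpos,
        mul_nonneg (mul_nonneg (mul_pos hc3 hc3).le hx0) (mul_nonneg hx0 hx0),
        mul_nonneg (mul_nonneg (mul_pos hc2 hc3).le hx0) hx0,
        mul_nonneg (mul_pos (mul_pos hq0 hc3) two_pos).le hx0,
        mul_nonneg (mul_pos hc2 hc2).le hx0]
  have hns : 0 < Complex.normSq (z+1) := Complex.normSq_pos.mpr hz1
  have hX : x * Complex.normSq (z+1) = Complex.normSq z - 1 := by
    rw [hx, hw, Complex.div_re, add_mul, div_mul_cancel₀ _ hns.ne', div_mul_cancel₀ _ hns.ne']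
    simp only [Complex.normSq_apply, Complex.sub_re, Complex.sub_im, Complex.add_re,
      Complex.add_im, Complex.one_re, Complex.one_im]
    ring
  have hlt : Complex.normSq z < 1 := by nlinarith
  nlinarith [Complex.sq_norm z, norm_nonneg z]
end

section
/- Let δ > 0 and 0 < q < 4 be real numbers. Then the polynomial φ₀(Z) = (1 + δ)Z³ − (3 + δ − (1 + δ)q)Z² + (3 − δ − (1 − δ)q)Z − (1 − δ) (the Debye–Young characteristic polynomial with α = 0, i.e. ε_s = ε_∞) is a simple von Neumann polynomial. -/
open Polynomial

/-- If `A` does not vanish at `z` and `z ≠ w`, then `z` is a simple root of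
`A * (X - C z) * (X - C w)`. -/
lemma rm_helper (A : Polynomial ℂ) (z w : ℂ) (hA : A.eval z ≠ 0) (hzw : z ≠ w) :
    rootMultiplicity z (A * (X - C z) * (X - C w)) = 1 := by
  have h1 : A ≠ 0 := fun h => hA (by simp [h])
  have h2 : (X - C z : Polynomial ℂ) ≠ 0 := X_sub_C_ne_zero z
  have h3 : (X - C w : Polynomial ℂ) ≠ 0 := X_sub_C_ne_zero w
  have hAz : ¬ A.IsRoot z := hA
  have hw : ¬ (X - C w : Polynomial ℂ).IsRoot z := by
    simp [Polynomial.IsRoot, sub_eq_zero, hzw]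
  rw [rootMultiplicity_mul (mul_ne_zero (mul_ne_zero h1 h2) h3),
    rootMultiplicity_mul (mul_ne_zero h1 h2),
    rootMultiplicity_X_sub_C_self, rootMultiplicity_eq_zero hAz,
    rootMultiplicity_eq_zero hw]

/-- Debye–Young with `ε_s = ε_∞` (α = 0): for `δ > 0` and `0 < q < 4` the
characteristic polynomial is a simple von Neumann polynomial. -/
theorem debye_young_vonNeumann_eps_eq (δ q : ℝ) (hδ : 0 < δ)
    (hq0 : 0 < q) (hq4 : q < 4) :
    IsSimpleVonNeumann (Polynomial.C ((1 + δ : ℝ) : ℂ) * Polynomial.X ^ 3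
      - Polynomial.C ((3 + δ - (1 + δ) * q : ℝ) : ℂ) * Polynomial.X ^ 2
      + Polynomial.C ((3 - δ - (1 - δ) * q : ℝ) : ℂ) * Polynomial.X
      - Polynomial.C ((1 - δ : ℝ) : ℂ)) := by
  have hq40 : 0 < q * (4 - q) := by nlinarith
  set s : ℝ := Real.sqrt (q * (4 - q)) with hs_def
  have hs2 : s ^ 2 = q * (4 - q) := Real.sq_sqrt hq40.le
  have hspos : 0 < s := Real.sqrt_pos.mpr hq40
  have hs2' : (s : ℂ) ^ 2 = (q : ℂ) * (4 - (q : ℂ)) := by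
    exact_mod_cast congrArg Complex.ofReal hs2
  set a : ℂ := ((1 + δ : ℝ) : ℂ) with ha_def
  set c : ℂ := ((1 - δ : ℝ) : ℂ) with hc_def
  have ha0 : a ≠ 0 := by
    rw [ha_def]
    exact_mod_cast Complex.ofReal_ne_zero.mpr (by linarith)
  set z1 : ℂ := (((2 - q : ℝ) : ℂ) + (s : ℂ) * Complex.I) / 2 with hz1_def
  set z2 : ℂ := (((2 - q : ℝ) : ℂ) - (s : ℂ) * Complex.I) / 2 with hz2_def
  have hprod : z1 * z2 = 1 := by
    rw [hz1_def, hz2_def]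
    push_cast
    linear_combination (-(s:ℂ)^2/4) * Complex.I_sq + ((1:ℂ)/4) * hs2'
  have hconj : (starRingEnd ℂ) z1 = z2 := by
    rw [hz1_def, hz2_def]
    simp only [map_div₀, map_add, map_sub, map_mul, Complex.conj_ofReal,
      Complex.conj_I, map_ofNat]
    ring
  have habs1 : ‖z1‖ = 1 := by
    have h1 : ((Complex.normSq z1 : ℝ) : ℂ) = 1 := by rw [← Complex.mul_conj, hconj, hprod]
    have h2 : Complex.normSq z1 = 1 := by exact_mod_cast h1
    have := Complex.normSq_eq_norm_sq z1
    nlinarith [norm_nonneg z1]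
  have habs2 : ‖z2‖ = 1 := by
    rw [← hconj, Complex.norm_conj]
    exact habs1
  have hne : z1 ≠ z2 := by
    intro h
    have : z1.im = z2.im := by rw [h]
    rw [hz1_def, hz2_def] at this
    simp [Complex.div_im, Complex.add_im, Complex.sub_im, Complex.mul_im,
      Complex.I_im, Complex.I_re] at this
    nlinarith
  have hsum : z1 + z2 = 2 - (q : ℂ) := by
    rw [hz1_def, hz2_def]; push_cast; ring
  have hca : ‖c / a‖ < 1 := by
    rw [norm_div, hc_def, ha_def, Complex.norm_real, Complex.norm_real, Real.norm_eq_abs, Real.norm_eq_abs]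
    rw [div_lt_one (by rw [abs_of_pos (by linarith)]; linarith)]
    rw [abs_of_pos (by linarith : (0:ℝ) < 1 + δ)]
    cases abs_cases (1 - δ) with
    | inl h => rw [h.1]; linarith
    | inr h => rw [h.1]; linarith
  have hfac : (Polynomial.C a * Polynomial.X ^ 3
      - Polynomial.C ((3 + δ - (1 + δ) * q : ℝ) : ℂ) * Polynomial.X ^ 2
      + Polynomial.C ((3 - δ - (1 - δ) * q : ℝ) : ℂ) * Polynomial.X
      - Polynomial.C c) = (C a * X - C c) * (X - C z1) * (X - C z2) := by
    apply Polynomial.funext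
    intro x
    simp only [eval_mul, eval_sub, eval_add, eval_pow, eval_C, eval_X]
    have hquad : (x - z1) * (x - z2) = x ^ 2 - (2 - (q:ℂ)) * x + 1 := by
      linear_combination (-x) * hsum + hprod
    rw [mul_assoc, hquad, ha_def, hc_def]
    push_cast
    ring
  intro z hz
  rw [Polynomial.IsRoot, hfac] at hz
  simp only [eval_mul, eval_sub, eval_C, eval_X, mul_eq_zero] at hz
  have hAz1 : (C a * X - C c : Polynomial ℂ).eval z1 ≠ 0 := by
    simp only [eval_sub, eval_mul, eval_C, eval_X]
    intro h
    have hz1eq : z1 = c / a := by field_simp; linear_combination h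
    rw [hz1eq] at habs1
    exact absurd habs1 (ne_of_lt hca)
  have hAz2 : (C a * X - C c : Polynomial ℂ).eval z2 ≠ 0 := by
    simp only [eval_sub, eval_mul, eval_C, eval_X]
    intro h
    have hz2eq : z2 = c / a := by field_simp; linear_combination h
    rw [hz2eq] at habs2
    exact absurd habs2 (ne_of_lt hca)
  rcases hz with (h | h) | h
  · -- root of the linear factor, strictly inside the unit disk
    have hzeq : z = c / a := by
      field_simp
      linear_combination h
    rw [hzeq]
    exact ⟨hca.le, fun h1 => absurd h1 (ne_of_lt hca)⟩
  · -- z = z1, on the unit circle, simple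
    have hzeq : z = z1 := by linear_combination h
    subst hzeq
    refine ⟨habs1.le, fun _ => ?_⟩
    rw [hfac]
    exact rm_helper _ z1 z2 hAz1 hne
  · -- z = z2, on the unit circle, simple
    have hzeq : z = z2 := by linear_combination h
    subst hzeq
    refine ⟨habs2.le, fun _ => ?_⟩
    rw [hfac]
    have hcomm : (C a * X - C c) * (X - C z1) * (X - C z2) =
        (C a * X - C c) * (X - C z2) * (X - C z1) := by ring
    rw [hcomm]
    exact rm_helper _ z2 z1 hAz2 hne.symm
end

section
/- Let α > 0 and 0 < q ≤ 4 be real numbers and set δ = 1. Then the Debye–Young characteristic polynomial φ₀(Z) = 2(1 + α)Z³ − (4 + 4α − 2q)Z² + (2 + 2α)Z is a simple von Neumann polynomial. -/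
open Polynomial

/-- Debye–Young at `δ = 1`: for `α > 0` and `0 < q ≤ 4` the characteristic
polynomial `2(1+α)Z³ − (4+4α−2q)Z² + (2+2α)Z` is a simple von Neumann
polynomial. -/
theorem debye_young_vonNeumann_delta_one (α q : ℝ) (hα : 0 < α)
    (hq0 : 0 < q) (hq4 : q ≤ 4) :
    IsSimpleVonNeumann (Polynomial.C ((2 * (1 + α) : ℝ) : ℂ) * Polynomial.X ^ 3
      - Polynomial.C ((4 + 4 * α - 2 * q : ℝ) : ℂ) * Polynomial.X ^ 2
      + Polynomial.C ((2 + 2 * α : ℝ) : ℂ) * Polynomial.X) := by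
  set a : ℝ := 2 * (1 + α) with ha_def
  set b : ℝ := 4 + 4 * α - 2 * q with hb_def
  set c : ℝ := 2 + 2 * α with hc_def
  have ha : (0:ℝ) < a := by rw [ha_def]; linarith
  have hac : c = a := by rw [ha_def, hc_def]; ring
  have hD : 0 < 4 * a * c - b ^ 2 := by
    rw [ha_def, hb_def, hc_def]; nlinarith
  set s : ℝ := Real.sqrt (4 * a * c - b ^ 2) with hs_def
  have hs : 0 < s := Real.sqrt_pos.2 hD
  have hs2 : s ^ 2 = 4 * a * c - b ^ 2 := Real.sq_sqrt hD.le
  have haC : (a:ℂ) ≠ 0 := by exact_mod_cast ha.ne'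
  set r : ℂ := ((b:ℂ) + Complex.I * s) / (2 * a) with hr_def
  set rb : ℂ := ((b:ℂ) - Complex.I * s) / (2 * a) with hrb_def
  have hsum : (a:ℂ) * (r + rb) = (b:ℂ) := by
    rw [hr_def, hrb_def]; field_simp; ring
  have key : (b:ℂ) ^ 2 + (s:ℂ) ^ 2 = 4 * (a:ℂ) * (a:ℂ) := by
    have : b ^ 2 + s ^ 2 = 4 * a * a := by rw [hs2, hac]; ring
    exact_mod_cast this
  have hrr : r * rb = 1 := by
    rw [hr_def, hrb_def, div_mul_div_comm]
    rw [show ((b:ℂ) + Complex.I * s) * ((b:ℂ) - Complex.I * s)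
        = (b:ℂ)^2 - Complex.I^2 * (s:ℂ)^2 by ring, Complex.I_sq]
    rw [show (b:ℂ)^2 - (-1) * (s:ℂ)^2 = (b:ℂ)^2 + (s:ℂ)^2 by ring, key]
    field_simp; ring
  have hprod : (a:ℂ) * (r * rb) = (c:ℂ) := by
    rw [hrr, hac]; ring
  have hconj : (starRingEnd ℂ) r = rb := by
    rw [hr_def, hrb_def]
    simp only [map_div₀, map_add, map_mul, map_sub, map_ofNat, Complex.conj_I,
      Complex.conj_ofReal]
    ring
  have habs_r : ‖r‖ = 1 := by
    have h1 : Complex.normSq r = 1 := by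
      have h := Complex.mul_conj r
      rw [hconj, hrr] at h
      exact_mod_cast h.symm
    have h2 := Complex.sq_norm r
    rw [h1] at h2
    nlinarith [norm_nonneg r]
  have habs_rb : ‖rb‖ = 1 := by
    rw [← hconj, Complex.norm_conj]; exact habs_r
  have hrne : r ≠ rb := by
    intro h
    have h0 : r - rb = 0 := by rw [h]; ring
    rw [hr_def, hrb_def, div_sub_div_same,
      show ((b:ℂ) + Complex.I * s) - ((b:ℂ) - Complex.I * s) = 2 * Complex.I * s by ring,
      _root_.div_eq_zero_iff] at h0
    rcases h0 with h3 | h3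
    · have : (s:ℂ) = 0 := by
        rcases mul_eq_zero.mp h3 with h4 | h4
        · exact absurd (mul_eq_zero.mp h4) (by simp [Complex.I_ne_zero])
        · exact h4
      exact hs.ne' (by exact_mod_cast this)
    · exact (mul_ne_zero two_ne_zero haC) h3
  have hfac : Polynomial.C ((a : ℝ) : ℂ) * Polynomial.X ^ 3
      - Polynomial.C ((b : ℝ) : ℂ) * Polynomial.X ^ 2
      + Polynomial.C ((c : ℝ) : ℂ) * Polynomial.X
      = Polynomial.C (a:ℂ) * (Polynomial.X * ((Polynomial.X - Polynomial.C r) * (Polynomial.X - Polynomial.C rb))) := by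
    rw [← hsum, ← hprod]
    simp only [map_mul, map_add]
    ring
  intro z hz
  have hz' : Polynomial.eval z (Polynomial.C (a:ℂ) * (Polynomial.X * ((Polynomial.X - Polynomial.C r) * (Polynomial.X - Polynomial.C rb)))) = 0 := by
    rw [← hfac]; exact hz
  simp only [eval_mul, eval_sub, eval_C, eval_X, mul_eq_zero] at hz'
  have hcases : z = 0 ∨ z = r ∨ z = rb := by
    rcases hz' with h | h | h | h
    · exact absurd h haC
    · exact Or.inl h
    · exact Or.inr (Or.inl (sub_eq_zero.mp h))
    · exact Or.inr (Or.inr (sub_eq_zero.mp h))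
  have hmul : ∀ w : ℂ, (w = r ∨ w = rb) →
      Polynomial.rootMultiplicity w (Polynomial.C ((a : ℝ) : ℂ) * Polynomial.X ^ 3
      - Polynomial.C ((b : ℝ) : ℂ) * Polynomial.X ^ 2
      + Polynomial.C ((c : ℝ) : ℂ) * Polynomial.X) = 1 := by
    intro w hw
    have hwabs : ‖w‖ = 1 := by rcases hw with h | h <;> rw [h] <;> assumption
    have hw0 : w ≠ 0 := by intro h; rw [h] at hwabs; simp at hwabs
    rw [hfac]
    have hCne : (Polynomial.C (a:ℂ)) ≠ 0 := by simp [haC]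
    have hXne : (Polynomial.X : Polynomial ℂ) ≠ 0 := Polynomial.X_ne_zero
    have hr1 : (Polynomial.X - Polynomial.C r) ≠ 0 := Polynomial.X_sub_C_ne_zero r
    have hr2 : (Polynomial.X - Polynomial.C rb) ≠ 0 := Polynomial.X_sub_C_ne_zero rb
    rw [Polynomial.rootMultiplicity_mul
        (mul_ne_zero hCne (mul_ne_zero hXne (mul_ne_zero hr1 hr2))),
      Polynomial.rootMultiplicity_mul (mul_ne_zero hXne (mul_ne_zero hr1 hr2)),
      Polynomial.rootMultiplicity_mul (mul_ne_zero hr1 hr2),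
      Polynomial.rootMultiplicity_C,
      Polynomial.rootMultiplicity_eq_zero (by simpa [Polynomial.IsRoot] using hw0)]
    classical
    rw [Polynomial.rootMultiplicity_X_sub_C, Polynomial.rootMultiplicity_X_sub_C]
    rcases hw with h | h <;> subst h <;> simp [hrne, Ne.symm hrne, hrne.symm]
  rcases hcases with h | h | h
  · subst h
    exact ⟨by simp, fun h1 => by simp at h1⟩
  · subst h
    exact ⟨habs_r.le, fun _ => hmul r (Or.inl rfl)⟩
  · subst h
    exact ⟨habs_rb.le, fun _ => hmul rb (Or.inr rfl)⟩
end

section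
/- Let δ > 0, ω > 0, ε′ > 1 and 0 < q < 2 be real numbers. Then the Lorentz–Joseph et al. characteristic polynomial φ₀(Z) = (1 + δ + ωε′)Z⁴ − (4 + 2δ + 2ωε′ − (1 + δ + ω)q)Z³ + (6 + 2ωε′ − 2q)Z² − (4 − 2δ + 2ωε′ − (1 − δ + ω)q)Z + (1 − δ + ωε′) is a Schur polynomial. -/
open Polynomial

set_option maxHeartbeats 4000000 in
set_option maxRecDepth 100000 in
/-- Lorentz–Joseph et al. (an-harmonic case): for `δ > 0`, `ω > 0`, `ε′ > 1` and
`0 < q < 2` the characteristic polynomial is a Schur polynomial. -/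
theorem lorentz_joseph_schur (δ ω ε' q : ℝ) (hδ : 0 < δ) (hω : 0 < ω)
    (hε : 1 < ε') (hq0 : 0 < q) (hq2 : q < 2) :
    IsSchur (Polynomial.C ((1 + δ + ω * ε' : ℝ) : ℂ) * Polynomial.X ^ 4
      - Polynomial.C ((4 + 2 * δ + 2 * ω * ε' - (1 + δ + ω) * q : ℝ) : ℂ) *
          Polynomial.X ^ 3
      + Polynomial.C ((6 + 2 * ω * ε' - 2 * q : ℝ) : ℂ) * Polynomial.X ^ 2
      - Polynomial.C ((4 - 2 * δ + 2 * ω * ε' - (1 - δ + ω) * q : ℝ) : ℂ) *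
          Polynomial.X
      + Polynomial.C ((1 - δ + ω * ε' : ℝ) : ℂ)) := by
  intro z hz
  simp only [IsRoot, eval_add, eval_sub, eval_mul, eval_pow, eval_C, eval_X] at hz
  have hz1 : z + 1 ≠ 0 := by
    intro h
    have hzm : z = -1 := by linear_combination h
    rw [hzm] at hz
    have h16 : ((16 + 8*ω*ε' - 4*q - 2*ω*q : ℝ) : ℂ) = 0 := by
      push_cast at hz ⊢
      linear_combination hz
    have h16' : (16 + 8*ω*ε' - 4*q - 2*ω*q : ℝ) = 0 := by exact_mod_cast h16
    nlinarith [mul_pos hω (show (0:ℝ) < ε' - 1 by linarith),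
      mul_nonneg hω.le (show (0:ℝ) ≤ 2 - q by linarith)]
  set s : ℂ := (z - 1) / (z + 1) with hsdef
  have hQ : ((16 - 4*q + 8*ω*ε' - 2*ω*q : ℝ) : ℂ) * s^4 + ((4*δ*(4 - q) : ℝ) : ℂ) * s^3
      + ((4*q + 8*ω*ε' : ℝ) : ℂ) * s^2 + ((4*δ*q : ℝ) : ℂ) * s + ((2*ω*q : ℝ) : ℂ) = 0 := by
    have h4 : (z + 1)^4 ≠ 0 := pow_ne_zero _ hz1
    have e1 : s * (z + 1) = z - 1 := by
      rw [hsdef]; field_simp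
    have hpoly : ((16 - 4*q + 8*ω*ε' - 2*ω*q : ℝ) : ℂ)*(z-1)^4
        + ((4*δ*(4 - q) : ℝ) : ℂ)*(z-1)^3*(z+1) + ((4*q + 8*ω*ε' : ℝ) : ℂ)*(z-1)^2*(z+1)^2
        + ((4*δ*q : ℝ) : ℂ)*(z-1)*(z+1)^3 + ((2*ω*q : ℝ) : ℂ)*(z+1)^4 = 0 := by
      push_cast
      push_cast at hz
      linear_combination (16 : ℂ) * hz
    refine (mul_eq_zero.mp ?_).resolve_right h4
    push_cast
    push_cast at hpoly e1
    linear_combination hpoly + (((16 : ℂ) - 4*(q:ℂ) + 8*(ω:ℂ)*(ε':ℂ) - 2*(ω:ℂ)*(q:ℂ))*((s*(z+1))^3 + (s*(z+1))^2*(z-1) + (s*(z+1))*(z-1)^2 + (z-1)^3)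
      + (4*(δ:ℂ)*(4 - (q:ℂ)))*((s*(z+1))^2 + (s*(z+1))*(z-1) + (z-1)^2)*(z+1)
      + (4*(q:ℂ) + 8*(ω:ℂ)*(ε':ℂ))*((s*(z+1)) + (z-1))*(z+1)^2
      + (4*(δ:ℂ)*(q:ℂ))*(z+1)^3) * e1
  have h1 := congrArg Complex.re hQ
  have h2 := congrArg Complex.im hQ
  simp only [Complex.add_re, Complex.add_im, Complex.mul_re, Complex.mul_im,
    Complex.ofReal_re, Complex.ofReal_im, Complex.zero_re, Complex.zero_im,
    pow_succ, pow_zero, one_mul, mul_one, Complex.one_re, Complex.one_im,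
    zero_mul, mul_zero, sub_zero, zero_sub, zero_add, add_zero, neg_zero] at h1 h2
  set x : ℝ := s.re with hxdef
  set y : ℝ := s.im with hydef
  have hR : (16 - 4*q + 8*ω*ε' - 2*ω*q)*(x^4 - 6*x^2*y^2 + y^4) + (4*δ*(4 - q))*(x^3 - 3*x*y^2) + (4*q + 8*ω*ε')*(x^2 - y^2)
      + (4*δ*q)*x + (2*ω*q) = 0 := by linear_combination h1
  have hyK : y * ((4*(16 - 4*q + 8*ω*ε' - 2*ω*q)*x^3 + 3*(4*δ*(4 - q))*x^2 + 2*(4*q + 8*ω*ε')*x + (4*δ*q)) - (4*(16 - 4*q + 8*ω*ε' - 2*ω*q)*x + (4*δ*(4 - q)))*y^2) = 0 := by linear_combination h2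
  have hb4 : (0:ℝ) < 16 - 4*q + 8*ω*ε' - 2*ω*q := by
    nlinarith [mul_pos hω (show (0:ℝ) < ε' - 1 by linarith),
      mul_nonneg hω.le (show (0:ℝ) ≤ 2 - q by linarith)]
  have hb3 : (0:ℝ) < 4*δ*(4 - q) := by
    have : (0:ℝ) < 4 - q := by linarith
    positivity
  have hb2 : (0:ℝ) < 4*q + 8*ω*ε' := by nlinarith [mul_pos hω (show (0:ℝ) < ε' by linarith)]
  have hb1 : (0:ℝ) < 4*δ*q := by positivity
  have hb0 : (0:ℝ) < 2*ω*q := by positivity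
  have hxlt : x < 0 := by
    by_contra hcon
    push_neg at hcon
    have hx0 : (0:ℝ) ≤ x := hcon
    rcases eq_or_ne y 0 with hy | hy
    · rw [hy] at hR
      nlinarith [mul_nonneg hb4.le (pow_nonneg hx0 4), mul_nonneg hb3.le (pow_nonneg hx0 3),
        mul_nonneg hb2.le (pow_nonneg hx0 2), mul_nonneg hb1.le hx0, hb0, hR]
    · have hK : (4*(16 - 4*q + 8*ω*ε' - 2*ω*q)*x^3 + 3*(4*δ*(4 - q))*x^2 + 2*(4*q + 8*ω*ε')*x + (4*δ*q)) - (4*(16 - 4*q + 8*ω*ε' - 2*ω*q)*x + (4*δ*(4 - q)))*y^2 = 0 := (mul_eq_zero.mp hyK).resolve_left hy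
      have hE : (0:ℝ) ≤ ε' - 1 := by linarith
      have h2q : (0:ℝ) ≤ 2 - q := by linarith
      have h4q : (0:ℝ) ≤ 4 - q := by linarith
      have h8q : (0:ℝ) ≤ 8 - q := by linarith
      have h12q : (0:ℝ) ≤ 12 - q := by linarith
      have h6q : (0:ℝ) ≤ 6 - q := by linarith
      have h3q : (0:ℝ) ≤ 3 - q := by linarith
      have h125 : (0:ℝ) ≤ 12 - 5*q := by linarith
      have h2w : (0:ℝ) ≤ 2 + ω := by linarith
      have hqp2 : (0:ℝ) ≤ q + 2 := by linarith
      have hqp4 : (0:ℝ) ≤ q + 4 := by linarith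
      have hqp8 : (0:ℝ) ≤ q + 8 := by linarith
      have hB34 : (0:ℝ) ≤ 3*(2 - q)^2 + 4 := by positivity
      have t1 : (0:ℝ) ≤ 128 * (x * (δ * ((4 - q) * ((q - ω*(2 - q))^2)))) := mul_nonneg (by norm_num) (mul_nonneg hx0 (mul_nonneg hδ.le (mul_nonneg h4q (sq_nonneg (q - ω*(2 - q))))))
      have t2 : (0:ℝ) ≤ 128 * (x * (δ * (δ * (δ * (q * ((4 - q) * ((4 - q)))))))) := mul_nonneg (by norm_num) (mul_nonneg hx0 (mul_nonneg hδ.le (mul_nonneg hδ.le (mul_nonneg hδ.le (mul_nonneg hq0.le (mul_nonneg h4q (h4q)))))))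
      have t3 : (0:ℝ) ≤ 128 * (x * (x * ((4 - q) * ((2 + ω) * ((q - ω*(2 - q))^2))))) := mul_nonneg (by norm_num) (mul_nonneg hx0 (mul_nonneg hx0 (mul_nonneg h4q (mul_nonneg h2w (sq_nonneg (q - ω*(2 - q)))))))
      have t4 : (0:ℝ) ≤ 768 * (x * (x * (δ * (δ * (q * ((4 - q) * ((4 - q)))))))) := mul_nonneg (by norm_num) (mul_nonneg hx0 (mul_nonneg hx0 (mul_nonneg hδ.le (mul_nonneg hδ.le (mul_nonneg hq0.le (mul_nonneg h4q (h4q)))))))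
      have t5 : (0:ℝ) ≤ 128 * (x * (x * (δ * (δ * (ω * ((4 - q) * ((4 - q) * ((q + 8))))))))) := mul_nonneg (by norm_num) (mul_nonneg hx0 (mul_nonneg hx0 (mul_nonneg hδ.le (mul_nonneg hδ.le (mul_nonneg hω.le (mul_nonneg h4q (mul_nonneg h4q (hqp8))))))))
      have t6 : (0:ℝ) ≤ 2048 * (x * (x * (x * (δ * (q * ((4 - q) * ((4 - q)))))))) := mul_nonneg (by norm_num) (mul_nonneg hx0 (mul_nonneg hx0 (mul_nonneg hx0 (mul_nonneg hδ.le (mul_nonneg hq0.le (mul_nonneg h4q (h4q)))))))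
      have t7 : (0:ℝ) ≤ 1024 * (x * (x * (x * (δ * (ω * ((4 - q) * ((4 - q) * ((q + 4))))))))) := mul_nonneg (by norm_num) (mul_nonneg hx0 (mul_nonneg hx0 (mul_nonneg hx0 (mul_nonneg hδ.le (mul_nonneg hω.le (mul_nonneg h4q (mul_nonneg h4q (hqp4))))))))
      have t8 : (0:ℝ) ≤ 2048 * (x * (x * (x * (δ * (ω * (ω * ((4 - q) * ((4 - q))))))))) := mul_nonneg (by norm_num) (mul_nonneg hx0 (mul_nonneg hx0 (mul_nonneg hx0 (mul_nonneg hδ.le (mul_nonneg hω.le (mul_nonneg hω.le (mul_nonneg h4q (h4q))))))))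
      have t9 : (0:ℝ) ≤ 512 * (x * (x * (x * (δ * (δ * (δ * ((4 - q) * ((4 - q) * ((4 - q)))))))))) := mul_nonneg (by norm_num) (mul_nonneg hx0 (mul_nonneg hx0 (mul_nonneg hx0 (mul_nonneg hδ.le (mul_nonneg hδ.le (mul_nonneg hδ.le (mul_nonneg h4q (mul_nonneg h4q (h4q)))))))))
      have t10 : (0:ℝ) ≤ 2048 * (x * (x * (x * (x * (q * ((4 - q) * ((4 - q)))))))) := mul_nonneg (by norm_num) (mul_nonneg hx0 (mul_nonneg hx0 (mul_nonneg hx0 (mul_nonneg hx0 (mul_nonneg hq0.le (mul_nonneg h4q (h4q)))))))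
      have t11 : (0:ℝ) ≤ 2048 * (x * (x * (x * (x * (ω * ((4 - q) * ((4 - q) * ((q + 2))))))))) := mul_nonneg (by norm_num) (mul_nonneg hx0 (mul_nonneg hx0 (mul_nonneg hx0 (mul_nonneg hx0 (mul_nonneg hω.le (mul_nonneg h4q (mul_nonneg h4q (hqp2))))))))
      have t12 : (0:ℝ) ≤ 512 * (x * (x * (x * (x * (ω * (ω * ((4 - q) * ((4 - q) * ((q + 8)))))))))) := mul_nonneg (by norm_num) (mul_nonneg hx0 (mul_nonneg hx0 (mul_nonneg hx0 (mul_nonneg hx0 (mul_nonneg hω.le (mul_nonneg hω.le (mul_nonneg h4q (mul_nonneg h4q (hqp8)))))))))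
      have t13 : (0:ℝ) ≤ 1024 * (x * (x * (x * (x * (ω * (ω * (ω * ((4 - q) * ((4 - q)))))))))) := mul_nonneg (by norm_num) (mul_nonneg hx0 (mul_nonneg hx0 (mul_nonneg hx0 (mul_nonneg hx0 (mul_nonneg hω.le (mul_nonneg hω.le (mul_nonneg hω.le (mul_nonneg h4q (h4q)))))))))
      have t14 : (0:ℝ) ≤ 3072 * (x * (x * (x * (x * (δ * (δ * ((4 - q) * ((4 - q) * ((4 - q)))))))))) := mul_nonneg (by norm_num) (mul_nonneg hx0 (mul_nonneg hx0 (mul_nonneg hx0 (mul_nonneg hx0 (mul_nonneg hδ.le (mul_nonneg hδ.le (mul_nonneg h4q (mul_nonneg h4q (h4q)))))))))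
      have t15 : (0:ℝ) ≤ 1536 * (x * (x * (x * (x * (δ * (δ * (ω * ((4 - q) * ((4 - q) * ((4 - q))))))))))) := mul_nonneg (by norm_num) (mul_nonneg hx0 (mul_nonneg hx0 (mul_nonneg hx0 (mul_nonneg hx0 (mul_nonneg hδ.le (mul_nonneg hδ.le (mul_nonneg hω.le (mul_nonneg h4q (mul_nonneg h4q (h4q))))))))))
      have t16 : (0:ℝ) ≤ 6144 * (x * (x * (x * (x * (x * (δ * ((4 - q) * ((4 - q) * ((4 - q)))))))))) := mul_nonneg (by norm_num) (mul_nonneg hx0 (mul_nonneg hx0 (mul_nonneg hx0 (mul_nonneg hx0 (mul_nonneg hx0 (mul_nonneg hδ.le (mul_nonneg h4q (mul_nonneg h4q (h4q)))))))))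
      have t17 : (0:ℝ) ≤ 6144 * (x * (x * (x * (x * (x * (δ * (ω * ((4 - q) * ((4 - q) * ((4 - q))))))))))) := mul_nonneg (by norm_num) (mul_nonneg hx0 (mul_nonneg hx0 (mul_nonneg hx0 (mul_nonneg hx0 (mul_nonneg hx0 (mul_nonneg hδ.le (mul_nonneg hω.le (mul_nonneg h4q (mul_nonneg h4q (h4q))))))))))
      have t18 : (0:ℝ) ≤ 1536 * (x * (x * (x * (x * (x * (δ * (ω * (ω * ((4 - q) * ((4 - q) * ((4 - q)))))))))))) := mul_nonneg (by norm_num) (mul_nonneg hx0 (mul_nonneg hx0 (mul_nonneg hx0 (mul_nonneg hx0 (mul_nonneg hx0 (mul_nonneg hδ.le (mul_nonneg hω.le (mul_nonneg hω.le (mul_nonneg h4q (mul_nonneg h4q (h4q)))))))))))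
      have t19 : (0:ℝ) ≤ 4096 * (x * (x * (x * (x * (x * (x * ((4 - q) * ((4 - q) * ((4 - q)))))))))) := mul_nonneg (by norm_num) (mul_nonneg hx0 (mul_nonneg hx0 (mul_nonneg hx0 (mul_nonneg hx0 (mul_nonneg hx0 (mul_nonneg hx0 (mul_nonneg h4q (mul_nonneg h4q (h4q)))))))))
      have t20 : (0:ℝ) ≤ 6144 * (x * (x * (x * (x * (x * (x * (ω * ((4 - q) * ((4 - q) * ((4 - q))))))))))) := mul_nonneg (by norm_num) (mul_nonneg hx0 (mul_nonneg hx0 (mul_nonneg hx0 (mul_nonneg hx0 (mul_nonneg hx0 (mul_nonneg hx0 (mul_nonneg hω.le (mul_nonneg h4q (mul_nonneg h4q (h4q))))))))))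
      have t21 : (0:ℝ) ≤ 3072 * (x * (x * (x * (x * (x * (x * (ω * (ω * ((4 - q) * ((4 - q) * ((4 - q)))))))))))) := mul_nonneg (by norm_num) (mul_nonneg hx0 (mul_nonneg hx0 (mul_nonneg hx0 (mul_nonneg hx0 (mul_nonneg hx0 (mul_nonneg hx0 (mul_nonneg hω.le (mul_nonneg hω.le (mul_nonneg h4q (mul_nonneg h4q (h4q)))))))))))
      have t22 : (0:ℝ) ≤ 512 * (x * (x * (x * (x * (x * (x * (ω * (ω * (ω * ((4 - q) * ((4 - q) * ((4 - q))))))))))))) := mul_nonneg (by norm_num) (mul_nonneg hx0 (mul_nonneg hx0 (mul_nonneg hx0 (mul_nonneg hx0 (mul_nonneg hx0 (mul_nonneg hx0 (mul_nonneg hω.le (mul_nonneg hω.le (mul_nonneg hω.le (mul_nonneg h4q (mul_nonneg h4q (h4q))))))))))))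
      have t23 : (0:ℝ) ≤ 512 * ((ε' - 1) * (x * (x * (ω * (q * ((8 - q))))))) := mul_nonneg (by norm_num) (mul_nonneg hE (mul_nonneg hx0 (mul_nonneg hx0 (mul_nonneg hω.le (mul_nonneg hq0.le (h8q))))))
      have t24 : (0:ℝ) ≤ 512 * ((ε' - 1) * (x * (x * (ω * (ω * ((3*(2 - q)^2 + 4))))))) := mul_nonneg (by norm_num) (mul_nonneg hE (mul_nonneg hx0 (mul_nonneg hx0 (mul_nonneg hω.le (mul_nonneg hω.le (hB34))))))
      have t25 : (0:ℝ) ≤ 1024 * ((ε' - 1) * (x * (x * (ω * (ω * (ω * ((2 - q) * ((3 - q))))))))) := mul_nonneg (by norm_num) (mul_nonneg hE (mul_nonneg hx0 (mul_nonneg hx0 (mul_nonneg hω.le (mul_nonneg hω.le (mul_nonneg hω.le (mul_nonneg h2q (h3q))))))))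
      have t26 : (0:ℝ) ≤ 1024 * ((ε' - 1) * ((ε' - 1) * (x * (x * (ω * (ω * ((q + 4)))))))) := mul_nonneg (by norm_num) (mul_nonneg hE (mul_nonneg hE (mul_nonneg hx0 (mul_nonneg hx0 (mul_nonneg hω.le (mul_nonneg hω.le (hqp4)))))))
      have t27 : (0:ℝ) ≤ 512 * ((ε' - 1) * ((ε' - 1) * (x * (x * (ω * (ω * (ω * ((12 - 5*q))))))))) := mul_nonneg (by norm_num) (mul_nonneg hE (mul_nonneg hE (mul_nonneg hx0 (mul_nonneg hx0 (mul_nonneg hω.le (mul_nonneg hω.le (mul_nonneg hω.le (h125))))))))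
      have t28 : (0:ℝ) ≤ 2048 * ((ε' - 1) * ((ε' - 1) * ((ε' - 1) * (x * (x * (ω * (ω * (ω)))))))) := mul_nonneg (by norm_num) (mul_nonneg hE (mul_nonneg hE (mul_nonneg hE (mul_nonneg hx0 (mul_nonneg hx0 (mul_nonneg hω.le (mul_nonneg hω.le (hω.le))))))))
      have t29 : (0:ℝ) ≤ 4096 * ((ε' - 1) * (x * (x * (x * (x * (ω * ((4 - q) * ((q + 4))))))))) := mul_nonneg (by norm_num) (mul_nonneg hE (mul_nonneg hx0 (mul_nonneg hx0 (mul_nonneg hx0 (mul_nonneg hx0 (mul_nonneg hω.le (mul_nonneg h4q (hqp4))))))))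
      have t30 : (0:ℝ) ≤ 32768 * ((ε' - 1) * (x * (x * (x * (x * (ω * (ω * ((4 - q))))))))) := mul_nonneg (by norm_num) (mul_nonneg hE (mul_nonneg hx0 (mul_nonneg hx0 (mul_nonneg hx0 (mul_nonneg hx0 (mul_nonneg hω.le (mul_nonneg hω.le (h4q))))))))
      have t31 : (0:ℝ) ≤ 1024 * ((ε' - 1) * (x * (x * (x * (x * (ω * (ω * (ω * ((4 - q) * ((12 - q))))))))))) := mul_nonneg (by norm_num) (mul_nonneg hE (mul_nonneg hx0 (mul_nonneg hx0 (mul_nonneg hx0 (mul_nonneg hx0 (mul_nonneg hω.le (mul_nonneg hω.le (mul_nonneg hω.le (mul_nonneg h4q (h12q))))))))))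
      have t32 : (0:ℝ) ≤ 8192 * ((ε' - 1) * ((ε' - 1) * (x * (x * (x * (x * (ω * (ω * ((8 - q)))))))))) := mul_nonneg (by norm_num) (mul_nonneg hE (mul_nonneg hE (mul_nonneg hx0 (mul_nonneg hx0 (mul_nonneg hx0 (mul_nonneg hx0 (mul_nonneg hω.le (mul_nonneg hω.le (h8q)))))))))
      have t33 : (0:ℝ) ≤ 8192 * ((ε' - 1) * ((ε' - 1) * (x * (x * (x * (x * (ω * (ω * (ω * ((6 - q))))))))))) := mul_nonneg (by norm_num) (mul_nonneg hE (mul_nonneg hE (mul_nonneg hx0 (mul_nonneg hx0 (mul_nonneg hx0 (mul_nonneg hx0 (mul_nonneg hω.le (mul_nonneg hω.le (mul_nonneg hω.le (h6q))))))))))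
      have t34 : (0:ℝ) ≤ 16384 * ((ε' - 1) * ((ε' - 1) * ((ε' - 1) * (x * (x * (x * (x * (ω * (ω * (ω)))))))))) := mul_nonneg (by norm_num) (mul_nonneg hE (mul_nonneg hE (mul_nonneg hE (mul_nonneg hx0 (mul_nonneg hx0 (mul_nonneg hx0 (mul_nonneg hx0 (mul_nonneg hω.le (mul_nonneg hω.le (hω.le))))))))))
      have t35 : (0:ℝ) ≤ 24576 * ((ε' - 1) * (x * (x * (x * (x * (x * (x * (ω * ((4 - q) * ((4 - q))))))))))) := mul_nonneg (by norm_num) (mul_nonneg hE (mul_nonneg hx0 (mul_nonneg hx0 (mul_nonneg hx0 (mul_nonneg hx0 (mul_nonneg hx0 (mul_nonneg hx0 (mul_nonneg hω.le (mul_nonneg h4q (h4q))))))))))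
      have t36 : (0:ℝ) ≤ 24576 * ((ε' - 1) * (x * (x * (x * (x * (x * (x * (ω * (ω * ((4 - q) * ((4 - q)))))))))))) := mul_nonneg (by norm_num) (mul_nonneg hE (mul_nonneg hx0 (mul_nonneg hx0 (mul_nonneg hx0 (mul_nonneg hx0 (mul_nonneg hx0 (mul_nonneg hx0 (mul_nonneg hω.le (mul_nonneg hω.le (mul_nonneg h4q (h4q)))))))))))
      have t37 : (0:ℝ) ≤ 6144 * ((ε' - 1) * (x * (x * (x * (x * (x * (x * (ω * (ω * (ω * ((4 - q) * ((4 - q))))))))))))) := mul_nonneg (by norm_num) (mul_nonneg hE (mul_nonneg hx0 (mul_nonneg hx0 (mul_nonneg hx0 (mul_nonneg hx0 (mul_nonneg hx0 (mul_nonneg hx0 (mul_nonneg hω.le (mul_nonneg hω.le (mul_nonneg hω.le (mul_nonneg h4q (h4q))))))))))))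
      have t38 : (0:ℝ) ≤ 49152 * ((ε' - 1) * ((ε' - 1) * (x * (x * (x * (x * (x * (x * (ω * (ω * ((4 - q)))))))))))) := mul_nonneg (by norm_num) (mul_nonneg hE (mul_nonneg hE (mul_nonneg hx0 (mul_nonneg hx0 (mul_nonneg hx0 (mul_nonneg hx0 (mul_nonneg hx0 (mul_nonneg hx0 (mul_nonneg hω.le (mul_nonneg hω.le (h4q)))))))))))
      have t39 : (0:ℝ) ≤ 24576 * ((ε' - 1) * ((ε' - 1) * (x * (x * (x * (x * (x * (x * (ω * (ω * (ω * ((4 - q))))))))))))) := mul_nonneg (by norm_num) (mul_nonneg hE (mul_nonneg hE (mul_nonneg hx0 (mul_nonneg hx0 (mul_nonneg hx0 (mul_nonneg hx0 (mul_nonneg hx0 (mul_nonneg hx0 (mul_nonneg hω.le (mul_nonneg hω.le (mul_nonneg hω.le (h4q))))))))))))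
      have t40 : (0:ℝ) ≤ 32768 * ((ε' - 1) * ((ε' - 1) * ((ε' - 1) * (x * (x * (x * (x * (x * (x * (ω * (ω * (ω)))))))))))) := mul_nonneg (by norm_num) (mul_nonneg hE (mul_nonneg hE (mul_nonneg hE (mul_nonneg hx0 (mul_nonneg hx0 (mul_nonneg hx0 (mul_nonneg hx0 (mul_nonneg hx0 (mul_nonneg hx0 (mul_nonneg hω.le (mul_nonneg hω.le (hω.le))))))))))))
      have t41 : (0:ℝ) ≤ 512 * ((ε' - 1) * (x * (δ * (ω * (q * ((4 - q))))))) := mul_nonneg (by norm_num) (mul_nonneg hE (mul_nonneg hx0 (mul_nonneg hδ.le (mul_nonneg hω.le (mul_nonneg hq0.le (h4q))))))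
      have t42 : (0:ℝ) ≤ 512 * ((ε' - 1) * (x * (δ * (ω * (ω * ((2 - q) * ((4 - q)))))))) := mul_nonneg (by norm_num) (mul_nonneg hE (mul_nonneg hx0 (mul_nonneg hδ.le (mul_nonneg hω.le (mul_nonneg hω.le (mul_nonneg h2q (h4q)))))))
      have t43 : (0:ℝ) ≤ 512 * ((ε' - 1) * ((ε' - 1) * (x * (δ * (ω * (ω * ((4 - q)))))))) := mul_nonneg (by norm_num) (mul_nonneg hE (mul_nonneg hE (mul_nonneg hx0 (mul_nonneg hδ.le (mul_nonneg hω.le (mul_nonneg hω.le (h4q)))))))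
      have t44 : (0:ℝ) ≤ 16384 * ((ε' - 1) * (x * (x * (x * (δ * (ω * ((4 - q)))))))) := mul_nonneg (by norm_num) (mul_nonneg hE (mul_nonneg hx0 (mul_nonneg hx0 (mul_nonneg hx0 (mul_nonneg hδ.le (mul_nonneg hω.le (h4q)))))))
      have t45 : (0:ℝ) ≤ 2048 * ((ε' - 1) * (x * (x * (x * (δ * (ω * (ω * ((4 - q) * ((8 - q)))))))))) := mul_nonneg (by norm_num) (mul_nonneg hE (mul_nonneg hx0 (mul_nonneg hx0 (mul_nonneg hx0 (mul_nonneg hδ.le (mul_nonneg hω.le (mul_nonneg hω.le (mul_nonneg h4q (h8q)))))))))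
      have t46 : (0:ℝ) ≤ 8192 * ((ε' - 1) * ((ε' - 1) * (x * (x * (x * (δ * (ω * (ω * ((4 - q)))))))))) := mul_nonneg (by norm_num) (mul_nonneg hE (mul_nonneg hE (mul_nonneg hx0 (mul_nonneg hx0 (mul_nonneg hx0 (mul_nonneg hδ.le (mul_nonneg hω.le (mul_nonneg hω.le (h4q)))))))))
      have t47 : (0:ℝ) ≤ 24576 * ((ε' - 1) * (x * (x * (x * (x * (x * (δ * (ω * ((4 - q) * ((4 - q))))))))))) := mul_nonneg (by norm_num) (mul_nonneg hE (mul_nonneg hx0 (mul_nonneg hx0 (mul_nonneg hx0 (mul_nonneg hx0 (mul_nonneg hx0 (mul_nonneg hδ.le (mul_nonneg hω.le (mul_nonneg h4q (h4q))))))))))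
      have t48 : (0:ℝ) ≤ 12288 * ((ε' - 1) * (x * (x * (x * (x * (x * (δ * (ω * (ω * ((4 - q) * ((4 - q)))))))))))) := mul_nonneg (by norm_num) (mul_nonneg hE (mul_nonneg hx0 (mul_nonneg hx0 (mul_nonneg hx0 (mul_nonneg hx0 (mul_nonneg hx0 (mul_nonneg hδ.le (mul_nonneg hω.le (mul_nonneg hω.le (mul_nonneg h4q (h4q)))))))))))
      have t49 : (0:ℝ) ≤ 24576 * ((ε' - 1) * ((ε' - 1) * (x * (x * (x * (x * (x * (δ * (ω * (ω * ((4 - q)))))))))))) := mul_nonneg (by norm_num) (mul_nonneg hE (mul_nonneg hE (mul_nonneg hx0 (mul_nonneg hx0 (mul_nonneg hx0 (mul_nonneg hx0 (mul_nonneg hx0 (mul_nonneg hδ.le (mul_nonneg hω.le (mul_nonneg hω.le (h4q)))))))))))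
      have t50 : (0:ℝ) ≤ 256 * ((ε' - 1) * (δ * (δ * (ω * (q * ((2 - q))))))) := mul_nonneg (by norm_num) (mul_nonneg hE (mul_nonneg hδ.le (mul_nonneg hδ.le (mul_nonneg hω.le (mul_nonneg hq0.le (h2q))))))
      have t51 : (0:ℝ) ≤ 512 * ((ε' - 1) * (x * (x * (δ * (δ * (ω * ((4 - q) * ((8 - q))))))))) := mul_nonneg (by norm_num) (mul_nonneg hE (mul_nonneg hx0 (mul_nonneg hx0 (mul_nonneg hδ.le (mul_nonneg hδ.le (mul_nonneg hω.le (mul_nonneg h4q (h8q))))))))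
      have t52 : (0:ℝ) ≤ 6144 * ((ε' - 1) * (x * (x * (x * (x * (δ * (δ * (ω * ((4 - q) * ((4 - q))))))))))) := mul_nonneg (by norm_num) (mul_nonneg hE (mul_nonneg hx0 (mul_nonneg hx0 (mul_nonneg hx0 (mul_nonneg hx0 (mul_nonneg hδ.le (mul_nonneg hδ.le (mul_nonneg hω.le (mul_nonneg h4q (h4q))))))))))
      have t50' : (0:ℝ) < 256 * ((ε' - 1) * (δ * (δ * (ω * (q * ((2 - q))))))) :=
        mul_pos (by norm_num) (mul_pos (show (0:ℝ) < ε' - 1 by linarith) (mul_pos hδ (mul_pos hδ (mul_pos hω (mul_pos hq0 (show (0:ℝ) < 2 - q by linarith))))))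
      have hzero : 128 * (x * (δ * ((4 - q) * ((q - ω*(2 - q))^2)))) +
        128 * (x * (δ * (δ * (δ * (q * ((4 - q) * ((4 - q)))))))) +
        128 * (x * (x * ((4 - q) * ((2 + ω) * ((q - ω*(2 - q))^2))))) +
        768 * (x * (x * (δ * (δ * (q * ((4 - q) * ((4 - q)))))))) +
        128 * (x * (x * (δ * (δ * (ω * ((4 - q) * ((4 - q) * ((q + 8))))))))) +
        2048 * (x * (x * (x * (δ * (q * ((4 - q) * ((4 - q)))))))) +
        1024 * (x * (x * (x * (δ * (ω * ((4 - q) * ((4 - q) * ((q + 4))))))))) +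
        2048 * (x * (x * (x * (δ * (ω * (ω * ((4 - q) * ((4 - q))))))))) +
        512 * (x * (x * (x * (δ * (δ * (δ * ((4 - q) * ((4 - q) * ((4 - q)))))))))) +
        2048 * (x * (x * (x * (x * (q * ((4 - q) * ((4 - q)))))))) +
        2048 * (x * (x * (x * (x * (ω * ((4 - q) * ((4 - q) * ((q + 2))))))))) +
        512 * (x * (x * (x * (x * (ω * (ω * ((4 - q) * ((4 - q) * ((q + 8)))))))))) +
        1024 * (x * (x * (x * (x * (ω * (ω * (ω * ((4 - q) * ((4 - q)))))))))) +
        3072 * (x * (x * (x * (x * (δ * (δ * ((4 - q) * ((4 - q) * ((4 - q)))))))))) +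
        1536 * (x * (x * (x * (x * (δ * (δ * (ω * ((4 - q) * ((4 - q) * ((4 - q))))))))))) +
        6144 * (x * (x * (x * (x * (x * (δ * ((4 - q) * ((4 - q) * ((4 - q)))))))))) +
        6144 * (x * (x * (x * (x * (x * (δ * (ω * ((4 - q) * ((4 - q) * ((4 - q))))))))))) +
        1536 * (x * (x * (x * (x * (x * (δ * (ω * (ω * ((4 - q) * ((4 - q) * ((4 - q)))))))))))) +
        4096 * (x * (x * (x * (x * (x * (x * ((4 - q) * ((4 - q) * ((4 - q)))))))))) +
        6144 * (x * (x * (x * (x * (x * (x * (ω * ((4 - q) * ((4 - q) * ((4 - q))))))))))) +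
        3072 * (x * (x * (x * (x * (x * (x * (ω * (ω * ((4 - q) * ((4 - q) * ((4 - q)))))))))))) +
        512 * (x * (x * (x * (x * (x * (x * (ω * (ω * (ω * ((4 - q) * ((4 - q) * ((4 - q))))))))))))) +
        512 * ((ε' - 1) * (x * (x * (ω * (q * ((8 - q))))))) +
        512 * ((ε' - 1) * (x * (x * (ω * (ω * ((3*(2 - q)^2 + 4))))))) +
        1024 * ((ε' - 1) * (x * (x * (ω * (ω * (ω * ((2 - q) * ((3 - q))))))))) +
        1024 * ((ε' - 1) * ((ε' - 1) * (x * (x * (ω * (ω * ((q + 4)))))))) +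
        512 * ((ε' - 1) * ((ε' - 1) * (x * (x * (ω * (ω * (ω * ((12 - 5*q))))))))) +
        2048 * ((ε' - 1) * ((ε' - 1) * ((ε' - 1) * (x * (x * (ω * (ω * (ω)))))))) +
        4096 * ((ε' - 1) * (x * (x * (x * (x * (ω * ((4 - q) * ((q + 4))))))))) +
        32768 * ((ε' - 1) * (x * (x * (x * (x * (ω * (ω * ((4 - q))))))))) +
        1024 * ((ε' - 1) * (x * (x * (x * (x * (ω * (ω * (ω * ((4 - q) * ((12 - q))))))))))) +
        8192 * ((ε' - 1) * ((ε' - 1) * (x * (x * (x * (x * (ω * (ω * ((8 - q)))))))))) +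
        8192 * ((ε' - 1) * ((ε' - 1) * (x * (x * (x * (x * (ω * (ω * (ω * ((6 - q))))))))))) +
        16384 * ((ε' - 1) * ((ε' - 1) * ((ε' - 1) * (x * (x * (x * (x * (ω * (ω * (ω)))))))))) +
        24576 * ((ε' - 1) * (x * (x * (x * (x * (x * (x * (ω * ((4 - q) * ((4 - q))))))))))) +
        24576 * ((ε' - 1) * (x * (x * (x * (x * (x * (x * (ω * (ω * ((4 - q) * ((4 - q)))))))))))) +
        6144 * ((ε' - 1) * (x * (x * (x * (x * (x * (x * (ω * (ω * (ω * ((4 - q) * ((4 - q))))))))))))) +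
        49152 * ((ε' - 1) * ((ε' - 1) * (x * (x * (x * (x * (x * (x * (ω * (ω * ((4 - q)))))))))))) +
        24576 * ((ε' - 1) * ((ε' - 1) * (x * (x * (x * (x * (x * (x * (ω * (ω * (ω * ((4 - q))))))))))))) +
        32768 * ((ε' - 1) * ((ε' - 1) * ((ε' - 1) * (x * (x * (x * (x * (x * (x * (ω * (ω * (ω)))))))))))) +
        512 * ((ε' - 1) * (x * (δ * (ω * (q * ((4 - q))))))) +
        512 * ((ε' - 1) * (x * (δ * (ω * (ω * ((2 - q) * ((4 - q)))))))) +
        512 * ((ε' - 1) * ((ε' - 1) * (x * (δ * (ω * (ω * ((4 - q)))))))) +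
        16384 * ((ε' - 1) * (x * (x * (x * (δ * (ω * ((4 - q)))))))) +
        2048 * ((ε' - 1) * (x * (x * (x * (δ * (ω * (ω * ((4 - q) * ((8 - q)))))))))) +
        8192 * ((ε' - 1) * ((ε' - 1) * (x * (x * (x * (δ * (ω * (ω * ((4 - q)))))))))) +
        24576 * ((ε' - 1) * (x * (x * (x * (x * (x * (δ * (ω * ((4 - q) * ((4 - q))))))))))) +
        12288 * ((ε' - 1) * (x * (x * (x * (x * (x * (δ * (ω * (ω * ((4 - q) * ((4 - q)))))))))))) +
        24576 * ((ε' - 1) * ((ε' - 1) * (x * (x * (x * (x * (x * (δ * (ω * (ω * ((4 - q)))))))))))) +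
        256 * ((ε' - 1) * (δ * (δ * (ω * (q * ((2 - q))))))) +
        512 * ((ε' - 1) * (x * (x * (δ * (δ * (ω * ((4 - q) * ((8 - q))))))))) +
        6144 * ((ε' - 1) * (x * (x * (x * (x * (δ * (δ * (ω * ((4 - q) * ((4 - q))))))))))) = 0 := by
        linear_combination (-((4*(16 - 4*q + 8*ω*ε' - 2*ω*q)*x + (4*δ*(4 - q)))^2)) * hR + ((6*(16 - 4*q + 8*ω*ε' - 2*ω*q)*x^2 + 3*(4*δ*(4 - q))*x + (4*q + 8*ω*ε'))*(4*(16 - 4*q + 8*ω*ε' - 2*ω*q)*x + (4*δ*(4 - q))) - (16 - 4*q + 8*ω*ε' - 2*ω*q)*(4*(16 - 4*q + 8*ω*ε' - 2*ω*q)*x^3 + 3*(4*δ*(4 - q))*x^2 + 2*(4*q + 8*ω*ε')*x + (4*δ*q)) - (16 - 4*q + 8*ω*ε' - 2*ω*q)*y^2*(4*(16 - 4*q + 8*ω*ε' - 2*ω*q)*x + (4*δ*(4 - q)))) * hK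
      linarith
  have hns : 0 < Complex.normSq (z + 1) := Complex.normSq_pos.mpr hz1
  have hrel : x * Complex.normSq (z + 1) = Complex.normSq z - 1 := by
    have hD : (z.re + 1) * (z.re + 1) + z.im * z.im ≠ 0 := by
      have h := hns
      simp only [Complex.normSq_apply, Complex.add_re, Complex.add_im, Complex.one_re,
        Complex.one_im, add_zero] at h
      exact ne_of_gt h
    rw [hxdef, hsdef, Complex.div_re]
    simp only [Complex.sub_re, Complex.sub_im, Complex.add_re, Complex.add_im,
      Complex.one_re, Complex.one_im, Complex.normSq_apply, add_zero, sub_zero]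
    rw [← add_div, div_mul_cancel₀ _ hD]
    ring
  have hlt : Complex.normSq z < 1 := by nlinarith [mul_neg_of_neg_of_pos hxlt hns]
  have habs : ‖z‖^2 = Complex.normSq z := Complex.sq_norm z
  nlinarith [norm_nonneg z, habs, hlt]
end

section
/- Let δ > 0, ω > 0, ε′ ≥ 1 and 0 < q ≤ 2 be real numbers. Then the Lorentz–Joseph et al. characteristic polynomial φ₀(Z) = (1 + δ + ωε′)Z⁴ − (4 + 2δ + 2ωε′ − (1 + δ + ω)q)Z³ + (6 + 2ωε′ − 2q)Z² − (4 − 2δ + 2ωε′ − (1 − δ + ω)q)Z + (1 − δ + ωε′) is a simple von Neumann polynomial. -/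
set_option maxHeartbeats 1000000

open Polynomial

lemma hurwitz_quartic (b0 b1 b2 b3 b4 : ℝ) (h0 : 0 < b0) (h1 : 0 < b1)
    (h2 : 0 < b2) (h3 : 0 < b3) (h4 : 0 < b4)
    (hT : b0 * b3 ^ 2 + b4 * b1 ^ 2 ≤ b1 * b2 * b3) (s : ℂ)
    (hs : (b4 : ℂ) * s ^ 4 + (b3 : ℂ) * s ^ 3 + (b2 : ℂ) * s ^ 2 + (b1 : ℂ) * s + (b0 : ℂ) = 0) :
    s.re ≤ 0 ∧ (s.re = 0 →
      4 * (b4 : ℂ) * s ^ 3 + 3 * (b3 : ℂ) * s ^ 2 + 2 * (b2 : ℂ) * s + (b1 : ℂ) ≠ 0) := by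
  set x := s.re with hx
  set y := s.im with hy
  have hre := congrArg Complex.re hs
  have him := congrArg Complex.im hs
  simp only [Complex.add_re, Complex.add_im, Complex.mul_re, Complex.mul_im,
    Complex.ofReal_re, Complex.ofReal_im, Complex.zero_re, Complex.zero_im,
    pow_succ, pow_zero, one_mul, Complex.one_re, Complex.one_im] at hre him
  have hR : b4 * (x ^ 4 - 6 * x ^ 2 * y ^ 2 + y ^ 4) + b3 * (x ^ 3 - 3 * x * y ^ 2)
      + b2 * (x ^ 2 - y ^ 2) + b1 * x + b0 = 0 := by linear_combination hre
  have hI : y * (4 * b4 * x * (x ^ 2 - y ^ 2) + b3 * (3 * x ^ 2 - y ^ 2) + 2 * b2 * x + b1)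
      = 0 := by linear_combination him
  have hK : 4 * b0 * b4 ≤ b2 ^ 2 := by
    have e1 : 4 * (b0 * b3 ^ 2) * (b4 * b1 ^ 2) ≤ (b0 * b3 ^ 2 + b4 * b1 ^ 2) ^ 2 := by
      nlinarith [sq_nonneg (b0 * b3 ^ 2 - b4 * b1 ^ 2)]
    have e2 : (b0 * b3 ^ 2 + b4 * b1 ^ 2) ^ 2 ≤ (b1 * b2 * b3) ^ 2 := by
      nlinarith [mul_pos h0 (mul_pos h3 h3), mul_pos h4 (mul_pos h1 h1)]
    have e3 : 4 * b0 * b4 * (b1 ^ 2 * b3 ^ 2) ≤ b2 ^ 2 * (b1 ^ 2 * b3 ^ 2) := by nlinarith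
    have hpos : 0 < b1 ^ 2 * b3 ^ 2 := by positivity
    exact le_of_mul_le_mul_right e3 hpos
  have hxle : x ≤ 0 := by
    by_contra hxpos
    push_neg at hxpos
    rcases eq_or_ne y 0 with hy0 | hy0
    · rw [hy0] at hR; nlinarith [pow_pos hxpos 4, pow_pos hxpos 3, pow_pos hxpos 2]
    · have hA : 4 * b4 * x * (x ^ 2 - y ^ 2) + b3 * (3 * x ^ 2 - y ^ 2) + 2 * b2 * x + b1 = 0 :=
        (mul_eq_zero.mp hI).resolve_left hy0
      have hA' : (4 * b4 * x + b3) * y ^ 2 = 4 * b4 * x ^ 3 + 3 * b3 * x ^ 2 + 2 * b2 * x + b1 := by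
        linear_combination -hA
      have hF : b4 * (4 * b4 * x ^ 3 + 3 * b3 * x ^ 2 + 2 * b2 * x + b1) ^ 2
          - (6 * b4 * x ^ 2 + 3 * b3 * x + b2) * (4 * b4 * x ^ 3 + 3 * b3 * x ^ 2 + 2 * b2 * x + b1)
            * (4 * b4 * x + b3)
          + (b4 * x ^ 4 + b3 * x ^ 3 + b2 * x ^ 2 + b1 * x + b0) * (4 * b4 * x + b3) ^ 2 = 0 := by
        linear_combination ((4 * b4 * x + b3) ^ 2) * hR +
          ((6 * b4 * x ^ 2 + 3 * b3 * x + b2) * (4 * b4 * x + b3)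
            - b4 * ((4 * b4 * x ^ 3 + 3 * b3 * x ^ 2 + 2 * b2 * x + b1) + (4 * b4 * x + b3) * y ^ 2)) * hA'
      have hid : b4 * (4 * b4 * x ^ 3 + 3 * b3 * x ^ 2 + 2 * b2 * x + b1) ^ 2
          - (6 * b4 * x ^ 2 + 3 * b3 * x + b2) * (4 * b4 * x ^ 3 + 3 * b3 * x ^ 2 + 2 * b2 * x + b1)
            * (4 * b4 * x + b3)
          + (b4 * x ^ 4 + b3 * x ^ 3 + b2 * x ^ 2 + b1 * x + b0) * (4 * b4 * x + b3) ^ 2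
          = -(b1 * b2 * b3 - b0 * b3 ^ 2 - b4 * b1 ^ 2)
            - 2 * b3 * (b2 ^ 2 - 4 * b0 * b4) * x - 2 * b1 * b3 ^ 2 * x
            - 4 * b4 * (b2 ^ 2 - 4 * b0 * b4) * x ^ 2 - (8 * b2 * b3 ^ 2 + 4 * b1 * b3 * b4) * x ^ 2
            - (8 * b3 ^ 3 + 32 * b2 * b3 * b4) * x ^ 3
            - (48 * b3 ^ 2 * b4 + 32 * b2 * b4 ^ 2) * x ^ 4
            - 96 * b3 * b4 ^ 2 * x ^ 5 - 64 * b4 ^ 3 * x ^ 6 := by ring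
      rw [hid] at hF
      have hKx : 0 ≤ b2 ^ 2 - 4 * b0 * b4 := by linarith
      nlinarith [mul_pos hxpos (mul_pos h1 (mul_pos h3 h3)),
        mul_nonneg (mul_nonneg h3.le hKx) hxpos.le,
        mul_nonneg (mul_nonneg h4.le hKx) (sq_nonneg x),
        mul_pos (mul_pos hxpos hxpos) (mul_pos h2 (mul_pos h3 h3)),
        mul_pos (mul_pos hxpos hxpos) (mul_pos h1 (mul_pos h3 h4)),
        mul_pos (mul_pos (mul_pos hxpos hxpos) hxpos) (mul_pos h3 (mul_pos h3 h3)),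
        mul_pos (mul_pos (mul_pos hxpos hxpos) hxpos) (mul_pos h2 (mul_pos h3 h4)),
        mul_pos (pow_pos hxpos 4) (mul_pos h3 (mul_pos h3 h4)),
        mul_pos (pow_pos hxpos 4) (mul_pos h2 (mul_pos h4 h4)),
        mul_pos (pow_pos hxpos 5) (mul_pos h3 (mul_pos h4 h4)),
        mul_pos (pow_pos hxpos 6) (mul_pos h4 (mul_pos h4 h4))]
  refine ⟨hxle, fun hx0 => ?_⟩
  have hy0 : y ≠ 0 := by
    intro hy0
    rw [hx0, hy0] at hR; nlinarith
  have hA : 4 * b4 * x * (x ^ 2 - y ^ 2) + b3 * (3 * x ^ 2 - y ^ 2) + 2 * b2 * x + b1 = 0 :=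
    (mul_eq_zero.mp hI).resolve_left hy0
  have hb : b3 * y ^ 2 = b1 := by
    rw [hx0] at hA; linear_combination -hA
  intro hc
  have hcre := congrArg Complex.re hc
  simp only [Complex.add_re, Complex.mul_re, Complex.mul_im, Complex.ofReal_re,
    Complex.ofReal_im, Complex.zero_re, pow_succ, pow_zero, one_mul,
    Complex.one_re, Complex.one_im, Complex.add_im,
    Complex.re_ofNat, Complex.im_ofNat] at hcre
  have hRc : 4 * b4 * (x ^ 3 - 3 * x * y ^ 2) + 3 * b3 * (x ^ 2 - y ^ 2) + 2 * b2 * x + b1 = 0 := by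
    linear_combination hcre
  rw [hx0] at hRc
  nlinarith

/-- Lorentz–Joseph et al. (an-harmonic case): for `δ > 0`, `ω > 0`, `ε′ ≥ 1` and
`0 < q ≤ 2` the characteristic polynomial is a simple von Neumann polynomial. -/
theorem lorentz_joseph_vonNeumann (δ ω ε' q : ℝ) (hδ : 0 < δ) (hω : 0 < ω)
    (hε : 1 ≤ ε') (hq0 : 0 < q) (hq2 : q ≤ 2) :
    IsSimpleVonNeumann (Polynomial.C ((1 + δ + ω * ε' : ℝ) : ℂ) * Polynomial.X ^ 4
      - Polynomial.C ((4 + 2 * δ + 2 * ω * ε' - (1 + δ + ω) * q : ℝ) : ℂ) *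
          Polynomial.X ^ 3
      + Polynomial.C ((6 + 2 * ω * ε' - 2 * q : ℝ) : ℂ) * Polynomial.X ^ 2
      - Polynomial.C ((4 - 2 * δ + 2 * ω * ε' - (1 - δ + ω) * q : ℝ) : ℂ) *
          Polynomial.X
      + Polynomial.C ((1 - δ + ω * ε' : ℝ) : ℂ)) := by
  intro z hroot
  have hz : ((1 + δ + ω * ε' : ℝ) : ℂ) * z ^ 4
      - ((4 + 2 * δ + 2 * ω * ε' - (1 + δ + ω) * q : ℝ) : ℂ) * z ^ 3
      + ((6 + 2 * ω * ε' - 2 * q : ℝ) : ℂ) * z ^ 2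
      - ((4 - 2 * δ + 2 * ω * ε' - (1 - δ + ω) * q : ℝ) : ℂ) * z
      + ((1 - δ + ω * ε' : ℝ) : ℂ) = 0 := by
    simpa [Polynomial.IsRoot, Polynomial.eval_add, Polynomial.eval_sub, Polynomial.eval_mul,
      Polynomial.eval_pow, Polynomial.eval_C, Polynomial.eval_X] using hroot
  have hz1 : z + 1 ≠ 0 := by
    intro h
    have hzm : z = -1 := by linear_combination h
    rw [hzm] at hz
    have h2 : ((16 + 8 * (ω * ε') - (4 + 2 * ω) * q : ℝ) : ℂ) = 0 := by
      push_cast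
      push_cast at hz
      linear_combination hz
    have h3 : (16 + 8 * (ω * ε') - (4 + 2 * ω) * q : ℝ) = 0 := by exact_mod_cast h2
    nlinarith [mul_le_mul_of_nonneg_left hq2 hω.le]
  set s : ℂ := (z - 1) / (z + 1) with hs_def
  have h4 : ((z + 1) : ℂ) ^ 4 ≠ 0 := pow_ne_zero _ hz1
  have hcl : ((16 - 4 * q - 2 * ω * q + 8 * ω * ε' : ℝ) : ℂ) * (z - 1) ^ 4
      + ((16 * δ - 4 * δ * q : ℝ) : ℂ) * (z - 1) ^ 3 * (z + 1)
      + ((4 * q + 8 * ω * ε' : ℝ) : ℂ) * (z - 1) ^ 2 * (z + 1) ^ 2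
      + ((4 * δ * q : ℝ) : ℂ) * (z - 1) * (z + 1) ^ 3
      + ((2 * ω * q : ℝ) : ℂ) * (z + 1) ^ 4 = 0 := by
    push_cast
    push_cast at hz
    linear_combination (16 : ℂ) * hz
  have e1 : s * (z + 1) = z - 1 := div_mul_cancel₀ _ hz1
  have e2 : s ^ 2 * (z + 1) ^ 2 = (z - 1) ^ 2 := by rw [← mul_pow, e1]
  have e3 : s ^ 3 * (z + 1) ^ 3 = (z - 1) ^ 3 := by rw [← mul_pow, e1]
  have e4 : s ^ 4 * (z + 1) ^ 4 = (z - 1) ^ 4 := by rw [← mul_pow, e1]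
  have hψ : ((16 - 4 * q - 2 * ω * q + 8 * ω * ε' : ℝ) : ℂ) * s ^ 4
      + ((16 * δ - 4 * δ * q : ℝ) : ℂ) * s ^ 3
      + ((4 * q + 8 * ω * ε' : ℝ) : ℂ) * s ^ 2
      + ((4 * δ * q : ℝ) : ℂ) * s + ((2 * ω * q : ℝ) : ℂ) = 0 := by
    have hmul : (((16 - 4 * q - 2 * ω * q + 8 * ω * ε' : ℝ) : ℂ) * s ^ 4
        + ((16 * δ - 4 * δ * q : ℝ) : ℂ) * s ^ 3
        + ((4 * q + 8 * ω * ε' : ℝ) : ℂ) * s ^ 2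
        + ((4 * δ * q : ℝ) : ℂ) * s + ((2 * ω * q : ℝ) : ℂ)) * (z + 1) ^ 4 = 0 := by
      linear_combination hcl + ((16 - 4 * q - 2 * ω * q + 8 * ω * ε' : ℝ) : ℂ) * e4
        + ((16 * δ - 4 * δ * q : ℝ) : ℂ) * (z + 1) * e3
        + ((4 * q + 8 * ω * ε' : ℝ) : ℂ) * (z + 1) ^ 2 * e2
        + ((4 * δ * q : ℝ) : ℂ) * (z + 1) ^ 3 * e1
    exact (mul_eq_zero.mp hmul).resolve_right h4
  -- positivity of the transformed coefficients and the Routh condition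
  have hb0 : (0 : ℝ) < 2 * ω * q := by positivity
  have hb1 : (0 : ℝ) < 4 * δ * q := by positivity
  have hb2 : (0 : ℝ) < 4 * q + 8 * ω * ε' := by nlinarith
  have hb3 : (0 : ℝ) < 16 * δ - 4 * δ * q := by nlinarith
  have hb4 : (0 : ℝ) < 16 - 4 * q - 2 * ω * q + 8 * ω * ε' := by nlinarith
  have hT : (2 * ω * q) * (16 * δ - 4 * δ * q) ^ 2
      + (16 - 4 * q - 2 * ω * q + 8 * ω * ε') * (4 * δ * q) ^ 2
      ≤ (4 * δ * q) * (4 * q + 8 * ω * ε') * (16 * δ - 4 * δ * q) := by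
    nlinarith [mul_nonneg (mul_nonneg (mul_nonneg (mul_nonneg
      (mul_nonneg (sq_nonneg δ) hω.le) hq0.le) (sub_nonneg.mpr hε)) (sub_nonneg.mpr hq2)) (by norm_num : (0:ℝ) ≤ 256)]
  have hkey := hurwitz_quartic (2 * ω * q) (4 * δ * q) (4 * q + 8 * ω * ε')
    (16 * δ - 4 * δ * q) (16 - 4 * q - 2 * ω * q + 8 * ω * ε')
    hb0 hb1 hb2 hb3 hb4 hT s hψ
  -- |z| ≤ 1 from Re s ≤ 0
  have hnsq : 0 < Complex.normSq (z + 1) := Complex.normSq_pos.mpr hz1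
  have hsre : s.re = (Complex.normSq z - 1) / Complex.normSq (z + 1) := by
    rw [hs_def, Complex.div_re]
    simp only [Complex.sub_re, Complex.sub_im, Complex.add_re, Complex.add_im,
      Complex.one_re, Complex.one_im, Complex.normSq_apply]
    ring
  have habs : ‖z‖ ≤ 1 := by
    have h1 : Complex.normSq z - 1 ≤ 0 := by
      by_contra hgt
      push_neg at hgt
      have : 0 < s.re := by rw [hsre]; positivity
      linarith [hkey.1]
    have h2 : Complex.normSq z ≤ 1 := by linarith
    rw [Complex.norm_def]
    calc Real.sqrt (Complex.normSq z) ≤ Real.sqrt 1 := Real.sqrt_le_sqrt h2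
      _ = 1 := Real.sqrt_one
  refine ⟨habs, fun habs1 => ?_⟩
  -- boundary: |z| = 1
  have hnz : Complex.normSq z = 1 := by
    have := Complex.sq_norm z
    rw [habs1] at this
    simpa using this.symm
  have hre0 : s.re = 0 := by rw [hsre, hnz]; simp
  have hD : 4 * ((16 - 4 * q - 2 * ω * q + 8 * ω * ε' : ℝ) : ℂ) * s ^ 3
      + 3 * ((16 * δ - 4 * δ * q : ℝ) : ℂ) * s ^ 2
      + 2 * ((4 * q + 8 * ω * ε' : ℝ) : ℂ) * s + ((4 * δ * q : ℝ) : ℂ) ≠ 0 := hkey.2 hre0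
  -- derivative of φ at z is nonzero
  have hP3 : (4 * ((16 - 4 * q - 2 * ω * q + 8 * ω * ε' : ℝ) : ℂ) * (z - 1) ^ 3
      + 3 * ((16 * δ - 4 * δ * q : ℝ) : ℂ) * (z - 1) ^ 2 * (z + 1)
      + 2 * ((4 * q + 8 * ω * ε' : ℝ) : ℂ) * (z - 1) * (z + 1) ^ 2
      + ((4 * δ * q : ℝ) : ℂ) * (z + 1) ^ 3) ≠ 0 := by
    have heq : (4 * ((16 - 4 * q - 2 * ω * q + 8 * ω * ε' : ℝ) : ℂ) * s ^ 3
        + 3 * ((16 * δ - 4 * δ * q : ℝ) : ℂ) * s ^ 2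
        + 2 * ((4 * q + 8 * ω * ε' : ℝ) : ℂ) * s + ((4 * δ * q : ℝ) : ℂ)) * (z + 1) ^ 3
        = 4 * ((16 - 4 * q - 2 * ω * q + 8 * ω * ε' : ℝ) : ℂ) * (z - 1) ^ 3
        + 3 * ((16 * δ - 4 * δ * q : ℝ) : ℂ) * (z - 1) ^ 2 * (z + 1)
        + 2 * ((4 * q + 8 * ω * ε' : ℝ) : ℂ) * (z - 1) * (z + 1) ^ 2
        + ((4 * δ * q : ℝ) : ℂ) * (z + 1) ^ 3 := by
      linear_combination 4 * ((16 - 4 * q - 2 * ω * q + 8 * ω * ε' : ℝ) : ℂ) * e3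
        + 3 * ((16 * δ - 4 * δ * q : ℝ) : ℂ) * (z + 1) * e2
        + 2 * ((4 * q + 8 * ω * ε' : ℝ) : ℂ) * (z + 1) ^ 2 * e1
    rw [← heq]
    exact mul_ne_zero hD (pow_ne_zero _ hz1)
  have hφ' : 4 * ((1 + δ + ω * ε' : ℝ) : ℂ) * z ^ 3
      - 3 * ((4 + 2 * δ + 2 * ω * ε' - (1 + δ + ω) * q : ℝ) : ℂ) * z ^ 2
      + 2 * ((6 + 2 * ω * ε' - 2 * q : ℝ) : ℂ) * z
      - ((4 - 2 * δ + 2 * ω * ε' - (1 - δ + ω) * q : ℝ) : ℂ) ≠ 0 := by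
    intro h0
    apply hP3
    have hder : 8 * (4 * ((1 + δ + ω * ε' : ℝ) : ℂ) * z ^ 3
        - 3 * ((4 + 2 * δ + 2 * ω * ε' - (1 + δ + ω) * q : ℝ) : ℂ) * z ^ 2
        + 2 * ((6 + 2 * ω * ε' - 2 * q : ℝ) : ℂ) * z
        - ((4 - 2 * δ + 2 * ω * ε' - (1 - δ + ω) * q : ℝ) : ℂ)) * (z + 1)
        = 2 * (((16 - 4 * q - 2 * ω * q + 8 * ω * ε' : ℝ) : ℂ) * (z - 1) ^ 4
          + ((16 * δ - 4 * δ * q : ℝ) : ℂ) * (z - 1) ^ 3 * (z + 1)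
          + ((4 * q + 8 * ω * ε' : ℝ) : ℂ) * (z - 1) ^ 2 * (z + 1) ^ 2
          + ((4 * δ * q : ℝ) : ℂ) * (z - 1) * (z + 1) ^ 3
          + ((2 * ω * q : ℝ) : ℂ) * (z + 1) ^ 4)
        + (4 * ((16 - 4 * q - 2 * ω * q + 8 * ω * ε' : ℝ) : ℂ) * (z - 1) ^ 3
          + 3 * ((16 * δ - 4 * δ * q : ℝ) : ℂ) * (z - 1) ^ 2 * (z + 1)
          + 2 * ((4 * q + 8 * ω * ε' : ℝ) : ℂ) * (z - 1) * (z + 1) ^ 2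
          + ((4 * δ * q : ℝ) : ℂ) * (z + 1) ^ 3) := by
      push_cast
      ring
    rw [h0, hcl] at hder
    linear_combination -hder
  -- factorization argument for root multiplicity
  set ca : ℂ := ((1 + δ + ω * ε' : ℝ) : ℂ) with hca
  set cb : ℂ := ((4 + 2 * δ + 2 * ω * ε' - (1 + δ + ω) * q : ℝ) : ℂ) with hcb
  set cc : ℂ := ((6 + 2 * ω * ε' - 2 * q : ℝ) : ℂ) with hcc
  set cd : ℂ := ((4 - 2 * δ + 2 * ω * ε' - (1 - δ + ω) * q : ℝ) : ℂ) with hcd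
  set ce : ℂ := ((1 - δ + ω * ε' : ℝ) : ℂ) with hce
  set Q : Polynomial ℂ := Polynomial.C ca * Polynomial.X ^ 3
    + Polynomial.C (ca * z - cb) * Polynomial.X ^ 2
    + Polynomial.C (ca * z ^ 2 - cb * z + cc) * Polynomial.X
    + Polynomial.C (ca * z ^ 3 - cb * z ^ 2 + cc * z - cd) with hQ
  have h0C : Polynomial.C (ca * z ^ 4 - cb * z ^ 3 + cc * z ^ 2 - cd * z + ce)
      = (0 : Polynomial ℂ) := by
    rw [show ca * z ^ 4 - cb * z ^ 3 + cc * z ^ 2 - cd * z + ce = 0 from by linear_combination hz]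
    exact map_zero _
  have hfac : Polynomial.C ca * Polynomial.X ^ 4 - Polynomial.C cb * Polynomial.X ^ 3
      + Polynomial.C cc * Polynomial.X ^ 2 - Polynomial.C cd * Polynomial.X
      + Polynomial.C ce = (Polynomial.X - Polynomial.C z) * Q := by
    simp only [hQ, map_sub, map_add, map_mul, map_pow] at h0C ⊢
    linear_combination h0C
  have hQz : Polynomial.eval z Q ≠ 0 := by
    have : Polynomial.eval z Q = 4 * ca * z ^ 3 - 3 * cb * z ^ 2 + 2 * cc * z - cd := by
      simp only [hQ, Polynomial.eval_add, Polynomial.eval_mul, Polynomial.eval_pow,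
        Polynomial.eval_C, Polynomial.eval_X]
      ring
    rw [this]
    exact hφ'
  have hQne : Q ≠ 0 := fun h => hQz (by rw [h]; simp)
  rw [hfac, Polynomial.rootMultiplicity_mul (mul_ne_zero (Polynomial.X_sub_C_ne_zero z) hQne)]
  rw [Polynomial.rootMultiplicity_X_sub_C_self,
    Polynomial.rootMultiplicity_eq_zero (fun h => hQz h)]
end

section
/- Let ω > 0, ε′ > 1 and 0 < q ≤ 2 be real numbers. Then the polynomial φ₀(Z) = (1 + ωε′)Z⁴ − (4 + 2ωε′ − (1 + ω)q)Z³ + (6 + 2ωε′ − 2q)Z² − (4 + 2ωε′ − (1 + ω)q)Z + (1 + ωε′) (the Lorentz–Joseph et al. characteristic polynomial in the harmonic case δ = 0) is a simple von Neumann polynomial. -/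
open Polynomial

private lemma abs_aux (x t : ℝ) (h : x ^ 2 + t ^ 2 = 1) :
    ‖(x : ℂ) + (t : ℂ) * Complex.I‖ = 1 := by
  rw [Complex.norm_def, Complex.normSq_add_mul_I, h, Real.sqrt_one]

set_option maxHeartbeats 1000000 in
/-- Lorentz–Joseph et al. (harmonic case `δ = 0`): for `ω > 0`, `ε′ > 1` and
`0 < q ≤ 2` the characteristic polynomial is a simple von Neumann polynomial. -/
theorem lorentz_joseph_harmonic_vonNeumann (ω ε' q : ℝ) (hω : 0 < ω)
    (hε : 1 < ε') (hq0 : 0 < q) (hq2 : q ≤ 2) :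
    IsSimpleVonNeumann (Polynomial.C ((1 + ω * ε' : ℝ) : ℂ) * Polynomial.X ^ 4
      - Polynomial.C ((4 + 2 * ω * ε' - (1 + ω) * q : ℝ) : ℂ) * Polynomial.X ^ 3
      + Polynomial.C ((6 + 2 * ω * ε' - 2 * q : ℝ) : ℂ) * Polynomial.X ^ 2
      - Polynomial.C ((4 + 2 * ω * ε' - (1 + ω) * q : ℝ) : ℂ) * Polynomial.X
      + Polynomial.C ((1 + ω * ε' : ℝ) : ℂ)) := by
  set a : ℝ := 1 + ω * ε' with ha_def
  set b : ℝ := 4 + 2 * ω * ε' - (1 + ω) * q with hb_def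
  set c : ℝ := 6 + 2 * ω * ε' - 2 * q with hc_def
  have ha : (0:ℝ) < a := by rw [ha_def]; nlinarith
  have hb : (0:ℝ) < b := by rw [hb_def]; nlinarith
  have hD : 0 < b ^ 2 - 4 * a * (4 - 2 * q) := by
    rw [ha_def, hb_def]
    nlinarith [sq_nonneg (2*(1+ω)^2*q + 4*ω*ε' - 4*ω^2*ε' - 8*ω),
      mul_pos (mul_pos (mul_pos hω hω) (sub_pos.mpr hε)) (by nlinarith : (0:ℝ) < ω*ε'+1),
      sq_nonneg (1+ω)]
  set s : ℝ := Real.sqrt (b ^ 2 - 4 * a * (4 - 2 * q)) with hs_def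
  have hs2 : s ^ 2 = b ^ 2 - 4 * a * (4 - 2 * q) := Real.sq_sqrt hD.le
  have hspos : 0 < s := Real.sqrt_pos.mpr hD
  set w₁ : ℝ := (b - s) / (2 * a) with hw1_def
  set w₂ : ℝ := (b + s) / (2 * a) with hw2_def
  have h2a : (0:ℝ) < 2 * a := by linarith
  have hw2lt : w₂ < 2 := by
    rw [hw2_def, div_lt_iff₀ h2a]
    have h4ab : 0 < 4 * a - b := by rw [ha_def, hb_def]; nlinarith
    have hlt : s < 4 * a - b := by
      refine lt_of_pow_lt_pow_left₀ 2 h4ab.le ?_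
      rw [hs2, ha_def, hb_def]
      nlinarith [mul_pos hω hq0, mul_pos (mul_pos hω hq0) (mul_pos hω (show (0:ℝ) < ε' by linarith))]
    linarith
  have hw1gt : -2 < w₁ := by
    rw [hw1_def, lt_div_iff₀ h2a]
    have hlt : s < b + 4 * a := by
      refine lt_of_pow_lt_pow_left₀ 2 (by linarith) ?_
      rw [hs2]
      nlinarith [mul_pos ha hb, mul_nonneg ha.le (by linarith : (0:ℝ) ≤ 4 - 2*q), mul_pos ha ha]
    linarith
  have hw12 : w₁ < w₂ := by
    rw [hw1_def, hw2_def, div_lt_div_iff₀ h2a h2a]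
    nlinarith [mul_pos hspos ha]
  have hw1lt : w₁ < 2 := hw12.trans hw2lt
  have hw2gt : -2 < w₂ := hw1gt.trans hw12
  have hsum : a * (w₁ + w₂) = b := by
    rw [hw1_def, hw2_def]; field_simp; ring
  have hprod : a * (w₁ * w₂) = 4 - 2 * q := by
    rw [hw1_def, hw2_def, div_mul_div_comm, mul_div_assoc', div_eq_iff (mul_pos h2a h2a).ne']
    linear_combination (-a) * hs2
  have hcrel : c = a * (w₁ * w₂) + 2 * a := by
    rw [hprod, hc_def, ha_def]; ring
  have h1 : 0 < 1 - (w₁/2)^2 := by nlinarith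
  have h2 : 0 < 1 - (w₂/2)^2 := by nlinarith
  set s₁ : ℝ := Real.sqrt (1 - (w₁/2)^2) with hs1_def
  set s₂ : ℝ := Real.sqrt (1 - (w₂/2)^2) with hs2_def
  have hs1pos : 0 < s₁ := Real.sqrt_pos.mpr h1
  have hs2pos : 0 < s₂ := Real.sqrt_pos.mpr h2
  have hs1sq : s₁ ^ 2 = 1 - (w₁/2)^2 := Real.sq_sqrt h1.le
  have hs2sq : s₂ ^ 2 = 1 - (w₂/2)^2 := Real.sq_sqrt h2.le
  set z₁ : ℂ := ((w₁/2 : ℝ) : ℂ) + (s₁ : ℂ) * Complex.I with hz1_def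
  set z₁' : ℂ := ((w₁/2 : ℝ) : ℂ) + ((-s₁ : ℝ) : ℂ) * Complex.I with hz1'_def
  set z₂ : ℂ := ((w₂/2 : ℝ) : ℂ) + (s₂ : ℂ) * Complex.I with hz2_def
  set z₂' : ℂ := ((w₂/2 : ℝ) : ℂ) + ((-s₂ : ℝ) : ℂ) * Complex.I with hz2'_def
  -- cast versions
  have hs1C : ((s₁ : ℂ)) ^ 2 = 1 - ((w₁ : ℂ)/2) ^ 2 := by exact_mod_cast hs1sq
  have hs2C : ((s₂ : ℂ)) ^ 2 = 1 - ((w₂ : ℂ)/2) ^ 2 := by exact_mod_cast hs2sq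
  have hbC : ((b : ℝ) : ℂ) = (a : ℂ) * ((w₁ : ℂ) + (w₂ : ℂ)) := by exact_mod_cast hsum.symm
  have hcC : ((c : ℝ) : ℂ) = (a : ℂ) * ((w₁ : ℂ) * (w₂ : ℂ)) + 2 * (a : ℂ) := by
    exact_mod_cast hcrel
  -- factorization
  have hq1 : ∀ x : ℂ, (x - z₁) * (x - z₁') = x ^ 2 - (w₁ : ℂ) * x + 1 := by
    intro x
    rw [hz1_def, hz1'_def]
    push_cast
    linear_combination (-(s₁:ℂ)^2) * Complex.I_sq + hs1C
  have hq2' : ∀ x : ℂ, (x - z₂) * (x - z₂') = x ^ 2 - (w₂ : ℂ) * x + 1 := by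
    intro x
    rw [hz2_def, hz2'_def]
    push_cast
    linear_combination (-(s₂:ℂ)^2) * Complex.I_sq + hs2C
  have hfact : (Polynomial.C ((a : ℝ) : ℂ) * Polynomial.X ^ 4
      - Polynomial.C ((b : ℝ) : ℂ) * Polynomial.X ^ 3
      + Polynomial.C ((c : ℝ) : ℂ) * Polynomial.X ^ 2
      - Polynomial.C ((b : ℝ) : ℂ) * Polynomial.X
      + Polynomial.C ((a : ℝ) : ℂ)) =
      Polynomial.C ((a : ℝ) : ℂ) * (X - Polynomial.C z₁) * (X - Polynomial.C z₁')
        * (X - Polynomial.C z₂) * (X - Polynomial.C z₂') := by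
    apply Polynomial.funext
    intro x
    simp only [eval_add, eval_sub, eval_mul, eval_pow, eval_X, eval_C]
    have e1 := hq1 x
    have e2 := hq2' x
    calc ((a:ℝ):ℂ) * x ^ 4 - ((b:ℝ):ℂ) * x ^ 3 + ((c:ℝ):ℂ) * x ^ 2 - ((b:ℝ):ℂ) * x + ((a:ℝ):ℂ)
        = ((a:ℝ):ℂ) * ((x ^ 2 - (w₁:ℂ) * x + 1) * (x ^ 2 - (w₂:ℂ) * x + 1)) := by
          linear_combination (-x^3 - x) * hbC + x^2 * hcC
      _ = ((a:ℝ):ℂ) * (x - z₁) * (x - z₁') * (x - z₂) * (x - z₂') := by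
          rw [← e1, ← e2]; ring
  have haC : ((a : ℝ) : ℂ) ≠ 0 := by
    simpa using ha.ne'
  -- absolute values
  have habs1 : ‖z₁‖ = 1 := by
    rw [hz1_def]; exact abs_aux _ _ (by linarith [hs1sq])
  have habs1' : ‖z₁'‖ = 1 := by
    rw [hz1'_def]; exact abs_aux _ _ (by rw [neg_pow]; simp; linarith [hs1sq])
  have habs2 : ‖z₂‖ = 1 := by
    rw [hz2_def]; exact abs_aux _ _ (by linarith [hs2sq])
  have habs2' : ‖z₂'‖ = 1 := by
    rw [hz2'_def]; exact abs_aux _ _ (by rw [neg_pow]; simp; linarith [hs2sq])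
  -- distinctness
  have him : ∀ (x t : ℝ), (((x : ℝ) : ℂ) + ((t : ℝ) : ℂ) * Complex.I).im = t := by
    intro x t; simp
  have hre : ∀ (x t : ℝ), (((x : ℝ) : ℂ) + ((t : ℝ) : ℂ) * Complex.I).re = x := by
    intro x t; simp
  have hne11 : z₁ ≠ z₁' := by
    intro h
    have := congrArg Complex.im h
    rw [hz1_def, hz1'_def, him, him] at this
    linarith
  have hne22 : z₂ ≠ z₂' := by
    intro h
    have := congrArg Complex.im h
    rw [hz2_def, hz2'_def, him, him] at this
    linarith
  have hne12 : z₁ ≠ z₂ := by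
    intro h
    have := congrArg Complex.re h
    rw [hz1_def, hz2_def, hre, hre] at this
    linarith
  have hne12' : z₁ ≠ z₂' := by
    intro h
    have := congrArg Complex.re h
    rw [hz1_def, hz2'_def, hre, hre] at this
    linarith
  have hne1'2 : z₁' ≠ z₂ := by
    intro h
    have := congrArg Complex.re h
    rw [hz1'_def, hz2_def, hre, hre] at this
    linarith
  have hne1'2' : z₁' ≠ z₂' := by
    intro h
    have := congrArg Complex.re h
    rw [hz1'_def, hz2'_def, hre, hre] at this
    linarith
  -- nonvanishing pieces
  have n0 : Polynomial.C ((a : ℝ) : ℂ) ≠ 0 := C_ne_zero.mpr haC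
  have n1 : (X - Polynomial.C z₁) ≠ 0 := X_sub_C_ne_zero z₁
  have n1' : (X - Polynomial.C z₁') ≠ 0 := X_sub_C_ne_zero z₁'
  have n2 : (X - Polynomial.C z₂) ≠ 0 := X_sub_C_ne_zero z₂
  have n2' : (X - Polynomial.C z₂') ≠ 0 := X_sub_C_ne_zero z₂'
  have m1 : Polynomial.C ((a : ℝ) : ℂ) * (X - Polynomial.C z₁) ≠ 0 := mul_ne_zero n0 n1
  have m2 : Polynomial.C ((a : ℝ) : ℂ) * (X - Polynomial.C z₁) * (X - Polynomial.C z₁') ≠ 0 :=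
    mul_ne_zero m1 n1'
  have m3 : Polynomial.C ((a : ℝ) : ℂ) * (X - Polynomial.C z₁) * (X - Polynomial.C z₁')
      * (X - Polynomial.C z₂) ≠ 0 := mul_ne_zero m2 n2
  have m4 : Polynomial.C ((a : ℝ) : ℂ) * (X - Polynomial.C z₁) * (X - Polynomial.C z₁')
      * (X - Polynomial.C z₂) * (X - Polynomial.C z₂') ≠ 0 := mul_ne_zero m3 n2'
  have hmulcount : ∀ y : ℂ, rootMultiplicity y
      (Polynomial.C ((a : ℝ) : ℂ) * (X - Polynomial.C z₁) * (X - Polynomial.C z₁')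
        * (X - Polynomial.C z₂) * (X - Polynomial.C z₂')) =
      ((if y = z₁ then 1 else 0) + (if y = z₁' then 1 else 0)
        + (if y = z₂ then 1 else 0) + (if y = z₂' then 1 else 0)) := by
    intro y
    rw [rootMultiplicity_mul m4, rootMultiplicity_mul m3, rootMultiplicity_mul m2,
      rootMultiplicity_mul m1, rootMultiplicity_C, rootMultiplicity_X_sub_C,
      rootMultiplicity_X_sub_C, rootMultiplicity_X_sub_C, rootMultiplicity_X_sub_C]
    ring
  intro z hz
  rw [hfact] at hz
  have hz' : (z - z₁) * ((z - z₁') * ((z - z₂) * (z - z₂'))) = 0 := by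
    have := hz
    simp only [IsRoot, eval_mul, eval_sub, eval_X, eval_C] at this
    rcases mul_eq_zero.mp this with h | h
    · rcases mul_eq_zero.mp h with h | h
      · rcases mul_eq_zero.mp h with h | h
        · rcases mul_eq_zero.mp h with h | h
          · exact absurd h haC
          · rw [h]; ring
        · rw [h]; ring
      · rw [h]; ring
    · rw [h]; ring
  have hmem : z = z₁ ∨ z = z₁' ∨ z = z₂ ∨ z = z₂' := by
    rcases mul_eq_zero.mp hz' with h | h
    · exact Or.inl (sub_eq_zero.mp h)
    rcases mul_eq_zero.mp h with h | h
    · exact Or.inr (Or.inl (sub_eq_zero.mp h))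
    rcases mul_eq_zero.mp h with h | h
    · exact Or.inr (Or.inr (Or.inl (sub_eq_zero.mp h)))
    · exact Or.inr (Or.inr (Or.inr (sub_eq_zero.mp h)))
  constructor
  · rcases hmem with h | h | h | h <;> rw [h]
    · exact habs1.le
    · exact habs1'.le
    · exact habs2.le
    · exact habs2'.le
  · intro _
    rw [hfact, hmulcount z]
    rcases hmem with h | h | h | h <;> subst h
    · simp [hne11, hne12, hne12']
    · simp [hne11.symm, hne1'2, hne1'2']
    · simp [hne12.symm, hne1'2.symm, hne22]
    · simp [hne12'.symm, hne1'2'.symm, hne22.symm]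
end

section
/- Let ω > 0, λ > 0 and ξ ∈ ℝ satisfy q := 4λ²sin²(ξ/2) = 2ω/(1 + ω), and let G be the 4 × 4 complex matrix with rows (1, −λ(e^{iξ} − 1), 0, 0), (0, (2 − q(1 + ω))/(1 + ω), (1 + ω)/(1 + ω), 2ω/(1 + ω)), (0, 1, 0, 0), (−λ(1 − e^{−iξ}), −q, 0, 1). Then the powers of G are not uniformly bounded: there is no constant C with ‖Gⁿ‖ ≤ C for all n. -/
attribute [local instance] Matrix.frobeniusNormedAddCommGroup

set_option maxHeartbeats 1000000 in
private lemma lj_det_aux (x A B q w : ℂ) (hAB : A * B = -q) (hw : (1:ℂ) + w ≠ 0)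
    (hres : q * (1 + w) = 2 * w) :
    (x • (1 : Matrix (Fin 4) (Fin 4) ℂ) -
      !![1, -A, 0, 0;
         0, (2 - q * (1 + w)) / (1 + w), (1 + w) / (1 + w), 2 * w / (1 + w);
         0, 1, 0, 0;
         -B, -q, 0, 1]).det
    = x^4 - 2*(2/(1+w))*x^3 + (2/(1+w))^2*x^2 + (4 - 2*(2/(1+w)))*x - 1 := by
  have h1 : (x • (1 : Matrix (Fin 4) (Fin 4) ℂ) -
      !![1, -A, 0, 0;
         0, (2 - q * (1 + w)) / (1 + w), (1 + w) / (1 + w), 2 * w / (1 + w);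
         0, 1, 0, 0;
         -B, -q, 0, 1]) =
      !![x - 1, A, 0, 0;
         0, x - (2 - q * (1 + w)) / (1 + w), -((1 + w) / (1 + w)), -(2 * w / (1 + w));
         0, -1, x, 0;
         B, q, 0, x - 1] := by
    ext i j
    fin_cases i <;> fin_cases j <;>
      simp [Matrix.smul_apply, Matrix.one_apply, Matrix.vecHead, Matrix.vecTail]
  rw [h1]
  simp only [Matrix.det_succ_row_zero, Fin.sum_univ_succ, Matrix.submatrix_apply,
    Matrix.cons_val', Matrix.cons_val_zero, Matrix.cons_val_one, Matrix.head_cons,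
    Matrix.head_fin_const, Matrix.empty_val', Matrix.cons_val_fin_one,
    Matrix.det_fin_zero, Fin.succ_zero_eq_one, Matrix.of_apply,
    Matrix.vecHead, Matrix.vecTail, Finset.univ_unique, Finset.sum_singleton]
  norm_num [Fin.succAbove, Fin.lt_def, Matrix.cons_val_succ]
  simp only [Matrix.cons_val]
  norm_num
  have hq' : q = 2 * w / (1 + w) := by
    rw [eq_div_iff hw]; exact hres
  have hABx : A * (2 * w / (1 + w) * (x * B)) = 2 * w / (1 + w) * x * -q := by
    rw [← hAB]; ring
  rw [div_self hw, hABx, hq']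
  field_simp
  ring

open Polynomial in
private lemma lj_exists_big_root (a : ℝ) (ha0 : 0 < a) (ha2 : a < 2) :
    ∃ μ : ℂ, 1 < ‖μ‖ ∧
      μ^4 - 2*(a:ℂ)*μ^3 + (a:ℂ)^2*μ^2 + (4 - 2*(a:ℂ))*μ - 1 = 0 := by
  set f : ℝ → ℝ := fun t => t^4 - 2*a*t^3 + a^2*t^2 + (4 - 2*a)*t - 1 with hf
  have hc : ContinuousOn f (Set.Icc 0 1) := by fun_prop
  have hmem : (0:ℝ) ∈ Set.Ioo (f 0) (f 1) := by
    constructor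
    · simp [hf]
    · show 0 < f 1
      simp only [hf]
      nlinarith [sq_nonneg (a - 2)]
  obtain ⟨r, hr01, hfr⟩ := intermediate_value_Ioo (by norm_num : (0:ℝ) ≤ 1) hc hmem
  obtain ⟨hr0, hr1⟩ := hr01
  set P : ℂ[X] := X^4 - C (2*(a:ℂ)) * X^3 + C ((a:ℂ)^2) * X^2 + C (4 - 2*(a:ℂ)) * X - C 1
    with hP
  have hmo : P.Monic := by
    unfold P; monicity!
  have hdeg : P.natDegree = 4 := by
    unfold P; compute_degree!
  have hP0 : P ≠ 0 := hmo.ne_zero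
  have hsplits : P.Splits := IsAlgClosed.splits P
  have hcoeff : P.coeff 0 = -1 := by
    simp [hP, coeff_X_pow]
  have hprod : P.roots.prod = -1 := by
    have h := hsplits.coeff_zero_eq_prod_roots_of_monic hmo
    rw [hcoeff, hdeg] at h
    have h2 := h.symm
    norm_num at h2
    exact h2
  have hrroot : (r:ℂ) ∈ P.roots := by
    rw [mem_roots hP0]
    have he : P.eval (r:ℂ) = (r:ℂ)^4 - 2*(a:ℂ)*(r:ℂ)^3 + (a:ℂ)^2*(r:ℂ)^2
        + (4 - 2*(a:ℂ))*(r:ℂ) - 1 := by simp [hP]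
    have hfr' : ((f r : ℝ) : ℂ) = 0 := by rw [hfr]; norm_num
    simp only [hf] at hfr'
    push_cast at hfr'
    show P.IsRoot (r:ℂ)
    unfold Polynomial.IsRoot
    rw [he]
    linear_combination hfr'
  set s := P.roots.erase (r:ℂ) with hs
  have hcons : P.roots = (r:ℂ) ::ₘ s := (Multiset.cons_erase hrroot).symm
  have hsprod : (r:ℂ) * s.prod = -1 := by
    rw [← Multiset.prod_cons, ← hcons, hprod]
  have habs : r * ‖s.prod‖ = 1 := by
    have := congrArg (‖·‖) hsprod
    rw [norm_mul, Complex.norm_real, Real.norm_of_nonneg hr0.le] at this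
    simpa using this
  have hgt : 1 < ‖s.prod‖ := by
    rcases eq_or_lt_of_le (le_of_eq habs.symm) with h | h
    · nlinarith [norm_nonneg s.prod]
    · nlinarith [norm_nonneg s.prod]
  have key : ∀ t : Multiset ℂ, (∀ z ∈ t, ‖z‖ ≤ 1) → ‖t.prod‖ ≤ 1 := by
    intro t
    induction t using Multiset.induction with
    | empty => simp
    | cons a s ih =>
      intro h
      rw [Multiset.prod_cons, norm_mul]
      have h1 := h a (Multiset.mem_cons_self a s)
      have h2 := ih (fun z hz => h z (Multiset.mem_cons_of_mem hz))
      nlinarith [norm_nonneg a, norm_nonneg s.prod]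
  by_contra hno
  push_neg at hno
  have hall : ∀ z ∈ s, ‖z‖ ≤ 1 := by
    intro z hz
    have hzr : z ∈ P.roots := Multiset.mem_of_mem_erase hz
    have hz0 : P.eval z = 0 := (mem_roots hP0).mp hzr
    have hzeq : z^4 - 2*(a:ℂ)*z^3 + (a:ℂ)^2*z^2 + (4 - 2*(a:ℂ))*z - 1 = 0 := by
      simpa [hP] using hz0
    exact le_of_not_gt (fun h => absurd hzeq (hno z h))
  exact absurd (key s hall) (not_le.mpr hgt)

private lemma lj_entry_le_frobenius (A : Matrix (Fin 4) (Fin 4) ℂ) (i j : Fin 4) :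
    ‖A i j‖ ≤ ‖A‖ := by
  rw [Matrix.frobenius_norm_def]
  have key : ‖A i j‖ ^ (2:ℝ) ≤ ∑ i', ∑ j', ‖A i' j'‖ ^ (2:ℝ) := by
    calc ‖A i j‖ ^ (2:ℝ) ≤ ∑ j', ‖A i j'‖ ^ (2:ℝ) :=
          Finset.single_le_sum (f := fun j' => ‖A i j'‖ ^ (2:ℝ))
            (fun _ _ => by positivity) (Finset.mem_univ j)
      _ ≤ ∑ i', ∑ j', ‖A i' j'‖ ^ (2:ℝ) :=
          Finset.single_le_sum (f := fun i' => ∑ j', ‖A i' j'‖ ^ (2:ℝ))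
            (fun _ _ => by positivity) (Finset.mem_univ i)
  calc ‖A i j‖ = (‖A i j‖ ^ (2:ℝ)) ^ (1/2:ℝ) := by
        rw [← Real.rpow_mul (norm_nonneg _)]
        norm_num
    _ ≤ (∑ i', ∑ j', ‖A i' j'‖ ^ (2:ℝ)) ^ (1/2:ℝ) :=
        Real.rpow_le_rpow (by positivity) key (by norm_num)

set_option maxHeartbeats 2000000 in
/-- Instability of the Lorentz–Joseph et al. amplification matrix in the
harmonic case `ν = 0` with `ε_s = ε_∞`, at the resonant value
`q = 4λ²sin²(ξ/2) = 2ω/(1+ω)`: the powers of `G` are not uniformly bounded. -/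
theorem lorentz_joseph_unstable (ω lam ξ q : ℝ) (hω : 0 < ω) (hlam : 0 < lam)
    (hq : q = 4 * lam ^ 2 * Real.sin (ξ / 2) ^ 2) (hqres : q = 2 * ω / (1 + ω)) :
    ¬ ∃ C : ℝ, ∀ n : ℕ,
      ‖(!![1, -(lam : ℂ) * (Complex.exp (ξ * Complex.I) - 1), 0, 0;
          0, (2 - (q : ℂ) * (1 + (ω : ℂ))) / (1 + (ω : ℂ)),
            (1 + (ω : ℂ)) / (1 + (ω : ℂ)), 2 * (ω : ℂ) / (1 + (ω : ℂ));
          0, 1, 0, 0;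
          -(lam : ℂ) * (1 - Complex.exp (-ξ * Complex.I)), -(q : ℂ), 0, 1] :
            Matrix (Fin 4) (Fin 4) ℂ) ^ n‖ ≤ C := by
  rintro ⟨C, hC⟩
  set G : Matrix (Fin 4) (Fin 4) ℂ :=
    !![1, -(lam : ℂ) * (Complex.exp (ξ * Complex.I) - 1), 0, 0;
       0, (2 - (q : ℂ) * (1 + (ω : ℂ))) / (1 + (ω : ℂ)),
         (1 + (ω : ℂ)) / (1 + (ω : ℂ)), 2 * (ω : ℂ) / (1 + (ω : ℂ));
       0, 1, 0, 0;
       -(lam : ℂ) * (1 - Complex.exp (-ξ * Complex.I)), -(q : ℂ), 0, 1] with hG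
  set E : ℂ := Complex.exp (ξ * Complex.I) with hE
  set E' : ℂ := Complex.exp (-ξ * Complex.I) with hE'
  set A : ℂ := (lam : ℂ) * (E - 1) with hA
  set B : ℂ := (lam : ℂ) * (1 - E') with hB
  have hEE : E * E' = 1 := by
    rw [hE, hE', ← Complex.exp_add]
    ring_nf
    exact Complex.exp_zero
  have hcos : E + E' = 2 * (Real.cos ξ : ℂ) := by
    rw [hE, hE', Complex.exp_mul_I, Complex.exp_mul_I, Complex.cos_neg, Complex.sin_neg,
      ← Complex.ofReal_cos]
    ring
  have hqr : q = 2 * lam ^ 2 * (1 - Real.cos ξ) := by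
    have h2 : 2 * (ξ / 2) = ξ := by ring
    rw [hq, Real.sin_sq_eq_half_sub, h2]
    ring
  have hAB : A * B = -(q : ℂ) := by
    have hqc : (q : ℂ) = 2 * (lam:ℂ)^2 * (1 - (Real.cos ξ : ℂ)) := by
      rw [hqr]; push_cast; ring
    rw [hA, hB, hqc]
    linear_combination (-(lam:ℂ)^2) * hEE + ((lam:ℂ)^2) * hcos
  have hw0 : (0:ℝ) < 1 + ω := by linarith
  have hw : (1:ℂ) + (ω:ℂ) ≠ 0 := by
    have : ((1 + ω : ℝ) : ℂ) ≠ 0 := Complex.ofReal_ne_zero.mpr (ne_of_gt hw0)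
    push_cast at this
    exact this
  have hres : (q:ℂ) * (1 + (ω:ℂ)) = 2 * (ω:ℂ) := by
    have hr : q * (1 + ω) = 2 * ω := by
      rw [hqres]
      field_simp
    exact_mod_cast congrArg (fun x : ℝ => (x : ℂ)) hr
  -- the big root
  obtain ⟨μ, hμ1, hμeq⟩ := lj_exists_big_root (2 / (1 + ω))
    (by positivity) (by rw [div_lt_iff₀ hw0]; linarith)
  have hacast : ((2 / (1 + ω) : ℝ) : ℂ) = 2 / (1 + (ω:ℂ)) := by push_cast; ring
  have hdet0 : (μ • (1 : Matrix (Fin 4) (Fin 4) ℂ) - G).det = 0 := by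
    have hGB : G = !![1, -A, 0, 0;
         0, (2 - (q:ℂ) * (1 + (ω:ℂ))) / (1 + (ω:ℂ)),
           (1 + (ω:ℂ)) / (1 + (ω:ℂ)), 2 * (ω:ℂ) / (1 + (ω:ℂ));
         0, 1, 0, 0;
         -B, -(q:ℂ), 0, 1] := by
      rw [hG]
      ext i j
      fin_cases i <;> fin_cases j <;>
        simp [hA, hB, Matrix.vecHead, Matrix.vecTail] <;> ring
    rw [hGB, lj_det_aux μ A B (q:ℂ) (ω:ℂ) hAB hw hres]
    rw [hacast] at hμeq
    linear_combination hμeq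
  obtain ⟨v, hv0, hv⟩ := (Matrix.exists_mulVec_eq_zero_iff).mpr hdet0
  have hGv : G.mulVec v = μ • v := by
    rw [Matrix.sub_mulVec, Matrix.smul_mulVec, Matrix.one_mulVec, sub_eq_zero] at hv
    exact hv.symm
  have hpow : ∀ n : ℕ, (G ^ n).mulVec v = μ ^ n • v := by
    intro n
    induction n with
    | zero => simp
    | succ n ih =>
      rw [pow_succ, ← Matrix.mulVec_mulVec, hGv, Matrix.mulVec_smul, ih,
        smul_smul, pow_succ']
  obtain ⟨i, hvi⟩ := Function.ne_iff.mp hv0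
  simp only [Pi.zero_apply] at hvi
  set S : ℝ := ∑ j, ‖v j‖ with hS
  have hvipos : 0 < ‖v i‖ := norm_pos_iff.mpr hvi
  have hbound : ∀ n : ℕ, ‖μ‖ ^ n * ‖v i‖ ≤ C * S := by
    intro n
    have h1 : ((G ^ n).mulVec v) i = μ ^ n * v i := by
      rw [hpow n]; simp
    have h2 : ‖μ‖ ^ n * ‖v i‖ = ‖((G ^ n).mulVec v) i‖ := by
      rw [h1]
      simp [norm_mul, norm_pow]
    rw [h2]
    have h3 : ((G ^ n).mulVec v) i = ∑ j, (G ^ n) i j * v j := by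
      simp [Matrix.mulVec, dotProduct]
    rw [h3]
    calc ‖∑ j, (G ^ n) i j * v j‖ ≤ ∑ j, ‖(G ^ n) i j * v j‖ := norm_sum_le _ _
      _ ≤ ∑ j, ‖G ^ n‖ * ‖v j‖ := by
          apply Finset.sum_le_sum
          intro j _
          rw [norm_mul]
          exact mul_le_mul_of_nonneg_right (lj_entry_le_frobenius _ i j) (norm_nonneg _)
      _ = ‖G ^ n‖ * S := by rw [← Finset.mul_sum]
      _ ≤ C * S := by
          apply mul_le_mul_of_nonneg_right (hC n)
          positivity
  obtain ⟨n, hn⟩ := pow_unbounded_of_one_lt (C * S / ‖v i‖) hμ1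
  have := hbound n
  rw [div_lt_iff₀ hvipos] at hn
  linarith
end

section
/- Let δ > 0, ω > 0, ε′ > 1 and 0 < q < 4 be real numbers. Then the Lorentz–Kashiwa et al. characteristic polynomial φ₀(Z) = (1 + δ + ωε′/2)Z⁴ − (4 + 2δ − (1 + δ + ω/2)q)Z³ + (6 − ωε′ + (ω − 2)q)Z² − (4 − 2δ − (1 − δ + ω/2)q)Z + (1 − δ + ωε′/2) is a Schur polynomial. -/
open Polynomial

/- Real quartic with positive coefficients satisfying the Routh–Hurwitz
condition has no root in the closed right half plane (real/imaginary parts form). -/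
set_option maxHeartbeats 1000000 in
lemma quartic_hurwitz_real (b4 b3 b2 b1 b0 x y : ℝ)
    (h4 : 0 < b4) (h3 : 0 < b3) (h2 : 0 < b2) (h1 : 0 < b1) (h0 : 0 < b0)
    (hH : b3 ^ 2 * b0 + b4 * b1 ^ 2 < b1 * b2 * b3) (hx : 0 ≤ x)
    (hre : b4 * (x ^ 4 - 6 * x ^ 2 * y ^ 2 + y ^ 4) + b3 * (x ^ 3 - 3 * x * y ^ 2)
        + b2 * (x ^ 2 - y ^ 2) + b1 * x + b0 = 0)
    (him : y * (4 * b4 * (x ^ 3 - x * y ^ 2) + b3 * (3 * x ^ 2 - y ^ 2)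
        + 2 * b2 * x + b1) = 0) : False := by
  have hA : 0 < b3 ^ 2 * b0 + b4 * b1 ^ 2 := by positivity
  have hsq : (b3 ^ 2 * b0 + b4 * b1 ^ 2) ^ 2 < (b1 * b2 * b3) ^ 2 := by nlinarith
  have hb2sq : 4 * b4 * b0 < b2 ^ 2 := by
    have hpos : (0:ℝ) < (b1 * b3) ^ 2 := by positivity
    rw [← mul_lt_mul_iff_right₀ hpos]
    nlinarith [sq_nonneg (b3 ^ 2 * b0 - b4 * b1 ^ 2)]
  have k1 : (0:ℝ) ≤ b2 ^ 2 - 4 * b4 * b0 := by linarith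
  have t1 : (0:ℝ) ≤ x * (2 * b3 * (b2 ^ 2 - 4 * b4 * b0) + 2 * b3 ^ 2 * b1) := by
    apply mul_nonneg hx
    have h := mul_nonneg (by positivity : (0:ℝ) ≤ 2 * b3) k1
    nlinarith [h]
  have t2 : (0:ℝ) ≤ x ^ 2 * (8 * b3 ^ 2 * b2 + 4 * b4 * (b2 ^ 2 - 4 * b4 * b0) + 4 * b4 * b3 * b1) := by
    apply mul_nonneg (pow_nonneg hx 2)
    have h := mul_nonneg (by positivity : (0:ℝ) ≤ 4 * b4) k1
    nlinarith [h]
  have t3 : (0:ℝ) ≤ x ^ 3 * (8 * b3 ^ 3 + 32 * b4 * b3 * b2) :=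
    mul_nonneg (pow_nonneg hx 3) (by positivity)
  have t4 : (0:ℝ) ≤ x ^ 4 * (48 * b4 * b3 ^ 2 + 32 * b4 ^ 2 * b2) :=
    mul_nonneg (pow_nonneg hx 4) (by positivity)
  have t5 : (0:ℝ) ≤ x ^ 5 * (96 * b4 ^ 2 * b3) :=
    mul_nonneg (pow_nonneg hx 5) (by positivity)
  have t6 : (0:ℝ) ≤ x ^ 6 * (64 * b4 ^ 3) :=
    mul_nonneg (pow_nonneg hx 6) (by positivity)
  rcases eq_or_ne y 0 with hy | hy
  · subst hy
    nlinarith [pow_nonneg hx 4, pow_nonneg hx 3, pow_nonneg hx 2]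
  · have him0 := (mul_eq_zero.mp him).resolve_left hy
    have him' : y ^ 2 * (4 * b4 * x + b3) = 4 * b4 * x ^ 3 + 3 * b3 * x ^ 2 + 2 * b2 * x + b1 := by
      linear_combination -him0
    set D : ℝ := 4 * b4 * x + b3 with hD
    set N : ℝ := 4 * b4 * x ^ 3 + 3 * b3 * x ^ 2 + 2 * b2 * x + b1 with hN
    have hE : b4 * (x ^ 4 * D ^ 2 - 6 * x ^ 2 * N * D + N ^ 2)
        + b3 * (x ^ 3 * D ^ 2 - 3 * x * N * D) + b2 * (x ^ 2 * D ^ 2 - N * D)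
        + b1 * x * D ^ 2 + b0 * D ^ 2 = 0 := by
      linear_combination D ^ 2 * hre
        + (b4 * (6 * x ^ 2 * D - (y ^ 2 * D + N)) + 3 * b3 * x * D + b2 * D) * him'
    rw [hD, hN] at hE
    have hE' : (b1 * b2 * b3 - b3 ^ 2 * b0 - b4 * b1 ^ 2)
        + x * (2 * b3 * (b2 ^ 2 - 4 * b4 * b0) + 2 * b3 ^ 2 * b1)
        + x ^ 2 * (8 * b3 ^ 2 * b2 + 4 * b4 * (b2 ^ 2 - 4 * b4 * b0) + 4 * b4 * b3 * b1)
        + x ^ 3 * (8 * b3 ^ 3 + 32 * b4 * b3 * b2)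
        + x ^ 4 * (48 * b4 * b3 ^ 2 + 32 * b4 ^ 2 * b2)
        + x ^ 5 * (96 * b4 ^ 2 * b3) + x ^ 6 * (64 * b4 ^ 3) = 0 := by
      linear_combination -hE
    clear hE him him' him0 hre hsq
    linarith [hE', t1, t2, t3, t4, t5, t6, hH]

lemma quartic_hurwitz_complex (b4 b3 b2 b1 b0 : ℝ) (w : ℂ)
    (h4 : 0 < b4) (h3 : 0 < b3) (h2 : 0 < b2) (h1 : 0 < b1) (h0 : 0 < b0)
    (hH : b3 ^ 2 * b0 + b4 * b1 ^ 2 < b1 * b2 * b3) (hw : 0 ≤ w.re)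
    (hψ : (b4 : ℂ) * w ^ 4 + (b3 : ℂ) * w ^ 3 + (b2 : ℂ) * w ^ 2 + (b1 : ℂ) * w + (b0 : ℂ) = 0) :
    False := by
  set x : ℝ := w.re with hxd
  set y : ℝ := w.im with hyd
  obtain ⟨hre0, him0⟩ := Complex.ext_iff.mp hψ
  simp only [Complex.add_re, Complex.add_im, Complex.mul_re, Complex.mul_im,
    Complex.ofReal_re, Complex.ofReal_im, Complex.zero_re, Complex.zero_im,
    pow_succ, pow_zero, Complex.one_re, Complex.one_im, ← hxd, ← hyd] at hre0 him0
  have hre : b4 * (x ^ 4 - 6 * x ^ 2 * y ^ 2 + y ^ 4) + b3 * (x ^ 3 - 3 * x * y ^ 2)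
      + b2 * (x ^ 2 - y ^ 2) + b1 * x + b0 = 0 := by linear_combination hre0
  have him : y * (4 * b4 * (x ^ 3 - x * y ^ 2) + b3 * (3 * x ^ 2 - y ^ 2)
      + 2 * b2 * x + b1) = 0 := by linear_combination him0
  exact quartic_hurwitz_real b4 b3 b2 b1 b0 x y h4 h3 h2 h1 h0 hH hw hre him

/-- Lorentz–Kashiwa et al. (an-harmonic case): for `δ > 0`, `ω > 0`, `ε′ > 1` and
`0 < q < 4` the characteristic polynomial is a Schur polynomial. -/
theorem lorentz_kashiwa_schur (δ ω ε' q : ℝ) (hδ : 0 < δ) (hω : 0 < ω)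
    (hε : 1 < ε') (hq0 : 0 < q) (hq4 : q < 4) :
    IsSchur (Polynomial.C ((1 + δ + ω * ε' / 2 : ℝ) : ℂ) * Polynomial.X ^ 4
      - Polynomial.C ((4 + 2 * δ - (1 + δ + ω / 2) * q : ℝ) : ℂ) * Polynomial.X ^ 3
      + Polynomial.C ((6 - ω * ε' + (ω - 2) * q : ℝ) : ℂ) * Polynomial.X ^ 2
      - Polynomial.C ((4 - 2 * δ - (1 - δ + ω / 2) * q : ℝ) : ℂ) * Polynomial.X
      + Polynomial.C ((1 - δ + ω * ε' / 2 : ℝ) : ℂ)) := by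
  intro z hz
  by_contra hcon
  push_neg at hcon
  simp only [Polynomial.IsRoot.def, Polynomial.eval_add, Polynomial.eval_sub,
    Polynomial.eval_mul, Polynomial.eval_pow, Polynomial.eval_C, Polynomial.eval_X] at hz
  have heq : ((1 + δ + ω * ε' / 2 : ℝ) : ℂ) * z ^ 4
      - ((4 + 2 * δ - (1 + δ + ω / 2) * q : ℝ) : ℂ) * z ^ 3
      + ((6 - ω * ε' + (ω - 2) * q : ℝ) : ℂ) * z ^ 2
      - ((4 - 2 * δ - (1 - δ + ω / 2) * q : ℝ) : ℂ) * z
      + ((1 - δ + ω * ε' / 2 : ℝ) : ℂ) = 0 := hz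
  have hz1 : z ≠ 1 := by
    intro h
    subst h
    have h2 : ((2 * ω * q : ℝ) : ℂ) = 0 := by push_cast at heq ⊢; linear_combination heq
    have h3 : (2 * ω * q : ℝ) = 0 := by exact_mod_cast h2
    nlinarith
  have hz1' : z - 1 ≠ 0 := sub_ne_zero.mpr hz1
  set w : ℂ := (z + 1) / (z - 1) with hwdef
  -- Re w ≥ 0
  have hnsq : 1 ≤ Complex.normSq z := by
    have h := Complex.sq_norm z
    nlinarith [hcon, norm_nonneg z]
  have hwre : 0 ≤ w.re := by
    rw [hwdef, Complex.div_re]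
    rw [← add_div]
    apply div_nonneg _ (Complex.normSq_nonneg _)
    have : (z + 1).re * (z - 1).re + (z + 1).im * (z - 1).im = Complex.normSq z - 1 := by
      simp [Complex.normSq_apply, Complex.add_re, Complex.add_im, Complex.sub_re,
        Complex.sub_im]
      ring
    rw [this]
    linarith
  -- transformed polynomial equation
  have key : ((2 * ω * q : ℝ) : ℂ) * (z + 1) ^ 4 + ((4 * δ * q : ℝ) : ℂ) * ((z + 1) ^ 3 * (z - 1))
      + ((8 * ω * ε' + 4 * q - 2 * ω * q : ℝ) : ℂ) * ((z + 1) ^ 2 * (z - 1) ^ 2)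
      + ((16 * δ - 4 * δ * q : ℝ) : ℂ) * ((z + 1) * (z - 1) ^ 3)
      + ((16 - 4 * q : ℝ) : ℂ) * (z - 1) ^ 4 = 0 := by
    push_cast at heq ⊢
    linear_combination (16 : ℂ) * heq
  have hψ : ((2 * ω * q : ℝ) : ℂ) * w ^ 4 + ((4 * δ * q : ℝ) : ℂ) * w ^ 3
      + ((8 * ω * ε' + 4 * q - 2 * ω * q : ℝ) : ℂ) * w ^ 2
      + ((16 * δ - 4 * δ * q : ℝ) : ℂ) * w + ((16 - 4 * q : ℝ) : ℂ) = 0 := by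
    have e1 : w * (z - 1) = z + 1 := by
      rw [hwdef]; exact div_mul_cancel₀ _ hz1'
    have h0 : (((2 * ω * q : ℝ) : ℂ) * w ^ 4 + ((4 * δ * q : ℝ) : ℂ) * w ^ 3
        + ((8 * ω * ε' + 4 * q - 2 * ω * q : ℝ) : ℂ) * w ^ 2
        + ((16 * δ - 4 * δ * q : ℝ) : ℂ) * w + ((16 - 4 * q : ℝ) : ℂ)) * (z - 1) ^ 4 = 0 := by
      linear_combination key
        + (((2 * ω * q : ℝ) : ℂ) * (w ^ 3 * (z - 1) ^ 3 + w ^ 2 * (z - 1) ^ 2 * (z + 1)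
            + w * (z - 1) * (z + 1) ^ 2 + (z + 1) ^ 3)
          + ((4 * δ * q : ℝ) : ℂ) * (w ^ 2 * (z - 1) ^ 2 + w * (z - 1) * (z + 1) + (z + 1) ^ 2)
            * (z - 1)
          + ((8 * ω * ε' + 4 * q - 2 * ω * q : ℝ) : ℂ) * (w * (z - 1) + (z + 1)) * (z - 1) ^ 2
          + ((16 * δ - 4 * δ * q : ℝ) : ℂ) * (z - 1) ^ 3) * e1
    exact (mul_eq_zero.mp h0).resolve_right (pow_ne_zero 4 hz1')
  have hb2 : (0:ℝ) < 8 * ω * ε' + 4 * q - 2 * ω * q := by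
    nlinarith [mul_pos hω (sub_pos.mpr hε), mul_pos hω (sub_pos.mpr hq4)]
  have hb1 : (0:ℝ) < 16 * δ - 4 * δ * q := by
    nlinarith [mul_pos hδ (sub_pos.mpr hq4)]
  have hHfac : (0:ℝ) < 128 * δ ^ 2 * q * (4 - q) * ω * (ε' - 1) := by
    have h1 : (0:ℝ) < 4 - q := by linarith
    have h2 : (0:ℝ) < ε' - 1 := by linarith
    positivity
  exact quartic_hurwitz_complex (2 * ω * q) (4 * δ * q) (8 * ω * ε' + 4 * q - 2 * ω * q)
    (16 * δ - 4 * δ * q) (16 - 4 * q) w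
    (by positivity) (by positivity) hb2 hb1 (by linarith)
    (by nlinarith [hHfac]) hwre hψ
end

section
/- Let δ ≥ 0, ω > 0, α ≥ 0, λ > 0 and ξ ∈ ℝ satisfy q := 4λ²sin²(ξ/2) = 4. Set ε′ = 1 + α and Δ = 1 + δ + ωε′/2, and let G be the 4 × 4 complex matrix with rows (1, −λ(e^{iξ} − 1), 0, 0), (−λ(1 − e^{−iξ})(Δ − ωα/2)/Δ, (Δ − qΔ − (2 − q)ωα/2)/Δ, ω/Δ, −1/Δ), (−λ(1 − e^{−iξ})ωα/(2Δ), (2 − q)ωα/(2Δ), (Δ − ω)/Δ, 1/Δ), (−λ(1 − e^{−iξ})ωα/Δ, (2 − q)ωα/Δ, −2ω/Δ, (2 − Δ)/Δ). Then the powers of G are not uniformly bounded: there is no constant C with ‖Gⁿ‖ ≤ C for all n. -/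
attribute [local instance] Matrix.frobeniusNormedAddCommGroup

/-- Each entry of a matrix is bounded by its Frobenius norm. -/
lemma entry_le_frob_s17 (B : Matrix (Fin 4) (Fin 4) ℂ) (i j : Fin 4) : ‖B i j‖ ≤ ‖B‖ := by
  rw [Matrix.frobenius_norm_def]
  have h1 : ‖B i j‖ ^ (2:ℝ) ≤ ∑ i', ∑ j', ‖B i' j'‖ ^ (2:ℝ) := by
    have hrow : ∀ i' : Fin 4, (0:ℝ) ≤ ∑ j', ‖B i' j'‖ ^ (2:ℝ) := fun i' =>
      Finset.sum_nonneg fun j' _ => Real.rpow_nonneg (norm_nonneg _) _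
    calc ‖B i j‖ ^ (2:ℝ) ≤ ∑ j', ‖B i j'‖ ^ (2:ℝ) :=
          Finset.single_le_sum (fun j' _ => Real.rpow_nonneg (norm_nonneg _) _)
            (Finset.mem_univ j)
      _ ≤ ∑ i', ∑ j', ‖B i' j'‖ ^ (2:ℝ) :=
          Finset.single_le_sum (fun i' _ => hrow i') (Finset.mem_univ i)
  have h2 : (2:ℝ) * (1/2) = 1 := by norm_num
  calc ‖B i j‖ = (‖B i j‖ ^ (2:ℝ)) ^ (1/2:ℝ) := by
        rw [← Real.rpow_mul (norm_nonneg _), h2, Real.rpow_one]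
    _ ≤ (∑ i', ∑ j', ‖B i' j'‖ ^ (2:ℝ)) ^ (1/2:ℝ) :=
        Real.rpow_le_rpow (Real.rpow_nonneg (norm_nonneg _) _) h1 (by norm_num)

/-- Instability of the Lorentz–Kashiwa et al. amplification matrix at the limit
CFL value `q = 4λ²sin²(ξ/2) = 4`, with `ε′ = 1 + α` and `Δ = 1 + δ + ωε′/2`:
the powers of `G` are not uniformly bounded. -/
theorem lorentz_kashiwa_unstable (δ ω α lam ξ q ε' Δ : ℝ)
    (hδ : 0 ≤ δ) (hω : 0 < ω) (hα : 0 ≤ α) (hlam : 0 < lam)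
    (hq : q = 4 * lam ^ 2 * Real.sin (ξ / 2) ^ 2) (hq4 : q = 4)
    (hε : ε' = 1 + α) (hΔ : Δ = 1 + δ + ω * ε' / 2) :
    ¬ ∃ C : ℝ, ∀ n : ℕ,
      ‖(!![1, -(lam : ℂ) * (Complex.exp (ξ * Complex.I) - 1), 0, 0;
          -(lam : ℂ) * (1 - Complex.exp (-ξ * Complex.I)) *
              ((Δ : ℂ) - (ω : ℂ) * (α : ℂ) / 2) / (Δ : ℂ),
            ((Δ : ℂ) - (q : ℂ) * (Δ : ℂ) - (2 - (q : ℂ)) * (ω : ℂ) * (α : ℂ) / 2) / (Δ : ℂ),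
            (ω : ℂ) / (Δ : ℂ), -1 / (Δ : ℂ);
          -(lam : ℂ) * (1 - Complex.exp (-ξ * Complex.I)) * (ω : ℂ) * (α : ℂ) /
              (2 * (Δ : ℂ)),
            (2 - (q : ℂ)) * (ω : ℂ) * (α : ℂ) / (2 * (Δ : ℂ)),
            ((Δ : ℂ) - (ω : ℂ)) / (Δ : ℂ), 1 / (Δ : ℂ);
          -(lam : ℂ) * (1 - Complex.exp (-ξ * Complex.I)) * (ω : ℂ) * (α : ℂ) / (Δ : ℂ),
            (2 - (q : ℂ)) * (ω : ℂ) * (α : ℂ) / (Δ : ℂ),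
            -2 * (ω : ℂ) / (Δ : ℂ), (2 - (Δ : ℂ)) / (Δ : ℂ)] :
            Matrix (Fin 4) (Fin 4) ℂ) ^ n‖ ≤ C := by
  subst hq4
  rintro ⟨C, hC⟩
  set A : Matrix (Fin 4) (Fin 4) ℂ :=
    !![1, -(lam : ℂ) * (Complex.exp (ξ * Complex.I) - 1), 0, 0;
          -(lam : ℂ) * (1 - Complex.exp (-ξ * Complex.I)) *
              ((Δ : ℂ) - (ω : ℂ) * (α : ℂ) / 2) / (Δ : ℂ),
            ((Δ : ℂ) - ((4:ℝ) : ℂ) * (Δ : ℂ) - (2 - ((4:ℝ) : ℂ)) * (ω : ℂ) * (α : ℂ) / 2) /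
              (Δ : ℂ),
            (ω : ℂ) / (Δ : ℂ), -1 / (Δ : ℂ);
          -(lam : ℂ) * (1 - Complex.exp (-ξ * Complex.I)) * (ω : ℂ) * (α : ℂ) /
              (2 * (Δ : ℂ)),
            (2 - ((4:ℝ) : ℂ)) * (ω : ℂ) * (α : ℂ) / (2 * (Δ : ℂ)),
            ((Δ : ℂ) - (ω : ℂ)) / (Δ : ℂ), 1 / (Δ : ℂ);
          -(lam : ℂ) * (1 - Complex.exp (-ξ * Complex.I)) * (ω : ℂ) * (α : ℂ) / (Δ : ℂ),
            (2 - ((4:ℝ) : ℂ)) * (ω : ℂ) * (α : ℂ) / (Δ : ℂ),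
            -2 * (ω : ℂ) / (Δ : ℂ), (2 - (Δ : ℂ)) / (Δ : ℂ)] with hA
  -- the key algebraic identity a * b = -4
  have hcos : Real.cos ξ = 1 - 2 * Real.sin (ξ/2) ^ 2 := by
    have h1 := Real.cos_two_mul (ξ/2)
    have h2 := Real.sin_sq_add_cos_sq (ξ/2)
    have h3 : 2 * (ξ/2) = ξ := by ring
    rw [h3] at h1
    nlinarith
  have hlamsin : lam ^ 2 * Real.sin (ξ/2) ^ 2 = 1 := by nlinarith
  have hexp : Complex.exp (ξ * Complex.I) * Complex.exp (-(ξ * Complex.I)) = 1 := by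
    rw [← Complex.exp_add]; ring_nf; exact Complex.exp_zero
  have hcosC : Complex.exp (ξ * Complex.I) + Complex.exp (-(ξ * Complex.I))
      = 2 * (Real.cos ξ : ℂ) := by
    rw [Complex.ofReal_cos, Complex.cos]; ring_nf
  have hab : ((lam:ℂ) * (Complex.exp (ξ * Complex.I) - 1)) *
      ((lam:ℂ) * (1 - Complex.exp (-(ξ * Complex.I)))) = -4 := by
    have e1 : ((lam:ℂ) * (Complex.exp (ξ * Complex.I) - 1)) *
        ((lam:ℂ) * (1 - Complex.exp (-(ξ * Complex.I))))
        = (lam:ℂ)^2 * (Complex.exp (ξ * Complex.I) + Complex.exp (-(ξ * Complex.I))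
        - 1 - Complex.exp (ξ * Complex.I) * Complex.exp (-(ξ * Complex.I))) := by
      ring
    have hs := congrArg (Complex.ofReal) hlamsin
    push_cast at hs
    rw [e1, hexp, hcosC, hcos]
    push_cast
    linear_combination (-4:ℂ) * hs
  have hΔpos : (0:ℝ) < Δ := by rw [hΔ, hε]; nlinarith
  have hΔ0 : (Δ : ℂ) ≠ 0 := by
    simpa using Complex.ofReal_ne_zero.mpr (ne_of_gt hΔpos)
  -- eigenvector and generalized eigenvector for eigenvalue -1
  set v : Fin 4 → ℂ := ![(lam:ℂ) * (Complex.exp (ξ * Complex.I) - 1), 2, 0, 0] with hv_def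
  set w : Fin 4 → ℂ := ![(lam:ℂ) * (Complex.exp (ξ * Complex.I) - 1)/2, 0, 0,
    -((ω:ℂ) * (α:ℂ))] with hw_def
  have hv : A.mulVec v = -v := by
    funext i
    fin_cases i
    · simp [hA, hv_def, Matrix.mulVec, dotProduct, Fin.sum_univ_four]; ring
    · simp [hA, hv_def, Matrix.mulVec, dotProduct, Fin.sum_univ_four]
      push_cast
      field_simp
      linear_combination ((ω:ℂ)*(α:ℂ) - 2*(Δ:ℂ)) * hab
    · simp [hA, hv_def, Matrix.mulVec, dotProduct, Fin.sum_univ_four]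
      push_cast
      field_simp
      linear_combination (-(ω:ℂ)*(α:ℂ)) * hab
    · simp [hA, hv_def, Matrix.mulVec, dotProduct, Fin.sum_univ_four]
      push_cast
      field_simp
      linear_combination (-(ω:ℂ)*(α:ℂ)) * hab
  have hw : A.mulVec w = -w + v := by
    funext i
    fin_cases i
    · simp [hA, hv_def, hw_def, Matrix.mulVec, dotProduct, Fin.sum_univ_four]; ring
    · simp [hA, hv_def, hw_def, Matrix.mulVec, dotProduct, Fin.sum_univ_four]
      push_cast
      field_simp
      linear_combination ((ω:ℂ)*(α:ℂ) - 2*(Δ:ℂ)) * hab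
    · simp [hA, hv_def, hw_def, Matrix.mulVec, dotProduct, Fin.sum_univ_four]
      push_cast
      field_simp
      linear_combination (-(ω:ℂ)*(α:ℂ)) * hab
    · simp [hA, hv_def, hw_def, Matrix.mulVec, dotProduct, Fin.sum_univ_four]
      push_cast
      field_simp
      linear_combination (-(ω:ℂ)*(α:ℂ)) * hab
  -- powers of A applied to w
  have hpow : ∀ n : ℕ, (A ^ n).mulVec w = (-1:ℂ)^n • (w - (n:ℂ) • v) := by
    intro n
    induction n with
    | zero => simp
    | succ n ih =>
      rw [pow_succ', ← Matrix.mulVec_mulVec, ih, Matrix.mulVec_smul, Matrix.mulVec_sub,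
        Matrix.mulVec_smul, hv, hw]
      funext i
      simp only [Pi.smul_apply, Pi.add_apply, Pi.sub_apply, Pi.neg_apply, smul_eq_mul]
      push_cast
      ring
  -- the second component grows like 2n
  have hcomp : ∀ n : ℕ, ‖((A ^ n).mulVec w) 1‖ = 2 * n := by
    intro n
    rw [hpow]
    have : ((-1:ℂ)^n • (w - (n:ℂ) • v)) 1 = (-1:ℂ)^n * (-(2 * (n:ℂ))) := by
      simp [hw_def, hv_def]
      ring
    rw [this, norm_mul, norm_pow, norm_neg, norm_one, one_pow, one_mul, norm_neg]
    rw [show (2 * (n:ℂ)) = ((2 * n : ℕ) : ℂ) by push_cast; ring, Complex.norm_natCast]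
    push_cast
    ring
  -- bound the component by the Frobenius norm
  set S : ℝ := ∑ j, ‖w j‖ with hS
  have hS0 : 0 ≤ S := Finset.sum_nonneg fun j _ => norm_nonneg _
  have hbound : ∀ n : ℕ, ‖((A ^ n).mulVec w) 1‖ ≤ C * S := by
    intro n
    have e : ((A ^ n).mulVec w) 1 = ∑ j, (A ^ n) 1 j * w j := by
      simp [Matrix.mulVec, dotProduct]
    rw [e]
    calc ‖∑ j, (A ^ n) 1 j * w j‖ ≤ ∑ j, ‖(A ^ n) 1 j * w j‖ := norm_sum_le _ _
      _ ≤ ∑ j, ‖A ^ n‖ * ‖w j‖ := by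
          refine Finset.sum_le_sum fun j _ => ?_
          rw [norm_mul]
          exact mul_le_mul_of_nonneg_right (entry_le_frob_s17 _ _ _) (norm_nonneg _)
      _ = ‖A ^ n‖ * S := by rw [← Finset.mul_sum]
      _ ≤ C * S := mul_le_mul_of_nonneg_right (hC n) hS0
  -- contradiction
  obtain ⟨n, hn⟩ := exists_nat_gt (C * S / 2)
  have h1 := hbound n
  rw [hcomp n] at h1
  linarith
end

section
/- Let δ > 0, ω > 0, ε′ > 1 and q > 0 be real numbers such that either (0 < q < 2 and ω(2ε′ − 1) ≤ 2) or (q = 2 and ω(2ε′ − 1) < 2). Then the Lorentz–Young characteristic polynomial φ₀(Z) = (1 + δ)Z⁴ − (4 + 2δ − 2ωε′ − (1 + δ)q)Z³ + 2(3 − 2ωε′ + (ω − 1)q)Z² − (4 − 2δ − 2ωε′ − (1 − δ)q)Z + (1 − δ) is a Schur polynomial. -/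
set_option maxHeartbeats 1000000

open Polynomial

/-- Real part of `s/(s²−t)` is nonnegative when `t < 0` and `Re s ≥ 0`. -/
lemma aux_re_nonneg (s : ℂ) (t : ℝ) (ht : t < 0) (hs : 0 ≤ s.re) :
    0 ≤ (s / (s ^ 2 - (t : ℂ))).re := by
  rw [Complex.div_re, ← add_div]
  apply div_nonneg _ (Complex.normSq_nonneg _)
  have h1 : (s ^ 2 - (t : ℂ)).re = s.re ^ 2 - s.im ^ 2 - t := by
    simp [pow_two, Complex.mul_re]
  have h2 : (s ^ 2 - (t : ℂ)).im = 2 * s.re * s.im := by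
    simp [pow_two, Complex.mul_im]; ring
  rw [h1, h2]
  nlinarith [sq_nonneg s.im, sq_nonneg s.re]

lemma no_rhp_root (A2 A1 A0 c3 c1 t0 : ℝ) (hA2 : 0 < A2) (hA1 : 0 < A1) (hA0 : 0 < A0)
    (hc3 : 0 < c3) (hc1 : c3 * t0 = -c1) (hAt0 : A2 * t0 ^ 2 + A1 * t0 + A0 < 0)
    (s : ℂ) (hs : 0 ≤ s.re)
    (heq : (A2 : ℂ) * s ^ 4 + (c3 : ℂ) * s ^ 3 + (A1 : ℂ) * s ^ 2
      + (c1 : ℂ) * s + (A0 : ℂ) = 0) : False := by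
  have hc1c : (c3 : ℂ) * (t0 : ℂ) = -(c1 : ℂ) := by
    exact_mod_cast congrArg (fun x : ℝ => (x : ℂ)) hc1
  have hneg : 0 < -(A2 * t0 ^ 2 + A1 * t0 + A0) := by linarith
  have hD : 0 < A1 ^ 2 - 4 * A2 * A0 := by
    nlinarith [sq_nonneg (2 * A2 * t0 + A1), mul_pos hA2 hneg]
  set r := Real.sqrt (A1 ^ 2 - 4 * A2 * A0) with hrdef
  have hr2 : r ^ 2 = A1 ^ 2 - 4 * A2 * A0 := Real.sq_sqrt hD.le
  have hrpos : 0 < r := Real.sqrt_pos.mpr hD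
  have h2A2 : (2 * A2) ≠ 0 := by positivity
  set t1 := (-A1 - r) / (2 * A2) with ht1def
  set t2 := (-A1 + r) / (2 * A2) with ht2def
  have h1 : A2 * (t1 + t2) = -A1 := by
    rw [ht1def, ht2def]; field_simp; ring
  have h2 : A2 * (t1 * t2) = A0 := by
    have hd : (-A1 - r) * (-A1 + r) = 4 * A2 * A0 := by linear_combination (-1 : ℝ) * hr2
    rw [ht1def, ht2def, div_mul_div_comm, hd]
    field_simp
    ring
  have h12 : t1 < t2 := by
    rw [ht1def, ht2def, div_lt_div_iff₀ (by linarith) (by linarith)]; nlinarith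
  have ht2neg : t2 < 0 := by
    rw [ht2def]
    apply div_neg_of_neg_of_pos _ (by linarith)
    nlinarith [mul_pos hA2 hA0]
  have ht1neg : t1 < 0 := lt_trans h12 ht2neg
  have hfac : A2 * ((t0 - t1) * (t0 - t2)) = A2 * t0 ^ 2 + A1 * t0 + A0 := by
    linear_combination (-t0) * h1 + h2
  have hprod : (t0 - t1) * (t0 - t2) < 0 := by nlinarith
  have ht01 : t1 < t0 := by nlinarith
  have ht02 : t0 < t2 := by nlinarith
  have hne21 : t2 - t1 ≠ 0 := ne_of_gt (by linarith)
  set μ1 := (t2 - t0) / (t2 - t1) with hμ1def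
  set μ2 := (t0 - t1) / (t2 - t1) with hμ2def
  have hμ1 : 0 < μ1 := div_pos (by linarith) (by linarith)
  have hμ2 : 0 < μ2 := div_pos (by linarith) (by linarith)
  have hm3 : μ1 + μ2 = 1 := by
    rw [hμ1def, hμ2def, ← add_div, div_eq_one_iff_eq hne21]; ring
  have hm4 : μ1 * t1 + μ2 * t2 = t0 := by
    rw [hμ1def, hμ2def, div_mul_eq_mul_div, div_mul_eq_mul_div, ← add_div,
      div_eq_iff hne21]; ring
  -- cast to ℂ
  have h1c : (A2 : ℂ) * ((t1 : ℂ) + (t2 : ℂ)) = -(A1 : ℂ) := by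
    exact_mod_cast congrArg (fun x : ℝ => (x : ℂ)) h1
  have h2c : (A2 : ℂ) * ((t1 : ℂ) * (t2 : ℂ)) = (A0 : ℂ) := by
    exact_mod_cast congrArg (fun x : ℝ => (x : ℂ)) h2
  have hm3c : (μ1 : ℂ) + (μ2 : ℂ) = 1 := by
    exact_mod_cast congrArg (fun x : ℝ => (x : ℂ)) hm3
  have hm4c : (μ1 : ℂ) * (t1 : ℂ) + (μ2 : ℂ) * (t2 : ℂ) = (t0 : ℂ) := by
    exact_mod_cast congrArg (fun x : ℝ => (x : ℂ)) hm4
  have hE : (A2 : ℂ) * ((s ^ 2 - (t1 : ℂ)) * (s ^ 2 - (t2 : ℂ)))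
      + (c3 : ℂ) * s * ((μ1 : ℂ) * (s ^ 2 - (t1 : ℂ)) + (μ2 : ℂ) * (s ^ 2 - (t2 : ℂ))) = 0 := by
    linear_combination heq - s ^ 2 * h1c + h2c + ((c3 : ℂ) * s ^ 3) * hm3c
      - ((c3 : ℂ) * s) * hm4c - s * hc1c
  have ht12c : ((t1 : ℂ)) ≠ (t2 : ℂ) := by exact_mod_cast ne_of_lt h12
  have hc3c : (c3 : ℂ) ≠ 0 := by exact_mod_cast ne_of_gt hc3
  have hμ1c : (μ1 : ℂ) ≠ 0 := by exact_mod_cast ne_of_gt hμ1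
  have hμ2c : (μ2 : ℂ) ≠ 0 := by exact_mod_cast ne_of_gt hμ2
  have hne1 : s ^ 2 - (t1 : ℂ) ≠ 0 := by
    intro h
    have hs2 : s ^ 2 = (t1 : ℂ) := by linear_combination h
    rw [hs2] at hE
    have h5 : ((c3 : ℂ) * (μ2 : ℂ) * ((t1 : ℂ) - (t2 : ℂ))) * s = 0 := by
      linear_combination hE
    have h6 : ((c3 : ℂ) * (μ2 : ℂ) * ((t1 : ℂ) - (t2 : ℂ))) ≠ 0 :=
      mul_ne_zero (mul_ne_zero hc3c hμ2c) (sub_ne_zero.mpr ht12c)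
    have hs0 : s = 0 := by
      rcases mul_eq_zero.mp h5 with h' | h'
      · exact absurd h' h6
      · exact h'
    rw [hs0] at hs2
    have ht10 : t1 = 0 := by
      have : (t1 : ℂ) = 0 := by linear_combination -hs2
      exact_mod_cast this
    linarith
  have hne2 : s ^ 2 - (t2 : ℂ) ≠ 0 := by
    intro h
    have hs2 : s ^ 2 = (t2 : ℂ) := by linear_combination h
    rw [hs2] at hE
    have h5 : ((c3 : ℂ) * (μ1 : ℂ) * ((t2 : ℂ) - (t1 : ℂ))) * s = 0 := by
      linear_combination hE
    have h6 : ((c3 : ℂ) * (μ1 : ℂ) * ((t2 : ℂ) - (t1 : ℂ))) ≠ 0 :=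
      mul_ne_zero (mul_ne_zero hc3c hμ1c) (sub_ne_zero.mpr (Ne.symm ht12c))
    have hs0 : s = 0 := by
      rcases mul_eq_zero.mp h5 with h' | h'
      · exact absurd h' h6
      · exact h'
    rw [hs0] at hs2
    have ht20 : t2 = 0 := by
      have : (t2 : ℂ) = 0 := by linear_combination -hs2
      exact_mod_cast this
    linarith
  have hfin : (A2 : ℂ) + (c3 : ℂ) * ((μ1 : ℂ) * (s / (s ^ 2 - (t2 : ℂ)))
      + (μ2 : ℂ) * (s / (s ^ 2 - (t1 : ℂ)))) = 0 := by
    field_simp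
    linear_combination hE
  have hre := congrArg Complex.re hfin
  have hw1 := aux_re_nonneg s t2 ht2neg hs
  have hw2 := aux_re_nonneg s t1 ht1neg hs
  simp only [Complex.add_re, Complex.mul_re, Complex.ofReal_re, Complex.ofReal_im,
    Complex.zero_re, Complex.add_im, Complex.mul_im, zero_mul, mul_zero, sub_zero,
    zero_add, add_zero] at hre
  nlinarith [mul_nonneg hμ1.le hw1, mul_nonneg hμ2.le hw2,
    mul_nonneg hc3.le (add_nonneg (mul_nonneg hμ1.le hw1) (mul_nonneg hμ2.le hw2))]


/-- Lorentz–Young (an-harmonic case): for `δ > 0`, `ω > 0`, `ε′ > 1` and `q > 0`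
with either (`0 < q < 2` and `ω(2ε′ − 1) ≤ 2`) or (`q = 2` and `ω(2ε′ − 1) < 2`),
the characteristic polynomial is a Schur polynomial. -/
theorem lorentz_young_schur (δ ω ε' q : ℝ) (hδ : 0 < δ) (hω : 0 < ω)
    (hε : 1 < ε') (hq0 : 0 < q)
    (hcond : (q < 2 ∧ ω * (2 * ε' - 1) ≤ 2) ∨ (q = 2 ∧ ω * (2 * ε' - 1) < 2)) :
    IsSchur (Polynomial.C ((1 + δ : ℝ) : ℂ) * Polynomial.X ^ 4
      - Polynomial.C ((4 + 2 * δ - 2 * ω * ε' - (1 + δ) * q : ℝ) : ℂ) *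
          Polynomial.X ^ 3
      + Polynomial.C ((2 * (3 - 2 * ω * ε' + (ω - 1) * q) : ℝ) : ℂ) *
          Polynomial.X ^ 2
      - Polynomial.C ((4 - 2 * δ - 2 * ω * ε' - (1 - δ) * q : ℝ) : ℂ) *
          Polynomial.X
      + Polynomial.C ((1 - δ : ℝ) : ℂ)) := by
  intro z hz
  by_contra habs
  push_neg at habs
  simp only [Polynomial.IsRoot.def, Polynomial.eval_add, Polynomial.eval_sub,
    Polynomial.eval_mul, Polynomial.eval_pow, Polynomial.eval_C, Polynomial.eval_X] at hz
  have hq2 : q ≤ 2 := by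
    rcases hcond with ⟨h, _⟩ | ⟨h, _⟩
    · exact h.le
    · exact h.le
  have h4q : 0 < 4 - q := by linarith
  have hA2 : 0 < 16 - 8 * ω * ε' - 4 * q + 2 * ω * q := by
    rcases hcond with ⟨h1, h2⟩ | ⟨h1, h2⟩
    · nlinarith [mul_pos (sub_pos.mpr hε) (sub_pos.mpr h1),
        mul_nonneg (by linarith : (0:ℝ) ≤ 2 - ω * (2 * ε' - 1)) (by linarith : (0:ℝ) ≤ 4 * ε' - q)]
    · subst h1; nlinarith
  have hA1 : 0 < 8 * ω * ε' + 4 * q - 4 * ω * q := by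
    nlinarith [mul_pos hω (sub_pos.mpr hε), mul_nonneg hω.le (by linarith : (0:ℝ) ≤ 2 - q)]
  have hA0 : (0:ℝ) < 2 * ω * q := by positivity
  have hc3 : (0:ℝ) < 4 * δ * (4 - q) := by
    apply mul_pos (by linarith) h4q
  set t0 : ℝ := -q / (4 - q) with ht0def
  have hAt0 : (16 - 8 * ω * ε' - 4 * q + 2 * ω * q) * t0 ^ 2
      + (8 * ω * ε' + 4 * q - 4 * ω * q) * t0 + 2 * ω * q < 0 := by
    have hkey : ((16 - 8 * ω * ε' - 4 * q + 2 * ω * q) * t0 ^ 2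
        + (8 * ω * ε' + 4 * q - 4 * ω * q) * t0 + 2 * ω * q) * (4 - q) ^ 2
        = -(32 * ω * q * (ε' - 1)) := by
      rw [ht0def]; field_simp; ring
    have hpos : 0 < 32 * ω * q * (ε' - 1) :=
      mul_pos (mul_pos (mul_pos (by norm_num) hω) hq0) (by linarith)
    nlinarith [pow_pos h4q 2]
  have hzm1 : z ≠ -1 := by
    intro h
    rw [h] at hz
    have h0 : ((16 - 8 * ω * ε' - 4 * q + 2 * ω * q : ℝ) : ℂ) = 0 := by
      push_cast at hz ⊢; linear_combination hz
    have : (16 - 8 * ω * ε' - 4 * q + 2 * ω * q : ℝ) = 0 := by exact_mod_cast h0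
    linarith
  have hz1 : z + 1 ≠ 0 := by
    intro h; exact hzm1 (by linear_combination h)
  set s : ℂ := (z - 1) / (z + 1) with hsdef
  have hzsq : 1 ≤ Complex.normSq z := by
    rw [← Complex.sq_norm]; nlinarith [norm_nonneg z]
  have hsre : 0 ≤ s.re := by
    rw [hsdef, Complex.div_re, ← add_div]
    apply div_nonneg _ (Complex.normSq_nonneg _)
    have hnsq : Complex.normSq z = z.re * z.re + z.im * z.im := Complex.normSq_apply z
    simp only [Complex.sub_re, Complex.add_re, Complex.sub_im, Complex.add_im,
      Complex.one_re, Complex.one_im]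
    nlinarith [hzsq]
  have hct : (4 * δ * (4 - q)) * t0 = -(4 * δ * q) := by
    rw [ht0def]; field_simp
  have hexp : (z + 1) ^ 4 * (((16 - 8 * ω * ε' - 4 * q + 2 * ω * q : ℝ) : ℂ) * s ^ 4
      + ((4 * δ * (4 - q) : ℝ) : ℂ) * s ^ 3
      + ((8 * ω * ε' + 4 * q - 4 * ω * q : ℝ) : ℂ) * s ^ 2
      + ((4 * δ * q : ℝ) : ℂ) * s + ((2 * ω * q : ℝ) : ℂ))
      = ((16 - 8 * ω * ε' - 4 * q + 2 * ω * q : ℝ) : ℂ) * (z - 1) ^ 4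
      + ((4 * δ * (4 - q) : ℝ) : ℂ) * ((z - 1) ^ 3 * (z + 1))
      + ((8 * ω * ε' + 4 * q - 4 * ω * q : ℝ) : ℂ) * ((z - 1) ^ 2 * (z + 1) ^ 2)
      + ((4 * δ * q : ℝ) : ℂ) * ((z - 1) * (z + 1) ^ 3)
      + ((2 * ω * q : ℝ) : ℂ) * (z + 1) ^ 4 := by
    have p1 : s * (z + 1) = z - 1 := by
      rw [hsdef]; exact div_mul_cancel₀ _ hz1
    have p2 : s ^ 2 * (z + 1) ^ 2 = (z - 1) ^ 2 := by
      linear_combination (s * (z + 1) + (z - 1)) * p1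
    have p3 : s ^ 3 * (z + 1) ^ 3 = (z - 1) ^ 3 := by
      linear_combination (s ^ 2 * (z + 1) ^ 2 + s * (z + 1) * (z - 1) + (z - 1) ^ 2) * p1
    have p4 : s ^ 4 * (z + 1) ^ 4 = (z - 1) ^ 4 := by
      linear_combination (s ^ 2 * (z + 1) ^ 2 + (z - 1) ^ 2) * p2
    linear_combination ((16 - 8 * ω * ε' - 4 * q + 2 * ω * q : ℝ) : ℂ) * p4
      + ((4 * δ * (4 - q) : ℝ) : ℂ) * (z + 1) * p3
      + ((8 * ω * ε' + 4 * q - 4 * ω * q : ℝ) : ℂ) * (z + 1) ^ 2 * p2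
      + ((4 * δ * q : ℝ) : ℂ) * (z + 1) ^ 3 * p1
  have hpoly : ((16 - 8 * ω * ε' - 4 * q + 2 * ω * q : ℝ) : ℂ) * (z - 1) ^ 4
      + ((4 * δ * (4 - q) : ℝ) : ℂ) * ((z - 1) ^ 3 * (z + 1))
      + ((8 * ω * ε' + 4 * q - 4 * ω * q : ℝ) : ℂ) * ((z - 1) ^ 2 * (z + 1) ^ 2)
      + ((4 * δ * q : ℝ) : ℂ) * ((z - 1) * (z + 1) ^ 3)
      + ((2 * ω * q : ℝ) : ℂ) * (z + 1) ^ 4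
      = 16 * (((1 + δ : ℝ) : ℂ) * z ^ 4
        - ((4 + 2 * δ - 2 * ω * ε' - (1 + δ) * q : ℝ) : ℂ) * z ^ 3
        + ((2 * (3 - 2 * ω * ε' + (ω - 1) * q) : ℝ) : ℂ) * z ^ 2
        - ((4 - 2 * δ - 2 * ω * ε' - (1 - δ) * q : ℝ) : ℂ) * z
        + ((1 - δ : ℝ) : ℂ)) := by
    push_cast; ring
  have heq : ((16 - 8 * ω * ε' - 4 * q + 2 * ω * q : ℝ) : ℂ) * s ^ 4
      + ((4 * δ * (4 - q) : ℝ) : ℂ) * s ^ 3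
      + ((8 * ω * ε' + 4 * q - 4 * ω * q : ℝ) : ℂ) * s ^ 2
      + ((4 * δ * q : ℝ) : ℂ) * s + ((2 * ω * q : ℝ) : ℂ) = 0 := by
    have h4 : (z + 1) ^ 4 ≠ 0 := pow_ne_zero _ hz1
    apply mul_left_cancel₀ h4
    rw [mul_zero, hexp, hpoly, hz, mul_zero]
  exact no_rhp_root _ _ _ _ _ _ hA2 hA1 hA0 hc3 hct hAt0 s hsre heq
end

section
/- Let ω > 0, λ > 0 and ξ ∈ ℝ satisfy q := 4λ²sin²(ξ/2) = 2ω and 0 < q ≤ 2, and let G be the 4 × 4 complex matrix with rows (1, −λ(e^{iξ} − 1), 0, 0), (−λ(1 − e^{−iξ}), 1 − q, 2ω, −1), (0, 0, 1 − 2ω, 1), (0, 0, −2ω, 1). Then the powers of G are not uniformly bounded: there is no constant C with ‖Gⁿ‖ ≤ C for all n. -/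
attribute [local instance] Matrix.frobeniusNormedAddCommGroup

private lemma entry_le_frobenius (M : Matrix (Fin 4) (Fin 4) ℂ) (i j : Fin 4) :
    ‖M i j‖ ≤ ‖M‖ := by
  rw [Matrix.frobenius_norm_def]
  have h1 : ‖M i j‖ ^ (2:ℝ) ≤ ∑ i', ∑ j', ‖M i' j'‖ ^ (2:ℝ) := by
    calc ‖M i j‖ ^ (2:ℝ) ≤ ∑ j', ‖M i j'‖ ^ (2:ℝ) :=
          Finset.single_le_sum (fun _ _ => Real.rpow_nonneg (norm_nonneg _) _)
            (Finset.mem_univ j)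
      _ ≤ ∑ i', ∑ j', ‖M i' j'‖ ^ (2:ℝ) :=
          Finset.single_le_sum (fun _ _ => Finset.sum_nonneg fun _ _ =>
            Real.rpow_nonneg (norm_nonneg _) _) (Finset.mem_univ i)
  calc ‖M i j‖ = (‖M i j‖ ^ (2:ℝ)) ^ (1/2:ℝ) := by
        rw [← Real.rpow_mul (norm_nonneg _)]; norm_num
    _ ≤ (∑ i', ∑ j', ‖M i' j'‖ ^ (2:ℝ)) ^ (1/2:ℝ) :=
        Real.rpow_le_rpow (Real.rpow_nonneg (norm_nonneg _) _) h1 (by norm_num)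

/-- Instability of the Lorentz–Young amplification matrix in the harmonic case
`ν = 0` with `ε_s = ε_∞` (`α = 0`), at the resonant value
`q = 4λ²sin²(ξ/2) = 2ω` (with `0 < q ≤ 2`): the powers of `G` are not uniformly
bounded. -/
theorem lorentz_young_unstable (ω lam ξ q : ℝ) (hω : 0 < ω) (hlam : 0 < lam)
    (hq : q = 4 * lam ^ 2 * Real.sin (ξ / 2) ^ 2) (hqres : q = 2 * ω)
    (hq0 : 0 < q) (hq2 : q ≤ 2) :
    ¬ ∃ C : ℝ, ∀ n : ℕ,
      ‖(!![1, -(lam : ℂ) * (Complex.exp (ξ * Complex.I) - 1), 0, 0;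
          -(lam : ℂ) * (1 - Complex.exp (-ξ * Complex.I)), 1 - (q : ℂ),
            2 * (ω : ℂ), -1;
          0, 0, 1 - 2 * (ω : ℂ), 1;
          0, 0, -2 * (ω : ℂ), 1] : Matrix (Fin 4) (Fin 4) ℂ) ^ n‖ ≤ C := by
  rintro ⟨C, hC⟩
  set a : ℂ := -(lam : ℂ) * (Complex.exp (ξ * Complex.I) - 1) with ha
  set b : ℂ := -(lam : ℂ) * (1 - Complex.exp (-ξ * Complex.I)) with hb
  set G : Matrix (Fin 4) (Fin 4) ℂ :=
    !![1, a, 0, 0; b, 1 - (q : ℂ), 2 * (ω : ℂ), -1;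
       0, 0, 1 - 2 * (ω : ℂ), 1; 0, 0, -2 * (ω : ℂ), 1] with hG
  -- basic real facts
  have hω1 : ω ≤ 1 := by linarith
  have hrnn : (0:ℝ) ≤ ω * (2 - ω) := by nlinarith
  set r : ℝ := Real.sqrt (ω * (2 - ω)) with hr
  have hr2 : r ^ 2 = ω * (2 - ω) := Real.sq_sqrt hrnn
  have hrpos : 0 < r := Real.sqrt_pos.mpr (by nlinarith)
  set μ : ℂ := ((1 - ω : ℝ) : ℂ) + (r : ℂ) * Complex.I with hμ
  have hμ2 : μ ^ 2 = (2 - 2 * (ω:ℂ)) * μ - 1 := by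
    have hr2c : ((r:ℂ)) ^ 2 = ((ω:ℂ)) * (2 - (ω:ℂ)) := by exact_mod_cast congrArg (Complex.ofReal) hr2
    rw [hμ]; push_cast
    linear_combination Complex.I^2 * hr2c + (2*(ω:ℂ) - (ω:ℂ)^2) * Complex.I_sq
  have h1μim : ((1:ℂ) - μ).im = -r := by simp [hμ]
  have h1μne : (1:ℂ) - μ ≠ 0 := by
    intro h; rw [h] at h1μim; simp at h1μim; linarith
  have habsμ : ‖μ‖ = 1 := by
    have : Complex.normSq μ = 1 := by
      simp [hμ, Complex.normSq_apply]
      nlinarith [hr2]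
    rw [Complex.norm_def, this, Real.sqrt_one]
  -- a * b = -q
  have hcosq : q = 2 * lam ^ 2 * (1 - Real.cos ξ) := by
    have h1 : Real.cos (2 * (ξ/2)) = 2 * Real.cos (ξ/2) ^ 2 - 1 := Real.cos_two_mul _
    have h2 : Real.sin (ξ/2) ^ 2 + Real.cos (ξ/2) ^ 2 = 1 := Real.sin_sq_add_cos_sq _
    have h3 : 2 * (ξ/2) = ξ := by ring
    rw [h3] at h1
    rw [hq]; nlinarith [h1, h2]
  have hab : a * b = -(q:ℂ) := by
    have he : Complex.exp (ξ * Complex.I) = (Real.cos ξ : ℂ) + (Real.sin ξ : ℂ) * Complex.I := by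
      rw [Complex.exp_mul_I]; norm_cast
    have he2 : Complex.exp (-ξ * Complex.I) = (Real.cos ξ : ℂ) - (Real.sin ξ : ℂ) * Complex.I := by
      have h4 : (-ξ : ℂ) * Complex.I = ((-ξ : ℝ) : ℂ) * Complex.I := by push_cast; ring
      rw [h4, Complex.exp_mul_I]; simp [Complex.cos_neg, Complex.sin_neg]; ring
    have hqc : (q : ℂ) = 2 * (lam:ℂ)^2 * (1 - (Real.cos ξ : ℂ)) := by
      exact_mod_cast congrArg (Complex.ofReal) hcosq
    have hee : Complex.exp (ξ * Complex.I) * Complex.exp (-ξ * Complex.I) = 1 := by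
      rw [← Complex.exp_add]; norm_num
    have hsum : Complex.exp (ξ * Complex.I) + Complex.exp (-ξ * Complex.I)
        = 2 * (Real.cos ξ : ℂ) := by rw [he, he2]; ring
    rw [ha, hb]
    linear_combination (-(lam:ℂ)^2) * hee + (lam:ℂ)^2 * hsum + hqc
  have hqω : (q : ℂ) = 2 * (ω : ℂ) := by exact_mod_cast congrArg (Complex.ofReal) hqres
  -- eigenvector and generalized eigenvector (scaled to avoid division)
  set v : Fin 4 → ℂ := ![-a * ((1:ℂ)-μ)^2, ((1:ℂ)-μ)^3, 0, 0] with hv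
  set w : Fin 4 → ℂ := ![-a * ((1:ℂ)-μ), 0, ((1:ℂ)-μ)^2 - (q:ℂ),
      (μ - 1 + 2*(ω:ℂ)) * (((1:ℂ)-μ)^2 - (q:ℂ))] with hw
  have h1 : G.mulVec v = μ • v := by
    funext i
    fin_cases i <;>
      simp [hG, hv, Matrix.mulVec, dotProduct, Fin.sum_univ_four]
    · ring
    · linear_combination (-((1:ℂ)-μ)^2) * hab + ((1:ℂ)-μ)^2 * hμ2 + μ*((1:ℂ)-μ)^2 * hqω
  have h2 : G.mulVec w = μ • w + v := by
    funext i
    fin_cases i <;>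
      simp [hG, hv, hw, Matrix.mulVec, dotProduct, Fin.sum_univ_four]
    · ring
    · linear_combination (μ - 1) * hab
    · ring
    · linear_combination (-(((1:ℂ)-μ)^2 - (q:ℂ))) * hμ2
  -- powers
  have hn : ∀ n : ℕ, (G ^ (n+1)).mulVec w = μ^(n+1) • w + (((n:ℂ)+1) * μ^n) • v := by
    intro n
    induction n with
    | zero => simpa using h2
    | succ m ih =>
      have hp : G ^ (m+2) = G * G ^ (m+1) := by rw [← pow_succ']
      rw [hp, ← Matrix.mulVec_mulVec, ih]
      rw [Matrix.mulVec_add, Matrix.mulVec_smul, Matrix.mulVec_smul, h1, h2]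
      push_cast
      match_scalars <;> ring
  -- growth of entry 1
  have hgrow : ∀ n : ℕ, ((G ^ (n+1)).mulVec w) 1 = (((n:ℂ)+1) * μ^n) * ((1:ℂ) - μ)^3 := by
    intro n
    rw [hn n]
    simp [hv, hw]
  -- bound via Frobenius norm
  set S : ℝ := ∑ j, ‖w j‖ with hS
  have hSnn : 0 ≤ S := Finset.sum_nonneg fun _ _ => norm_nonneg _
  have hbound : ∀ n : ℕ, ((n:ℝ)+1) * ‖(1:ℂ) - μ‖ ^ 3 ≤ C * S := by
    intro n
    have h5 : ‖((G ^ (n+1)).mulVec w) 1‖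
        = ((n:ℝ)+1) * ‖(1:ℂ) - μ‖ ^ 3 := by
      rw [hgrow n, norm_mul, norm_mul, norm_pow, norm_pow, habsμ, one_pow]
      have h9 : ‖(n:ℂ)+1‖ = (n:ℝ)+1 := by
        rw [show ((n:ℂ)+1) = ((n+1 : ℕ) : ℂ) by push_cast; ring, Complex.norm_natCast]
        push_cast; ring
      rw [h9]; ring
    have h6 : ‖((G ^ (n+1)).mulVec w) 1‖ ≤ ‖G ^ (n+1)‖ * S := by
      rw [Matrix.mulVec, dotProduct]
      calc ‖∑ j, (G ^ (n+1)) 1 j * w j‖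
          ≤ ∑ j, ‖(G ^ (n+1)) 1 j * w j‖ := by
            exact norm_sum_le _ _
        _ ≤ ∑ j, ‖G ^ (n+1)‖ * ‖w j‖ := by
            apply Finset.sum_le_sum
            intro j _
            rw [norm_mul]
            exact mul_le_mul_of_nonneg_right (entry_le_frobenius _ 1 j) (norm_nonneg _)
        _ = ‖G ^ (n+1)‖ * S := by rw [hS, Finset.mul_sum]
    have h7 : ‖G ^ (n+1)‖ * S ≤ C * S := mul_le_mul_of_nonneg_right (hC (n+1)) hSnn
    calc ((n:ℝ)+1) * ‖(1:ℂ) - μ‖ ^ 3 = ‖((G ^ (n+1)).mulVec w) 1‖ := h5.symm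
      _ ≤ ‖G ^ (n+1)‖ * S := h6
      _ ≤ C * S := h7
  -- contradiction
  have hd : 0 < ‖(1:ℂ) - μ‖ ^ 3 := by
    have h10 := Complex.abs_im_le_norm ((1:ℂ) - μ)
    rw [h1μim, abs_neg, abs_of_pos hrpos] at h10
    exact pow_pos (lt_of_lt_of_le hrpos h10) 3
  obtain ⟨n, hngt⟩ := exists_nat_gt (C * S / (‖(1:ℂ) - μ‖ ^ 3))
  have h11 := hbound n
  have h8 : C * S < ((n:ℝ)+1) * ‖(1:ℂ) - μ‖ ^ 3 := by
    rw [div_lt_iff₀ hd] at hngt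
    nlinarith
  linarith
end
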